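/- arXiv:1506.02632 — 5 statements merged into one kernel-verified Lean document; each statement's English description precedes it below -/
import Mathlib

section
/- Let Y be a nonnegative real-valued random variable and let w : [0,1] → [0,1] be Hölder continuous of order α ∈ (0,1] with constant H, nondecreasing, with w(0) = 0 and w(1) = 1. Suppose there exists γ with 0 < γ ≤ α such that ∫₀^∞ P(Y > z)^γ dz < ∞. For p ∈ (0,1), let ξ_p denote the p-th quantile of Y (i.e., ξ_p = inf{t : P(Y ≤ t) ≥ p}). Then the quantile sums converge: lim_{n→∞} Σ_{i=1}^{n−1} ξ_{i/n} · ( w((n−i)/n) − w((n−i−1)/n) ) = ∫₀^∞ w(P(Y > z)) dz, and this limit is finite. -/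
open MeasureTheory Filter

/-- For a nonnegative random variable `Y` and a nondecreasing Hölder
continuous weight function `w : [0,1] → [0,1]` of order `α` with constant `H`,
`w 0 = 0`, `w 1 = 1`, if `∫₀^∞ P(Y > z)^γ dz < ∞` for some `0 < γ ≤ α`, then the
quantile sums `Σ_{i=1}^{n-1} ξ_{i/n} (w((n-i)/n) - w((n-i-1)/n))` converge to
`∫₀^∞ w(P(Y > z)) dz`, and this limit is finite (the integrand is integrable). -/
theorem cpt_quantile_sums_tendsto_tail_integral
    {Ω : Type*} [MeasurableSpace Ω] (μ : Measure Ω) [IsProbabilityMeasure μ]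
    (Y : Ω → ℝ) (hYmeas : Measurable Y) (hYnonneg : ∀ ω, 0 ≤ Y ω)
    (w : ℝ → ℝ) (α H γ : ℝ) (hα0 : 0 < α) (hα1 : α ≤ 1) (hH : 0 < H)
    (hw_range : ∀ x ∈ Set.Icc (0:ℝ) 1, w x ∈ Set.Icc (0:ℝ) 1)
    (hw_mono : MonotoneOn w (Set.Icc (0:ℝ) 1))
    (hw_holder : ∀ x ∈ Set.Icc (0:ℝ) 1, ∀ y ∈ Set.Icc (0:ℝ) 1,
      |w x - w y| ≤ H * |x - y| ^ α)
    (hw0 : w 0 = 0) (hw1 : w 1 = 1)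
    (hγ0 : 0 < γ) (hγα : γ ≤ α)
    (hint : ∫⁻ z in Set.Ioi (0:ℝ),
        ENNReal.ofReal ((μ {ω | Y ω > z}).toReal ^ γ) < ⊤)
    -- `ξ p` is the `p`-th quantile of `Y`
    (ξ : ℝ → ℝ)
    (hξ : ∀ p ∈ Set.Ioo (0:ℝ) 1, ξ p = sInf {t : ℝ | p ≤ (μ {ω | Y ω ≤ t}).toReal}) :
    Tendsto (fun n : ℕ => ∑ i ∈ Finset.Icc 1 (n - 1),
        ξ ((i : ℝ) / n) * (w (((n : ℝ) - i) / n) - w (((n : ℝ) - i - 1) / n)))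
      atTop (nhds (∫ z in Set.Ioi (0:ℝ), w ((μ {ω | Y ω > z}).toReal))) ∧
    IntegrableOn (fun z => w ((μ {ω | Y ω > z}).toReal)) (Set.Ioi (0:ℝ)) := by
  classical
  set F : ℝ → ℝ := fun z => (μ {ω | Y ω ≤ z}).toReal with hFdef
  set G : ℝ → ℝ := fun z => (μ {ω | Y ω > z}).toReal with hGdef
  have hmeasLe : ∀ z : ℝ, MeasurableSet {ω | Y ω ≤ z} := fun z => hYmeas measurableSet_Iic
  have hF0 : ∀ z, 0 ≤ F z := fun z => ENNReal.toReal_nonneg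
  have hF1 : ∀ z, F z ≤ 1 := by
    intro z
    have h := prob_le_one (μ := μ) (s := {ω | Y ω ≤ z})
    have := ENNReal.toReal_mono ENNReal.one_ne_top h
    simpa using this
  have hFmono : Monotone F := by
    intro a b hab
    exact ENNReal.toReal_mono (measure_ne_top μ _) (measure_mono fun ω h => le_trans h hab)
  have hGF : ∀ z, G z = 1 - F z := by
    intro z
    have hc : {ω | Y ω > z} = {ω | Y ω ≤ z}ᶜ := by ext ω; simp [not_le]
    simp only [hGdef, hFdef, hc]
    rw [measure_compl (hmeasLe z) (measure_ne_top μ _), measure_univ,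
      ENNReal.toReal_sub_of_le prob_le_one ENNReal.one_ne_top, ENNReal.toReal_one]
  have hG0 : ∀ z, 0 ≤ G z := fun z => ENNReal.toReal_nonneg
  have hG1 : ∀ z, G z ≤ 1 := fun z => by rw [hGF]; linarith [hF0 z]
  have hGIcc : ∀ z, G z ∈ Set.Icc (0:ℝ) 1 := fun z => ⟨hG0 z, hG1 z⟩
  have hGanti : Antitone G := by
    intro a b hab
    rw [hGF a, hGF b]
    linarith [hFmono hab]
  have hg_nonneg : ∀ z, 0 ≤ w (G z) := fun z => (hw_range _ (hGIcc z)).1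
  have hg_anti : Antitone fun z => w (G z) :=
    fun a b hab => hw_mono (hGIcc b) (hGIcc a) (hGanti hab)
  have hg_meas : Measurable fun z => w (G z) := hg_anti.measurable
  have hg_le : ∀ z, w (G z) ≤ H * G z ^ γ := by
    intro z
    have h1 := hw_holder (G z) (hGIcc z) 0 ⟨le_refl 0, zero_le_one⟩
    rw [hw0, sub_zero, sub_zero, abs_of_nonneg (hg_nonneg z), abs_of_nonneg (hG0 z)] at h1
    have h3 : G z ^ α ≤ G z ^ γ := by
      rcases eq_or_lt_of_le (hG0 z) with h | h
      · rw [← h, Real.zero_rpow (ne_of_gt hα0), Real.zero_rpow (ne_of_gt hγ0)]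
      · exact Real.rpow_le_rpow_of_exponent_ge h (hG1 z) hγα
    calc w (G z) ≤ H * G z ^ α := h1
      _ ≤ H * G z ^ γ := mul_le_mul_of_nonneg_left h3 hH.le
  have hIntg : IntegrableOn (fun z => w (G z)) (Set.Ioi (0:ℝ)) := by
    refine ⟨hg_meas.aestronglyMeasurable, ?_⟩
    rw [hasFiniteIntegral_iff_ofReal (ae_of_all _ hg_nonneg)]
    calc (∫⁻ z in Set.Ioi (0:ℝ), ENNReal.ofReal (w (G z)))
        ≤ ∫⁻ z in Set.Ioi (0:ℝ), ENNReal.ofReal H * ENNReal.ofReal (G z ^ γ) := by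
          refine lintegral_mono fun z => ?_
          rw [← ENNReal.ofReal_mul hH.le]
          exact ENNReal.ofReal_le_ofReal (hg_le z)
      _ = ENNReal.ofReal H * ∫⁻ z in Set.Ioi (0:ℝ), ENNReal.ofReal (G z ^ γ) :=
          lintegral_const_mul' _ _ ENNReal.ofReal_ne_top
      _ < ⊤ := ENNReal.mul_lt_top ENNReal.ofReal_lt_top hint
  refine ⟨?_, hIntg⟩
  have hSmeas : ∀ p : ℝ, MeasurableSet {z : ℝ | F z < p} :=
    fun p => measurableSet_lt hFmono.measurable measurable_const
  have hquant : ∀ p : ℝ, 0 < p → p < 1 →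
      0 ≤ sInf {t : ℝ | p ≤ F t} ∧
      volume ({z : ℝ | F z < p} ∩ Set.Ioi 0) = ENNReal.ofReal (sInf {t : ℝ | p ≤ F t}) := by
    intro p hp0 hp1
    have hne : ∃ t : ℝ, p ≤ F t := by
      have hmono : Monotone fun n : ℕ => {ω | Y ω ≤ (n:ℝ)} := by
        intro a b hab ω h
        simp only [Set.mem_setOf_eq] at *
        exact le_trans h (by exact_mod_cast hab)
      have hUn : (⋃ n : ℕ, {ω | Y ω ≤ (n:ℝ)}) = Set.univ := by
        ext ω
        simp only [Set.mem_iUnion, Set.mem_setOf_eq, Set.mem_univ, iff_true]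
        exact exists_nat_ge (Y ω)
      have htend := tendsto_measure_iUnion_atTop (μ := μ)
        (s := fun n : ℕ => {ω | Y ω ≤ (n:ℝ)}) hmono
      rw [hUn, measure_univ] at htend
      have hlt : ENNReal.ofReal p < 1 := by
        rw [← ENNReal.ofReal_one]
        exact (ENNReal.ofReal_lt_ofReal_iff_of_nonneg hp0.le).2 hp1
      obtain ⟨n, hn⟩ := (htend.eventually (eventually_gt_nhds hlt)).exists
      exact ⟨(n:ℝ), (ENNReal.ofReal_le_iff_le_toReal (measure_ne_top μ _)).1 hn.le⟩
    have hsub : {t : ℝ | p ≤ F t} ⊆ Set.Ici (0:ℝ) := by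
      intro t ht
      by_contra hneg
      rw [Set.mem_Ici, not_le] at *
      have hempty : {ω | Y ω ≤ t} = ∅ := by
        ext ω
        simp only [Set.mem_setOf_eq, Set.mem_empty_iff_false, iff_false, not_le]
        exact lt_of_lt_of_le hneg (hYnonneg ω)
      have hFt : F t = 0 := by simp [hFdef, hempty]
      rw [Set.mem_setOf_eq, hFt] at ht
      linarith
    have hbdd : BddBelow {t : ℝ | p ≤ F t} := ⟨0, fun t ht => hsub ht⟩
    have hc0 : 0 ≤ sInf {t : ℝ | p ≤ F t} := le_csInf hne fun t ht => hsub ht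
    have hub : ∀ z : ℝ, F z < p → z ≤ sInf {t : ℝ | p ≤ F t} := by
      intro z hz
      refine le_csInf hne fun t ht => ?_
      by_contra h
      push_neg at h
      have := hFmono h.le
      rw [Set.mem_setOf_eq] at ht
      linarith
    have hlb : ∀ z : ℝ, z < sInf {t : ℝ | p ≤ F t} → F z < p := by
      intro z hz
      by_contra h
      push_neg at h
      have : sInf {t : ℝ | p ≤ F t} ≤ z := csInf_le hbdd h
      linarith
    refine ⟨hc0, le_antisymm ?_ ?_⟩
    · calc volume ({z : ℝ | F z < p} ∩ Set.Ioi 0)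
          ≤ volume (Set.Ioc 0 (sInf {t : ℝ | p ≤ F t})) :=
            measure_mono fun z hz => ⟨hz.2, hub z hz.1⟩
        _ = ENNReal.ofReal (sInf {t : ℝ | p ≤ F t}) := by rw [Real.volume_Ioc, sub_zero]
    · calc ENNReal.ofReal (sInf {t : ℝ | p ≤ F t})
          = volume (Set.Ioo 0 (sInf {t : ℝ | p ≤ F t})) := by rw [Real.volume_Ioo, sub_zero]
        _ ≤ volume ({z : ℝ | F z < p} ∩ Set.Ioi 0) :=
            measure_mono fun z hz => ⟨hlb z hz.2, hz.1⟩
  have hindInt : ∀ p : ℝ, 0 < p → p < 1 →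
      Integrable (Set.indicator {z : ℝ | F z < p} fun _ => (1:ℝ))
        (volume.restrict (Set.Ioi 0)) := by
    intro p hp0 hp1
    rw [integrable_indicator_iff (hSmeas p)]
    refine (integrableOn_const_iff (by simp)).2 (Or.inr ?_)
    rw [Measure.restrict_apply (hSmeas p), (hquant p hp0 hp1).2]
    exact ENNReal.ofReal_lt_top
  have hindVal : ∀ p : ℝ, 0 < p → p < 1 →
      (∫ z in Set.Ioi (0:ℝ), Set.indicator {z' : ℝ | F z' < p} (fun _ => (1:ℝ)) z)
        = sInf {t : ℝ | p ≤ F t} := by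
    intro p hp0 hp1
    rw [integral_indicator (hSmeas p), setIntegral_const, smul_eq_mul, mul_one,
      measureReal_def, Measure.restrict_apply (hSmeas p), (hquant p hp0 hp1).2,
      ENNReal.toReal_ofReal (hquant p hp0 hp1).1]
  set φ : ℕ → ℝ → ℝ := fun n z => ∑ i ∈ Finset.Icc 1 (n-1),
      Set.indicator {z' : ℝ | F z' < (i:ℝ)/n} (fun _ => (1:ℝ)) z *
        (w (((n:ℝ) - i)/n) - w (((n:ℝ) - i - 1)/n)) with hφdef
  have hiIoo : ∀ n : ℕ, ∀ i ∈ Finset.Icc 1 (n-1), 0 < (i:ℝ)/n ∧ (i:ℝ)/n < 1 := by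
    intro n i hi
    rw [Finset.mem_Icc] at hi
    have hin : i < n := by omega
    have hn0 : 0 < n := by omega
    have hn0' : (0:ℝ) < n := by exact_mod_cast hn0
    have hi1 : (0:ℝ) < i := by exact_mod_cast (by omega : 0 < i)
    have hilt : (i:ℝ) < n := by exact_mod_cast hin
    exact ⟨div_pos hi1 hn0', (div_lt_one hn0').2 hilt⟩
  have hφint : ∀ n : ℕ, (∫ z in Set.Ioi (0:ℝ), φ n z) = ∑ i ∈ Finset.Icc 1 (n-1),
      ξ ((i:ℝ)/n) * (w (((n:ℝ) - i)/n) - w (((n:ℝ) - i - 1)/n)) := by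
    intro n
    simp only [hφdef]
    rw [integral_finset_sum _
      (fun i hi => ((hindInt _ (hiIoo n i hi).1 (hiIoo n i hi).2).mul_const _))]
    refine Finset.sum_congr rfl fun i hi => ?_
    rw [integral_mul_const, hindVal _ (hiIoo n i hi).1 (hiIoo n i hi).2,
      hξ _ ⟨(hiIoo n i hi).1, (hiIoo n i hi).2⟩]
  have tele : ∀ (u : ℕ → ℝ) (a b : ℕ), a ≤ b →
      ∑ i ∈ Finset.Ico a b, (u i - u (i+1)) = u a - u b := by
    intro u a b hab
    induction b, hab using Nat.le_induction with
    | base => simp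
    | succ b hab ih => rw [Finset.sum_Ico_succ_top hab, ih]; ring
  have key : ∀ n : ℕ, 1 ≤ n → ∀ z : ℝ,
      0 ≤ φ n z ∧ φ n z ≤ w (G z) ∧ w (G z) - φ n z ≤ H * (1/(n:ℝ)) ^ α := by
    intro n hn z
    have hn0 : (0:ℝ) < n := by exact_mod_cast hn
    set m : ℕ := ⌊(n:ℝ) * F z⌋₊ + 1 with hm
    have hnF0 : 0 ≤ (n:ℝ) * F z := mul_nonneg hn0.le (hF0 z)
    have hφeq : φ n z = ∑ i ∈ Finset.Icc m (n-1),
        (w (((n:ℝ) - i)/n) - w (((n:ℝ) - i - 1)/n)) := by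
      simp only [hφdef]
      have hind : ∀ i : ℕ, Set.indicator {z' : ℝ | F z' < (i:ℝ)/n} (fun _ => (1:ℝ)) z
          = if F z < (i:ℝ)/n then 1 else 0 := by
        intro i
        simp [Set.indicator_apply, Set.mem_setOf_eq]
      simp only [hind, ite_mul, one_mul, zero_mul]
      rw [← Finset.sum_filter]
      congr 1
      ext i
      simp only [Finset.mem_filter, Finset.mem_Icc]
      constructor
      · rintro ⟨⟨h1, h2⟩, h3⟩
        refine ⟨?_, h2⟩
        have hlt : (n:ℝ) * F z < i := by
          rw [lt_div_iff₀ hn0] at h3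
          linarith [h3]
        have := (Nat.floor_lt hnF0).2 hlt
        omega
      · rintro ⟨h1, h2⟩
        have hfl : ⌊(n:ℝ) * F z⌋₊ < i := by omega
        have hlt : (n:ℝ) * F z < i := (Nat.floor_lt hnF0).1 hfl
        refine ⟨⟨by omega, h2⟩, ?_⟩
        rw [lt_div_iff₀ hn0]
        linarith [mul_comm (F z) (n:ℝ)]
    by_cases hmn : m ≤ n
    · have hIcc : Finset.Icc m (n-1) = Finset.Ico m n := by
        rw [← Finset.Ico_add_one_right_eq_Icc, Nat.sub_add_cancel hn]
      have hterm : ∀ i : ℕ, w (((n:ℝ) - i)/n) - w (((n:ℝ) - i - 1)/n)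
          = (fun j : ℕ => w (((n:ℝ) - j)/n)) i - (fun j : ℕ => w (((n:ℝ) - j)/n)) (i+1) := by
        intro i
        simp only []
        have : ((n:ℝ) - i - 1)/n = ((n:ℝ) - (↑(i+1) : ℝ))/n := by push_cast; ring
        rw [this]
      have hφval : φ n z = w (((n:ℝ) - m)/n) := by
        rw [hφeq, hIcc, Finset.sum_congr rfl (fun i _ => hterm i), tele _ m n hmn]
        simp [hw0]
      have hmlen : (m:ℝ) ≤ n := by exact_mod_cast hmn
      have hflow : (m:ℝ) - 1 ≤ (n:ℝ) * F z := by
        have h := Nat.floor_le hnF0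
        have : (m:ℝ) = (⌊(n:ℝ) * F z⌋₊ : ℝ) + 1 := by rw [hm]; push_cast; ring
        linarith
      have hfhigh : (n:ℝ) * F z < m := by
        have h := Nat.lt_floor_add_one ((n:ℝ) * F z)
        have : (m:ℝ) = (⌊(n:ℝ) * F z⌋₊ : ℝ) + 1 := by rw [hm]; push_cast; ring
        linarith
      have ha0 : 0 ≤ ((n:ℝ) - m)/n := div_nonneg (by linarith) hn0.le
      have ha1 : ((n:ℝ) - m)/n ≤ 1 := by
        rw [div_le_one hn0]
        linarith [hm, Nat.cast_nonneg (α := ℝ) m]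
      have haG : ((n:ℝ) - m)/n ≤ G z := by
        rw [hGF, div_le_iff₀ hn0]
        nlinarith [hfhigh]
      have hGa : G z ≤ ((n:ℝ) - m)/n + 1/n := by
        rw [hGF, ← add_div, le_div_iff₀ hn0]
        nlinarith [hflow]
      refine ⟨?_, ?_, ?_⟩
      · rw [hφval]; exact (hw_range _ ⟨ha0, ha1⟩).1
      · rw [hφval]; exact hw_mono ⟨ha0, ha1⟩ (hGIcc z) haG
      · rw [hφval]
        have h4 := hw_holder (G z) (hGIcc z) (((n:ℝ) - m)/n) ⟨ha0, ha1⟩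
        have h5 : |G z - ((n:ℝ) - m)/n| ≤ 1/n := by
          rw [abs_of_nonneg (by linarith)]
          linarith
        have h6 : |G z - ((n:ℝ) - m)/n| ^ α ≤ (1/(n:ℝ)) ^ α :=
          Real.rpow_le_rpow (abs_nonneg _) h5 hα0.le
        calc w (G z) - w (((n:ℝ) - m)/n) ≤ |w (G z) - w (((n:ℝ) - m)/n)| := le_abs_self _
          _ ≤ H * |G z - ((n:ℝ) - m)/n| ^ α := h4
          _ ≤ H * (1/(n:ℝ)) ^ α := mul_le_mul_of_nonneg_left h6 hH.le
    · push_neg at hmn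
      have hFz1 : 1 ≤ F z := by
        have h1 : n ≤ ⌊(n:ℝ) * F z⌋₊ := by omega
        have h2 : (n:ℝ) ≤ (n:ℝ) * F z :=
          le_trans (by exact_mod_cast h1) (Nat.floor_le hnF0)
        nlinarith
      have hGz0 : G z = 0 := by
        rw [hGF]
        linarith [hF1 z]
      have hφ0 : φ n z = 0 := by
        rw [hφeq, Finset.Icc_eq_empty (by omega), Finset.sum_empty]
      rw [hφ0, hGz0, hw0]
      refine ⟨le_refl 0, le_refl 0, ?_⟩
      have : 0 ≤ H * (1/(n:ℝ)) ^ α := by positivity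
      linarith
  have hmeasφ : ∀ n : ℕ, AEStronglyMeasurable (φ n) (volume.restrict (Set.Ioi (0:ℝ))) := by
    intro n
    apply Measurable.aestronglyMeasurable
    apply Finset.measurable_sum
    intro i _
    exact (measurable_const.indicator (hSmeas _)).mul_const _
  have hφ0z : ∀ z : ℝ, φ 0 z = 0 := by
    intro z
    simp [hφdef]
  have hbound : ∀ n : ℕ, ∀ᵐ z ∂(volume.restrict (Set.Ioi (0:ℝ))), ‖φ n z‖ ≤ w (G z) := by
    intro n
    refine ae_of_all _ fun z => ?_
    rcases Nat.eq_zero_or_pos n with h | h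
    · subst h
      rw [hφ0z z]
      simpa using hg_nonneg z
    · have hk := key n h z
      rw [Real.norm_eq_abs, abs_of_nonneg hk.1]
      exact hk.2.1
  have hlim : ∀ᵐ z ∂(volume.restrict (Set.Ioi (0:ℝ))),
      Tendsto (fun n : ℕ => φ n z) atTop (nhds (w (G z))) := by
    refine ae_of_all _ fun z => ?_
    have hd : Tendsto (fun n : ℕ => φ n z - w (G z)) atTop (nhds 0) := by
      refine squeeze_zero_norm' (a := fun n : ℕ => H * (1/(n:ℝ)) ^ α) ?_ ?_
      · filter_upwards [eventually_ge_atTop 1] with n hn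
        have hk := key n hn z
        rw [Real.norm_eq_abs, abs_sub_comm, abs_of_nonneg (by linarith [hk.2.1])]
        exact hk.2.2
      · have h1 : Tendsto (fun n : ℕ => ((n:ℝ)) ^ (-α)) atTop (nhds 0) :=
          (tendsto_rpow_neg_atTop hα0).comp tendsto_natCast_atTop_atTop
        have h2 : (fun n : ℕ => H * (1/(n:ℝ)) ^ α) = fun n : ℕ => H * ((n:ℝ)) ^ (-α) := by
          funext n
          rw [one_div, Real.inv_rpow (Nat.cast_nonneg n), ← Real.rpow_neg (Nat.cast_nonneg n)]
        rw [h2]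
        have := h1.const_mul H
        simpa using this
    have := hd.add_const (w (G z))
    simpa using this
  have hmain := tendsto_integral_of_dominated_convergence
      (μ := volume.restrict (Set.Ioi (0:ℝ))) (F := φ) (f := fun z => w (G z))
      (fun z => w (G z)) hmeasφ hIntg hbound hlim
  exact hmain.congr hφint
end

section
/- Let X be a real random variable, u⁺, u⁻ : ℝ → [0,∞) continuous utility functions (u⁺ nondecreasing, u⁻ nonincreasing) such that u⁺(X) and u⁻(X) have finite first moments, and w⁺, w⁻ : [0,1] → [0,1] nondecreasing continuous weight functions with w⁺(0) = w⁻(0) = 0 and w⁺(1) = w⁻(1) = 1 that are Lipschitz continuous with common constant L. Let X₁, X₂, … be i.i.d. copies of X, and define the estimator C̄ₙ = Σ_{i=1}^{n−1} u⁺(X_[i]) ( w⁺((n−i)/n) − w⁺((n−i−1)/n) ) − Σ_{i=1}^{n−1} u⁻(X_[i]) ( w⁻(i/n) − w⁻((i−1)/n) ), where X_[1] ≤ … ≤ X_[n] are the order statistics of the first n samples. Then C̄ₙ → C(X) almost surely as n → ∞. -/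
open MeasureTheory Filter

set_option linter.unusedSectionVars false
set_option linter.unusedVariables false
set_option maxHeartbeats 1000000
open ProbabilityTheory

/-- The `i`-th order statistic (1-indexed, i.e. the `i`-th smallest value) of the
first `n` samples `x 0, …, x (n-1)`. -/
noncomputable def orderStat (n : ℕ) (x : ℕ → ℝ) (i : ℕ) : ℝ :=
  ((List.ofFn fun j : Fin n => x j).insertionSort (· ≤ ·)).getD (i - 1) 0


lemma countP_sorted_iff : ∀ (ℓ : List ℝ), ℓ.Pairwise (· ≤ ·) → ∀ {z : ℝ} {k : ℕ},
    1 ≤ k → k ≤ ℓ.length →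
    (k ≤ ℓ.countP (fun a => decide (z < a)) ↔ z < ℓ.getD (ℓ.length - k) 0) := by
  intro ℓ
  induction ℓ with
  | nil => intro _ z k hk1 hk2; simp at hk2; omega
  | cons a t ih =>
    intro hs z k hk1 hk2
    obtain ⟨ha, hst⟩ := List.pairwise_cons.mp hs
    rw [List.countP_cons]
    rcases Nat.lt_or_ge k (t.length + 1) with hlt | hge
    · have hkt : k ≤ t.length := by omega
      have hidx : (a :: t).length - k = (t.length - k) + 1 := by
        simp only [List.length_cons]; omega
      rw [hidx, List.getD_cons_succ]
      by_cases hz : z < a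
      · have hall : t.countP (fun a => decide (z < a)) = t.length := by
          rw [List.countP_eq_length]
          intro b hb
          exact decide_eq_true (lt_of_lt_of_le hz (ha b hb))
        have hmem : t.getD (t.length - k) 0 ∈ t := by
          have : t.length - k < t.length := by omega
          rw [List.getD_eq_getElem _ _ this]
          exact List.getElem_mem this
        constructor
        · intro _
          exact lt_of_lt_of_le hz (ha _ hmem)
        · intro _
          rw [decide_eq_true hz, if_pos rfl, hall]
          omega
      · rw [decide_eq_false hz]
        simp only [Bool.false_eq_true, if_false, add_zero]
        exact ih hst hk1 hkt
    · have hk : k = t.length + 1 := by simp only [List.length_cons] at hk2; omega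
      subst hk
      have hidx : (a :: t).length - (t.length + 1) = 0 := by simp
      rw [hidx, List.getD_cons_zero]
      have hle := List.countP_le_length (p := fun a => decide (z < a)) (l := t)
      by_cases hz : z < a
      · have hall : t.countP (fun a => decide (z < a)) = t.length := by
          rw [List.countP_eq_length]
          intro b hb
          exact decide_eq_true (lt_of_lt_of_le hz (ha b hb))
        rw [decide_eq_true hz, if_pos rfl, hall]
        simp [hz]
      · rw [decide_eq_false hz]
        simp only [Bool.false_eq_true, if_false, add_zero]
        constructor
        · intro h; omega
        · intro h; exact absurd h hz

lemma countP_ofFn (p : ℝ → Bool) : ∀ (n : ℕ) (v : ℕ → ℝ),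
    (List.ofFn fun j : Fin n => v j).countP p
      = ∑ j ∈ Finset.range n, if p (v j) = true then 1 else 0 := by
  intro n
  induction n with
  | zero => intro v; simp
  | succ m ih =>
    intro v
    rw [List.ofFn_succ, List.countP_cons, Finset.sum_range_succ']
    simp only [Fin.val_succ]
    rw [ih (fun j => v (j + 1))]
    simp [add_comm]
    rfl

lemma w_telescope {w : ℝ → ℝ} (hw0 : w 0 = 0) {n m : ℕ} (hm : m ≤ n) :
    w ((m : ℝ)/n) = ∑ k ∈ Finset.Icc 1 n,
      (w ((k:ℝ)/n) - w (((k:ℝ)-1)/n)) * (if k ≤ m then 1 else 0) := by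
  have h1 : ∀ k : ℕ, (w ((k:ℝ)/n) - w (((k:ℝ)-1)/n)) * (if k ≤ m then 1 else 0)
      = if k ≤ m then (w ((k:ℝ)/n) - w (((k:ℝ)-1)/n)) else 0 := by
    intro k; split <;> ring
  simp_rw [h1]
  rw [← Finset.sum_filter]
  have h2 : (Finset.Icc 1 n).filter (· ≤ m) = Finset.Icc 1 m := by
    ext k; simp only [Finset.mem_filter, Finset.mem_Icc]; omega
  rw [h2]
  have h3 : ∑ k ∈ Finset.Icc 1 m, (w ((k:ℝ)/n) - w (((k:ℝ)-1)/n))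
      = ∑ i ∈ Finset.range m, (w (((i:ℝ)+1)/n) - w ((i:ℝ)/n)) := by
    apply Finset.sum_nbij' (fun k => k - 1) (fun i => i + 1)
    · intro k hk; simp only [Finset.mem_Icc] at hk; simp only [Finset.mem_range]; omega
    · intro i hi; simp only [Finset.mem_range] at hi; simp only [Finset.mem_Icc]; omega
    · intro k hk; simp only [Finset.mem_Icc] at hk; omega
    · intro i hi; omega
    · intro k hk
      simp only [Finset.mem_Icc] at hk
      have : ((k - 1 : ℕ) : ℝ) = (k : ℝ) - 1 := by
        have := hk.1; push_cast [Nat.cast_sub this]; ring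
      rw [this]; ring_nf
  rw [h3]
  have h4 := Finset.sum_range_sub (fun i : ℕ => w ((i:ℝ)/n)) m
  have h5 : ∀ i : ℕ, w (((i:ℝ)+1)/n) = w (((i+1:ℕ):ℝ)/n) := by intro i; push_cast; ring_nf
  simp_rw [h5]
  rw [h4]
  simp [hw0]

lemma integral_w_count {n : ℕ} (hn : 1 ≤ n) (v : ℕ → ℝ) (b : ℕ → ℝ)
    (hbnn : ∀ i ∈ Finset.Icc 1 n, 0 ≤ b i)
    (hb : ∀ z : ℝ, 0 < z → ∀ k ∈ Finset.Icc 1 n,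
      (k ≤ ((Finset.range n).filter fun j => z < v j).card ↔ z < b (n + 1 - k)))
    {w : ℝ → ℝ} (hw0 : w 0 = 0) :
    (∫ z in Set.Ioi (0:ℝ), w ((((Finset.range n).filter fun j => z < v j).card : ℝ)/n))
      = ∑ i ∈ Finset.Icc 1 n, b i * (w (((n:ℝ) - i + 1)/n) - w (((n:ℝ) - i)/n)) := by
  set cnt : ℝ → ℕ := fun z => ((Finset.range n).filter fun j => z < v j).card with hcnt
  have key : Set.EqOn (fun z => w ((cnt z : ℝ)/n))
      (fun z => ∑ k ∈ Finset.Icc 1 n, (w ((k:ℝ)/n) - w (((k:ℝ)-1)/n)) *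
        Set.indicator (Set.Iio (b (n + 1 - k))) (fun _ => (1:ℝ)) z) (Set.Ioi 0) := by
    intro z hz
    simp only
    have hcle : cnt z ≤ n := by
      apply le_trans (Finset.card_filter_le _ _) (le_of_eq (Finset.card_range n))
    rw [w_telescope hw0 hcle]
    apply Finset.sum_congr rfl
    intro k hk
    congr 1
    rw [Set.indicator_apply]
    simp only [Set.mem_Iio]
    rw [if_congr (hb z hz k hk) rfl rfl]
  rw [setIntegral_congr_fun measurableSet_Ioi key]
  have hint : ∀ k ∈ Finset.Icc 1 n, Integrable (fun z =>
      (w ((k:ℝ)/n) - w (((k:ℝ)-1)/n)) *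
        Set.indicator (Set.Iio (b (n + 1 - k))) (fun _ => (1:ℝ)) z)
      (volume.restrict (Set.Ioi 0)) := by
    intro k hk
    apply Integrable.const_mul
    rw [integrable_indicator_iff measurableSet_Iio]
    rw [IntegrableOn, Measure.restrict_restrict measurableSet_Iio]
    apply (integrableOn_const_iff).mpr
    right
    rw [Set.Iio_inter_Ioi, Real.volume_Ioo]
    exact ENNReal.ofReal_lt_top
  rw [integral_finset_sum _ hint]
  have hval : ∀ k ∈ Finset.Icc 1 n,
      (∫ z in Set.Ioi (0:ℝ), (w ((k:ℝ)/n) - w (((k:ℝ)-1)/n)) *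
        Set.indicator (Set.Iio (b (n + 1 - k))) (fun _ => (1:ℝ)) z)
      = (w ((k:ℝ)/n) - w (((k:ℝ)-1)/n)) * b (n + 1 - k) := by
    intro k hk
    rw [integral_const_mul]
    congr 1
    rw [integral_indicator measurableSet_Iio, Measure.restrict_restrict measurableSet_Iio,
      Set.Iio_inter_Ioi, setIntegral_const, Real.volume_real_Ioo, smul_eq_mul, mul_one]
    rw [sub_zero, max_eq_left]
    apply hbnn
    simp only [Finset.mem_Icc] at hk ⊢
    omega
  rw [Finset.sum_congr rfl hval]
  apply Finset.sum_nbij' (fun k => n + 1 - k) (fun i => n + 1 - i)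
  · intro k hk; simp only [Finset.mem_Icc] at hk ⊢; omega
  · intro i hi; simp only [Finset.mem_Icc] at hi ⊢; omega
  · intro k hk; simp only [Finset.mem_Icc] at hk; omega
  · intro i hi; simp only [Finset.mem_Icc] at hi; omega
  · intro k hk
    simp only [Finset.mem_Icc] at hk
    have hc : ((n + 1 - k : ℕ) : ℝ) = (n : ℝ) + 1 - k := by
      push_cast [Nat.cast_sub (by omega : k ≤ n + 1)]; ring
    rw [hc]
    have e1 : (n:ℝ) - ((n:ℝ) + 1 - k) + 1 = k := by ring
    have e2 : (n:ℝ) - ((n:ℝ) + 1 - k) = (k:ℝ) - 1 := by ring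
    rw [e1, e2]
    ring


section OrderStat

variable (n : ℕ) (x : ℕ → ℝ)

lemma sortList_length : ((List.ofFn fun j : Fin n => x j).insertionSort (· ≤ ·)).length = n := by
  rw [List.length_insertionSort, List.length_ofFn]

lemma sortList_sorted : ((List.ofFn fun j : Fin n => x j).insertionSort (· ≤ ·)).Pairwise (· ≤ ·) :=
  List.pairwise_insertionSort _ _

lemma sortList_perm :
    ((List.ofFn fun j : Fin n => x j).insertionSort (· ≤ ·)).Perm (List.ofFn fun j : Fin n => x j) :=
  List.perm_insertionSort _ _

lemma orderStat_mem {i : ℕ} (h1 : 1 ≤ i) (h2 : i ≤ n) : ∃ j : Fin n, x j = orderStat n x i := by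
  set s := (List.ofFn fun j : Fin n => x j).insertionSort (· ≤ ·) with hs
  have hlen : s.length = n := sortList_length n x
  have hidx : i - 1 < s.length := by omega
  have hmem : orderStat n x i ∈ s := by
    rw [orderStat, ← hs, List.getD_eq_getElem _ _ hidx]
    exact List.getElem_mem hidx
  have : orderStat n x i ∈ List.ofFn fun j : Fin n => x j := (sortList_perm n x).mem_iff.mp hmem
  rw [List.mem_ofFn] at this
  obtain ⟨j, hj⟩ := this
  exact ⟨j, hj⟩

lemma orderStat_mono {i j : ℕ} (h1 : 1 ≤ i) (hij : i ≤ j) (hj : j ≤ n) :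
    orderStat n x i ≤ orderStat n x j := by
  set s := (List.ofFn fun j : Fin n => x j).insertionSort (· ≤ ·) with hs
  have hlen : s.length = n := sortList_length n x
  rcases eq_or_lt_of_le hij with rfl | hlt
  · exact le_rfl
  · have hi' : i - 1 < s.length := by omega
    have hj' : j - 1 < s.length := by omega
    rw [orderStat, orderStat, ← hs, List.getD_eq_getElem _ _ hi', List.getD_eq_getElem _ _ hj']
    rcases Nat.eq_or_lt_of_le (by omega : i - 1 ≤ j - 1) with he | hlt2
    · simp [he]
    · exact List.pairwise_iff_getElem.mp (sortList_sorted n x) _ _ hi' hj' hlt2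

/-- counting lemma for a monotone `u` -/
lemma count_iff_orderStat_mono {u : ℝ → ℝ} (hu : Monotone u) (z : ℝ) {k : ℕ}
    (hk1 : 1 ≤ k) (hk2 : k ≤ n) :
    (k ≤ ((Finset.range n).filter fun j => z < u (x j)).card ↔
      z < u (orderStat n x (n + 1 - k))) := by
  set s := (List.ofFn fun j : Fin n => x j).insertionSort (· ≤ ·) with hs
  have hlen : s.length = n := sortList_length n x
  set ℓ := s.map u with hℓ
  have hℓlen : ℓ.length = n := by rw [hℓ, List.length_map, hlen]
  have hℓsorted : ℓ.Pairwise (· ≤ ·) := by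
    rw [hℓ, List.pairwise_map]
    exact (sortList_sorted n x).imp fun h => hu h
  have hcard : ((Finset.range n).filter fun j => z < u (x j)).card
      = ℓ.countP fun a => decide (z < a) := by
    rw [Finset.card_filter]
    rw [hℓ, List.Perm.countP_eq _ ((sortList_perm n x).map u)]
    rw [List.map_ofFn]
    simp only [Function.comp_def]
    rw [countP_ofFn (fun a => decide (z < a)) n (fun j => u (x j))]
    apply Finset.sum_congr rfl
    intro j _
    simp [decide_eq_true_eq]
  rw [hcard]
  rw [countP_sorted_iff ℓ hℓsorted hk1 (by omega)]
  have hidx : ℓ.length - k = n - k := by omega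
  have hnk : n - k < n := by omega
  rw [hidx, List.getD_eq_getElem _ _ (by omega : n - k < ℓ.length)]
  simp only [hℓ, List.getElem_map]
  rw [orderStat, ← hs]
  have hidx2 : n + 1 - k - 1 = n - k := by omega
  rw [hidx2, List.getD_eq_getElem _ _ (by omega : n - k < s.length)]

/-- counting lemma for an antitone `u` -/
lemma count_iff_orderStat_anti {u : ℝ → ℝ} (hu : Antitone u) (z : ℝ) {k : ℕ}
    (hk1 : 1 ≤ k) (hk2 : k ≤ n) :
    (k ≤ ((Finset.range n).filter fun j => z < u (x j)).card ↔
      z < u (orderStat n x k)) := by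
  set s := (List.ofFn fun j : Fin n => x j).insertionSort (· ≤ ·) with hs
  have hlen : s.length = n := sortList_length n x
  set ℓ := (s.map u).reverse with hℓ
  have hℓlen : ℓ.length = n := by rw [hℓ, List.length_reverse, List.length_map, hlen]
  have hℓsorted : ℓ.Pairwise (· ≤ ·) := by
    rw [hℓ, List.pairwise_reverse, List.pairwise_map]
    exact (sortList_sorted n x).imp fun h => hu h
  have hcard : ((Finset.range n).filter fun j => z < u (x j)).card
      = ℓ.countP fun a => decide (z < a) := by
    rw [Finset.card_filter]
    rw [hℓ, List.Perm.countP_eq _ (List.reverse_perm _),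
      List.Perm.countP_eq _ ((sortList_perm n x).map u)]
    rw [List.map_ofFn]
    simp only [Function.comp_def]
    rw [countP_ofFn (fun a => decide (z < a)) n (fun j => u (x j))]
    apply Finset.sum_congr rfl
    intro j _
    simp [decide_eq_true_eq]
  rw [hcard]
  rw [countP_sorted_iff ℓ hℓsorted hk1 (by omega)]
  have hidx : ℓ.length - k = n - k := by omega
  rw [hidx, hℓ, List.getD_eq_getElem _ _ (by
    rw [List.length_reverse, List.length_map, hlen]; omega : n - k < (s.map u).reverse.length)]
  rw [List.getElem_reverse]
  have hml : (s.map u).length = n := by rw [List.length_map, hlen]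
  have hidx3 : (s.map u).length - 1 - (n - k) = k - 1 := by omega
  simp_rw [hidx3]
  simp only [List.getElem_map]
  rw [orderStat, ← hs, List.getD_eq_getElem _ _ (by omega : k - 1 < s.length)]

end OrderStat

lemma sum_shift_err {n : ℕ} (hn : 1 ≤ n) (b c Δ : ℕ → ℝ) {Ln : ℝ}
    (hbmono : ∀ i j, 1 ≤ i → i ≤ j → j ≤ n → b i ≤ b j)
    (hb1 : 0 ≤ b 1)
    (hc : ∀ i ∈ Finset.Icc 2 n, b (i-1) ≤ c i ∧ c i ≤ b i)
    (hΔ : ∀ i ∈ Finset.Icc 1 n, 0 ≤ Δ i ∧ Δ i ≤ Ln) :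
    |∑ i ∈ Finset.Icc 1 n, b i * Δ i - ∑ i ∈ Finset.Icc 2 n, c i * Δ i| ≤ Ln * b n := by
  have h1n : (1:ℕ) ∈ Finset.Icc 1 n := by simp [hn]
  have hLn : 0 ≤ Ln := le_trans (hΔ 1 h1n).1 (hΔ 1 h1n).2
  have hins : Finset.Icc 1 n = insert 1 (Finset.Icc 2 n) := by
    ext i; simp only [Finset.mem_Icc, Finset.mem_insert]; omega
  have hnotmem : (1:ℕ) ∉ Finset.Icc 2 n := by simp
  rw [hins, Finset.sum_insert hnotmem]
  have hdiff : b 1 * Δ 1 + ∑ i ∈ Finset.Icc 2 n, b i * Δ i - ∑ i ∈ Finset.Icc 2 n, c i * Δ i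
      = b 1 * Δ 1 + ∑ i ∈ Finset.Icc 2 n, (b i - c i) * Δ i := by
    have : ∑ i ∈ Finset.Icc 2 n, (b i - c i) * Δ i
        = ∑ i ∈ Finset.Icc 2 n, b i * Δ i - ∑ i ∈ Finset.Icc 2 n, c i * Δ i := by
      rw [← Finset.sum_sub_distrib]
      apply Finset.sum_congr rfl; intro i _; ring
    rw [this]; ring
  rw [hdiff]
  have hterm_nn : ∀ i ∈ Finset.Icc 2 n, 0 ≤ (b i - c i) * Δ i := by
    intro i hi
    have hi' : i ∈ Finset.Icc 1 n := by simp only [Finset.mem_Icc] at hi ⊢; omega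
    exact mul_nonneg (by linarith [(hc i hi).2]) (hΔ i hi').1
  have hnn : 0 ≤ b 1 * Δ 1 + ∑ i ∈ Finset.Icc 2 n, (b i - c i) * Δ i := by
    have := Finset.sum_nonneg hterm_nn
    have := mul_nonneg hb1 (hΔ 1 h1n).1
    linarith
  rw [abs_of_nonneg hnn]
  have hbd : ∑ i ∈ Finset.Icc 2 n, (b i - c i) * Δ i
      ≤ ∑ i ∈ Finset.Icc 2 n, (b i - b (i-1)) * Ln := by
    apply Finset.sum_le_sum
    intro i hi
    have hi' : i ∈ Finset.Icc 1 n := by simp only [Finset.mem_Icc] at hi ⊢; omega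
    have h1 : 0 ≤ b i - c i := by linarith [(hc i hi).2]
    have h2 : b i - c i ≤ b i - b (i-1) := by linarith [(hc i hi).1]
    have h3 := (hΔ i hi').1
    have h4 := (hΔ i hi').2
    nlinarith
  have htel : ∑ i ∈ Finset.Icc 2 n, (b i - b (i-1)) = b n - b 1 := by
    have hmap : ∑ i ∈ Finset.Icc 2 n, (b i - b (i-1))
        = ∑ j ∈ Finset.range (n-1), (b (j+2) - b (j+1)) := by
      apply Finset.sum_nbij' (fun i => i - 2) (fun j => j + 2)
      · intro i hi; simp only [Finset.mem_Icc] at hi; simp only [Finset.mem_range]; omega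
      · intro j hj; simp only [Finset.mem_range] at hj; simp only [Finset.mem_Icc]; omega
      · intro i hi; simp only [Finset.mem_Icc] at hi; omega
      · intro j hj; omega
      · intro i hi
        simp only [Finset.mem_Icc] at hi
        congr 2 <;> omega
    rw [hmap]
    have := Finset.sum_range_sub (fun j => b (j + 1)) (n - 1)
    rw [this]
    congr 2
    omega
  have hsum : ∑ i ∈ Finset.Icc 2 n, (b i - b (i-1)) * Ln = (b n - b 1) * Ln := by
    rw [← Finset.sum_mul, htel]
  rw [hsum] at hbd
  have hΔ1 : Δ 1 ≤ Ln := (hΔ 1 h1n).2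
  have hb1n : b 1 ≤ b n := hbmono 1 n le_rfl hn le_rfl
  nlinarith [mul_le_mul_of_nonneg_left hΔ1 hb1]

lemma toReal_ofReal_eq_max (x : ℝ) : (ENNReal.ofReal x).toReal = max x 0 := by
  rcases le_total x 0 with h | h
  · rw [ENNReal.ofReal_eq_zero.mpr h, ENNReal.toReal_zero, max_eq_right h]
  · rw [ENNReal.toReal_ofReal h, max_eq_left h]

section Master

variable (v : ℕ → ℝ)

/-- empirical tail function -/
noncomputable def empF (n : ℕ) (z : ℝ) : ℝ :=
  (((Finset.range n).filter fun j => z < v j).card : ℝ) / n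

lemma empF_nonneg (n : ℕ) (z : ℝ) : 0 ≤ empF v n z := by
  unfold empF; positivity

lemma empF_le_one (n : ℕ) (z : ℝ) : empF v n z ≤ 1 := by
  unfold empF
  rcases Nat.eq_zero_or_pos n with rfl | hn
  · simp
  · rw [div_le_one (by positivity)]
    exact_mod_cast le_trans (Finset.card_filter_le _ _) (le_of_eq (Finset.card_range n))

lemma empF_anti (n : ℕ) : Antitone (empF v n) := by
  intro z1 z2 h
  unfold empF
  rcases Nat.eq_zero_or_pos n with rfl | hn
  · simp
  · apply div_le_div_of_nonneg_right _ (by positivity)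
    exact Nat.cast_le.mpr (Finset.card_le_card
      (Finset.monotone_filter_right _ (fun j _ hj => lt_of_le_of_lt h hj)))

lemma empF_eq_sum (n : ℕ) (z : ℝ) :
    empF v n z = (∑ i ∈ Finset.range n,
      Set.indicator (Set.Iio (v i)) (fun _ => (1:ℝ)) z) / n := by
  unfold empF
  congr 1
  rw [Finset.card_filter]
  push_cast
  apply Finset.sum_congr rfl
  intro i _
  rw [Set.indicator_apply]
  simp only [Set.mem_Iio]

lemma empF_integrableOn (n : ℕ) {T : ℝ} :
    IntegrableOn (empF v n) (Set.Ioi T) := by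
  have : ∀ z, empF v n z = (∑ i ∈ Finset.range n,
      Set.indicator (Set.Iio (v i)) (fun _ => (1:ℝ)) z) / n := empF_eq_sum v n
  rw [IntegrableOn]
  apply Integrable.congr _ (Filter.Eventually.of_forall fun z => (this z).symm)
  apply Integrable.div_const
  apply integrable_finset_sum
  intro i _
  rw [integrable_indicator_iff measurableSet_Iio]
  rw [IntegrableOn, Measure.restrict_restrict measurableSet_Iio]
  apply (integrableOn_const_iff).mpr
  right
  rw [Set.Iio_inter_Ioi, Real.volume_Ioo]
  exact ENNReal.ofReal_lt_top

lemma empF_integral_tail (n : ℕ) {T : ℝ} :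
    ∫ z in Set.Ioi T, empF v n z
      = (∑ i ∈ Finset.range n, max (v i - T) 0) / n := by
  simp_rw [empF_eq_sum v n]
  rw [integral_div]
  congr 1
  rw [integral_finset_sum]
  · apply Finset.sum_congr rfl
    intro i _
    rw [integral_indicator measurableSet_Iio, Measure.restrict_restrict measurableSet_Iio,
      Set.Iio_inter_Ioi, setIntegral_const, Real.volume_real_Ioo, smul_eq_mul, mul_one]
  · intro i _
    rw [integrable_indicator_iff measurableSet_Iio]
    rw [IntegrableOn, Measure.restrict_restrict measurableSet_Iio]
    apply (integrableOn_const_iff).mpr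
    right
    rw [Set.Iio_inter_Ioi, Real.volume_Ioo]
    exact ENNReal.ofReal_lt_top

end Master

lemma master_tendsto (v : ℕ → ℝ)
    (G : ℝ → ℝ) (hGanti : Antitone G) (hG0 : ∀ z, 0 ≤ G z) (hG1 : ∀ z, G z ≤ 1)
    (hGint : IntegrableOn G (Set.Ioi 0))
    (E : ℕ → ℝ)
    (hE0 : Tendsto E atTop (nhds 0))
    (htailG : Tendsto (fun T : ℕ => ∫ z in Set.Ioi (T:ℝ), G z) atTop (nhds 0))
    (hq : ∀ q : ℚ, Tendsto (fun n => empF v n (q:ℝ)) atTop (nhds (G q)))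
    (hT : ∀ T : ℕ, Tendsto (fun n => (∑ i ∈ Finset.range n, max (v i - T) 0) / n)
      atTop (nhds (E T)))
    (w : ℝ → ℝ) (hw0 : w 0 = 0)
    (hwmono : MonotoneOn w (Set.Icc (0:ℝ) 1))
    (hwub : ∀ a ∈ Set.Icc (0:ℝ) 1, w a ≤ 1)
    {L : ℝ} (hL : 0 < L)
    (hwlip : ∀ x ∈ Set.Icc (0:ℝ) 1, ∀ y ∈ Set.Icc (0:ℝ) 1, |w x - w y| ≤ L * |x - y|) :
    Tendsto (fun n => ∫ z in Set.Ioi (0:ℝ), w (empF v n z)) atTop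
      (nhds (∫ z in Set.Ioi (0:ℝ), w (G z))) := by
  -- basic facts
  have hmemF : ∀ n z, empF v n z ∈ Set.Icc (0:ℝ) 1 :=
    fun n z => ⟨empF_nonneg v n z, empF_le_one v n z⟩
  have hmemG : ∀ z, G z ∈ Set.Icc (0:ℝ) 1 := fun z => ⟨hG0 z, hG1 z⟩
  have h01 : (0:ℝ) ∈ Set.Icc (0:ℝ) 1 := by norm_num
  have hwnn : ∀ a ∈ Set.Icc (0:ℝ) 1, 0 ≤ w a := by
    intro a ha
    rw [← hw0]; exact hwmono h01 ha ha.1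
  have hwle : ∀ a ∈ Set.Icc (0:ℝ) 1, w a ≤ L * a := by
    intro a ha
    have := hwlip a ha 0 h01
    rw [hw0, sub_zero, sub_zero, abs_of_nonneg (hwnn a ha), abs_of_nonneg ha.1] at this
    exact this
  -- monotone compositions are antitone in z, hence measurable
  have hgn_anti : ∀ n, Antitone (fun z => w (empF v n z)) := by
    intro n z1 z2 h
    exact hwmono (hmemF n z2) (hmemF n z1) (empF_anti v n h)
  have hg_anti : Antitone (fun z => w (G z)) := by
    intro z1 z2 h
    exact hwmono (hmemG z2) (hmemG z1) (hGanti h)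
  have hgn_meas : ∀ n, Measurable (fun z => w (empF v n z)) := fun n => (hgn_anti n).measurable
  have hg_meas : Measurable (fun z => w (G z)) := hg_anti.measurable
  -- pointwise a.e. convergence
  have hN : (volume : Measure ℝ) {z | ¬ContinuousAt G z} = 0 :=
    (hGanti.countable_not_continuousAt).measure_zero _
  have hptF : ∀ z, ContinuousAt G z → Tendsto (fun n => empF v n z) atTop (nhds (G z)) := by
    intro z hc
    rw [Metric.tendsto_atTop]
    intro ε hε
    obtain ⟨δ, hδ, hδ2⟩ := Metric.continuousAt_iff.mp hc (ε/2) (by linarith)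
    obtain ⟨q1, hq1a, hq1b⟩ := exists_rat_btwn (show z - δ < z by linarith)
    obtain ⟨q2, hq2a, hq2b⟩ := exists_rat_btwn (show z < z + δ by linarith)
    have hGq1 : |G q1 - G z| < ε/2 := by
      have : dist (q1:ℝ) z < δ := by rw [Real.dist_eq, abs_lt]; constructor <;> linarith
      have := hδ2 this
      rwa [Real.dist_eq] at this
    have hGq2 : |G q2 - G z| < ε/2 := by
      have : dist (q2:ℝ) z < δ := by rw [Real.dist_eq, abs_lt]; constructor <;> linarith
      have := hδ2 this
      rwa [Real.dist_eq] at this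
    have h1 := Metric.tendsto_atTop.mp (hq q1) (ε/2) (by linarith)
    have h2 := Metric.tendsto_atTop.mp (hq q2) (ε/2) (by linarith)
    obtain ⟨N1, hN1⟩ := h1
    obtain ⟨N2, hN2⟩ := h2
    refine ⟨max N1 N2, fun n hn => ?_⟩
    have e1 := hN1 n (le_trans (le_max_left _ _) hn)
    have e2 := hN2 n (le_trans (le_max_right _ _) hn)
    rw [Real.dist_eq] at e1 e2 ⊢
    rw [abs_lt] at e1 e2 ⊢
    rw [abs_lt] at hGq1 hGq2
    have hle1 : empF v n z ≤ empF v n q1 := empF_anti v n (le_of_lt hq1b)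
    have hle2 : empF v n q2 ≤ empF v n z := empF_anti v n (le_of_lt hq2a)
    constructor <;> linarith
  have hptw : ∀ z, ContinuousAt G z →
      Tendsto (fun n => w (empF v n z)) atTop (nhds (w (G z))) := by
    intro z hc
    rw [tendsto_iff_dist_tendsto_zero]
    apply squeeze_zero (fun n => dist_nonneg)
      (g := fun n => L * dist (empF v n z) (G z))
    · intro n
      rw [Real.dist_eq, Real.dist_eq]
      exact hwlip _ (hmemF n z) _ (hmemG z)
    · have := (tendsto_iff_dist_tendsto_zero.mp (hptF z hc)).const_mul L
      simpa using this
  have hae : ∀ᵐ z ∂(volume : Measure ℝ),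
      Tendsto (fun n => w (empF v n z)) atTop (nhds (w (G z))) := by
    rw [ae_iff]
    apply measure_mono_null _ hN
    intro z hz
    simp only [Set.mem_setOf_eq] at hz ⊢
    intro hc
    exact hz (hptw z hc)
  -- integrability
  have hgn_intOn : ∀ n (T : ℝ), IntegrableOn (fun z => w (empF v n z)) (Set.Ioi T) := by
    intro n T
    apply Integrable.mono' ((empF_integrableOn v n (T := T)).const_mul L)
      (hgn_meas n).aestronglyMeasurable
    apply Eventually.of_forall
    intro z
    rw [Real.norm_eq_abs, abs_of_nonneg (hwnn _ (hmemF n z))]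
    exact hwle _ (hmemF n z)
  have hg_intOn : IntegrableOn (fun z => w (G z)) (Set.Ioi 0) := by
    apply Integrable.mono' (hGint.const_mul L) hg_meas.aestronglyMeasurable
    apply Eventually.of_forall
    intro z
    rw [Real.norm_eq_abs, abs_of_nonneg (hwnn _ (hmemG z))]
    exact hwle _ (hmemG z)
  -- main ε argument
  rw [Metric.tendsto_atTop]
  intro ε hε
  -- choose T
  have hev1 : ∀ᶠ T : ℕ in atTop, L * E T < ε/8 := by
    have : Tendsto (fun T => L * E T) atTop (nhds (L * 0)) := hE0.const_mul L
    rw [mul_zero] at this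
    exact this.eventually_lt_const (by linarith)
  have hev2 : ∀ᶠ T : ℕ in atTop, ∫ z in Set.Ioi (T:ℝ), G z < ε/(4*L) := by
    exact htailG.eventually_lt_const (by positivity)
  obtain ⟨T, hT1, hT2, hT3⟩ := (hev1.and (hev2.and (eventually_ge_atTop 1))).exists
  have hT0 : (0:ℝ) ≤ (T:ℝ) := by positivity
  -- convergence on Ioc 0 T by dominated convergence
  have hIoc : Tendsto (fun n => ∫ z in Set.Ioc (0:ℝ) T, w (empF v n z)) atTop
      (nhds (∫ z in Set.Ioc (0:ℝ) T, w (G z))) := by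
    apply tendsto_integral_of_dominated_convergence (fun _ => (1:ℝ))
      (fun n => (hgn_meas n).aestronglyMeasurable.restrict)
    · apply (integrableOn_const_iff).mpr
      right
      rw [Real.volume_Ioc]
      exact ENNReal.ofReal_lt_top
    · intro n
      apply Eventually.of_forall
      intro z
      rw [Real.norm_eq_abs, abs_of_nonneg (hwnn _ (hmemF n z))]
      exact hwub _ (hmemF n z)
    · exact ae_restrict_of_ae hae
  have hIocev := Metric.tendsto_atTop.mp hIoc (ε/4) (by linarith)
  obtain ⟨N1, hN1⟩ := hIocev
  -- eventual tail bound for empirical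
  have htme : ∀ᶠ n in atTop,
      L * ((∑ i ∈ Finset.range n, max (v i - T) 0) / n) < ε/8 := by
    have : Tendsto (fun n => L * ((∑ i ∈ Finset.range n, max (v i - T) 0) / n))
        atTop (nhds (L * E T)) := (hT T).const_mul L
    exact this.eventually_lt_const hT1
  obtain ⟨N2, hN2⟩ := eventually_atTop.mp htme
  refine ⟨max N1 N2, fun n hn => ?_⟩
  have hn1 := hN1 n (le_trans (le_max_left _ _) hn)
  have hn2 := hN2 n (le_trans (le_max_right _ _) hn)
  -- split the integrals
  have hdisj : Disjoint (Set.Ioc (0:ℝ) T) (Set.Ioi (T:ℝ)) := by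
    apply Set.disjoint_left.mpr
    intro z hz1 hz2
    simp only [Set.mem_Ioc] at hz1
    simp only [Set.mem_Ioi] at hz2
    linarith [hz1.2]
  have hunion : Set.Ioc (0:ℝ) T ∪ Set.Ioi (T:ℝ) = Set.Ioi (0:ℝ) :=
    Set.Ioc_union_Ioi_eq_Ioi hT0
  have hsplit_n : ∫ z in Set.Ioi (0:ℝ), w (empF v n z)
      = (∫ z in Set.Ioc (0:ℝ) T, w (empF v n z)) + ∫ z in Set.Ioi (T:ℝ), w (empF v n z) := by
    rw [← hunion]
    exact setIntegral_union hdisj measurableSet_Ioi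
      (((hgn_intOn n 0)).mono_set (by rw [← hunion]; exact Set.subset_union_left))
      (hgn_intOn n T)
  have hsplit_g : ∫ z in Set.Ioi (0:ℝ), w (G z)
      = (∫ z in Set.Ioc (0:ℝ) T, w (G z)) + ∫ z in Set.Ioi (T:ℝ), w (G z) := by
    rw [← hunion]
    exact setIntegral_union hdisj measurableSet_Ioi
      (hg_intOn.mono_set (by rw [← hunion]; exact Set.subset_union_left))
      (hg_intOn.mono_set (by rw [← hunion]; exact Set.subset_union_right))
  -- tail bounds
  have htail_n : 0 ≤ (∫ z in Set.Ioi (T:ℝ), w (empF v n z)) ∧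
      (∫ z in Set.Ioi (T:ℝ), w (empF v n z)) < ε/8 := by
    constructor
    · apply setIntegral_nonneg measurableSet_Ioi
      intro z _
      exact hwnn _ (hmemF n z)
    · have hb : (∫ z in Set.Ioi (T:ℝ), w (empF v n z))
          ≤ ∫ z in Set.Ioi (T:ℝ), L * empF v n z := by
        apply setIntegral_mono_on (hgn_intOn n T) ((empF_integrableOn v n).const_mul L)
          measurableSet_Ioi
        intro z _
        exact hwle _ (hmemF n z)
      have heq : (∫ z in Set.Ioi (T:ℝ), L * empF v n z)
          = L * ((∑ i ∈ Finset.range n, max (v i - T) 0) / n) := by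
        rw [integral_const_mul, empF_integral_tail]
      rw [heq] at hb
      exact lt_of_le_of_lt hb hn2
  have htail_g : 0 ≤ (∫ z in Set.Ioi (T:ℝ), w (G z)) ∧
      (∫ z in Set.Ioi (T:ℝ), w (G z)) ≤ ε/4 := by
    constructor
    · apply setIntegral_nonneg measurableSet_Ioi
      intro z _
      exact hwnn _ (hmemG z)
    · have hb : (∫ z in Set.Ioi (T:ℝ), w (G z)) ≤ ∫ z in Set.Ioi (T:ℝ), L * G z := by
        apply setIntegral_mono_on
          (hg_intOn.mono_set (by rw [← hunion]; exact Set.subset_union_right))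
          ((hGint.mono_set (by rw [← hunion]; exact Set.subset_union_right)).const_mul L)
          measurableSet_Ioi
        intro z _
        exact hwle _ (hmemG z)
      have heq : (∫ z in Set.Ioi (T:ℝ), L * G z) = L * ∫ z in Set.Ioi (T:ℝ), G z :=
        integral_const_mul L _
      rw [heq] at hb
      calc (∫ z in Set.Ioi (T:ℝ), w (G z)) ≤ L * ∫ z in Set.Ioi (T:ℝ), G z := hb
        _ ≤ L * (ε/(4*L)) := by
            apply mul_le_mul_of_nonneg_left (le_of_lt hT2) (le_of_lt hL)
        _ = ε/4 := by field_simp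
  -- conclude
  rw [Real.dist_eq, hsplit_n, hsplit_g]
  rw [Real.dist_eq] at hn1
  have : (∫ z in Set.Ioc (0:ℝ) T, w (empF v n z)) + (∫ z in Set.Ioi (T:ℝ), w (empF v n z))
      - ((∫ z in Set.Ioc (0:ℝ) T, w (G z)) + ∫ z in Set.Ioi (T:ℝ), w (G z))
      = ((∫ z in Set.Ioc (0:ℝ) T, w (empF v n z)) - ∫ z in Set.Ioc (0:ℝ) T, w (G z))
        + ((∫ z in Set.Ioi (T:ℝ), w (empF v n z)) - ∫ z in Set.Ioi (T:ℝ), w (G z)) := by ring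
  rw [this]
  apply lt_of_le_of_lt (abs_add_le _ _)
  have h3 : |(∫ z in Set.Ioi (T:ℝ), w (empF v n z)) - ∫ z in Set.Ioi (T:ℝ), w (G z)|
      ≤ ε/8 + ε/4 := by
    rw [abs_sub_le_iff]
    constructor <;> linarith [htail_n.1, htail_n.2, htail_g.1, htail_g.2]
  linarith

section SLLN

variable {Ω : Type*} [MeasurableSpace Ω] (μ : Measure Ω) [IsProbabilityMeasure μ]
  (X : Ω → ℝ) (Xs : ℕ → Ω → ℝ)

lemma slln_comp (hXsmeas : ∀ i, Measurable (Xs i))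
    (hindep : ProbabilityTheory.iIndepFun Xs μ)
    (hident : ∀ i, ProbabilityTheory.IdentDistrib (Xs i) X μ μ)
    (f : ℝ → ℝ) (hf : Measurable f) (hfint : Integrable (fun ω => f (X ω)) μ) :
    ∀ᵐ ω ∂μ, Tendsto (fun n : ℕ => (∑ i ∈ Finset.range n, f (Xs i ω)) / n) atTop
      (nhds (∫ ω, f (X ω) ∂μ)) := by
  have hZident : ∀ i, IdentDistrib (fun ω => f (Xs i ω)) (fun ω => f (X ω)) μ μ :=
    fun i => (hident i).comp hf
  have h0 : Integrable (fun ω => f (Xs 0 ω)) μ := (hZident 0).integrable_iff.mpr hfint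
  have hpair : Pairwise (Function.onFun (fun g h => ProbabilityTheory.IndepFun g h μ)
      (fun i ω => f (Xs i ω))) := by
    intro i j hij
    exact (hindep.comp (fun _ => f) (fun _ => hf)).indepFun hij
  have hid2 : ∀ i, IdentDistrib (fun ω => f (Xs i ω)) (fun ω => f (Xs 0 ω)) μ μ :=
    fun i => (hZident i).trans (hZident 0).symm
  have hsl := ProbabilityTheory.strong_law_ae_real (fun i ω => f (Xs i ω)) h0 hpair hid2
  filter_upwards [hsl] with ω hω
  rwa [show (μ[fun ω => f (Xs 0 ω)]) = ∫ ω, f (X ω) ∂μ from (hZident 0).integral_eq] at hω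

end SLLN

section Gprops

variable {Ω : Type*} [MeasurableSpace Ω] (μ : Measure Ω) [IsProbabilityMeasure μ]
  (X : Ω → ℝ) (u : ℝ → ℝ)

/-- the tail function `G` -/
noncomputable def tailG : ℝ → ℝ := fun z => (μ {ω' | z < u (X ω')}).toReal

lemma tailG_anti : Antitone (tailG μ X u) := by
  intro z1 z2 h
  apply ENNReal.toReal_mono (measure_ne_top μ _)
  apply measure_mono
  intro ω hω
  exact lt_of_le_of_lt h hω

lemma tailG_nonneg (z : ℝ) : 0 ≤ tailG μ X u z := ENNReal.toReal_nonneg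

lemma tailG_le_one (z : ℝ) : tailG μ X u z ≤ 1 := by
  unfold tailG
  calc (μ {ω' | z < u (X ω')}).toReal ≤ (μ Set.univ).toReal :=
      ENNReal.toReal_mono (measure_ne_top μ _) (measure_mono (Set.subset_univ _))
    _ = 1 := by simp

lemma tailG_integrableOn (hXmeas : Measurable X) (hu : Measurable u)
    (hunn : ∀ r, 0 ≤ u r) (huint : Integrable (fun ω => u (X ω)) μ) :
    IntegrableOn (tailG μ X u) (Set.Ioi 0) := by
  have hmeas : Measurable (tailG μ X u) := (tailG_anti μ X u).measurable
  constructor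
  · exact hmeas.aestronglyMeasurable.restrict
  · rw [HasFiniteIntegral]
    have key : ∀ z ∈ Set.Ioi (0:ℝ), ‖tailG μ X u z‖ₑ = μ {ω' | z < u (X ω')} := by
      intro z _
      simp only [tailG]
      rw [Real.enorm_eq_ofReal ENNReal.toReal_nonneg,
        ENNReal.ofReal_toReal (measure_ne_top μ _)]
    rw [setLIntegral_congr_fun measurableSet_Ioi key]
    rw [← lintegral_eq_lintegral_meas_lt μ (Eventually.of_forall fun ω => hunn (X ω))
      (hu.comp hXmeas).aemeasurable]
    have := huint.hasFiniteIntegral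
    rw [HasFiniteIntegral] at this
    apply lt_of_le_of_lt _ this
    apply lintegral_mono
    intro ω
    simp only
    rw [Real.enorm_eq_ofReal_abs]
    exact ENNReal.ofReal_le_ofReal (le_abs_self _)

lemma tailG_tail_tendsto (hXmeas : Measurable X) (hu : Measurable u)
    (hunn : ∀ r, 0 ≤ u r) (huint : Integrable (fun ω => u (X ω)) μ) :
    Tendsto (fun T : ℕ => ∫ z in Set.Ioi (T:ℝ), tailG μ X u z) atTop (nhds 0) := by
  have hGint := tailG_integrableOn μ X u hXmeas hu hunn huint
  have heq : ∀ T : ℕ, ∫ z in Set.Ioi (T:ℝ), tailG μ X u z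
      = ∫ z in Set.Ioi (0:ℝ), Set.indicator (Set.Ioi (T:ℝ)) (tailG μ X u) z := by
    intro T
    rw [integral_indicator measurableSet_Ioi, Measure.restrict_restrict measurableSet_Ioi,
      Set.Ioi_inter_Ioi, max_eq_left (by positivity : (0:ℝ) ≤ (T:ℝ))]
  simp_rw [heq]
  have htend : Tendsto (fun T : ℕ => ∫ z in Set.Ioi (0:ℝ),
      Set.indicator (Set.Ioi (T:ℝ)) (tailG μ X u) z) atTop
      (nhds (∫ z in Set.Ioi (0:ℝ), (0:ℝ))) := by
    apply tendsto_integral_of_dominated_convergence (fun z => tailG μ X u z)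
    · intro T
      exact ((tailG_anti μ X u).measurable.indicator
        measurableSet_Ioi).aestronglyMeasurable.restrict
    · exact hGint
    · intro T
      apply Eventually.of_forall
      intro z
      rw [Set.indicator_apply]
      split
      · rw [Real.norm_eq_abs, abs_of_nonneg (tailG_nonneg μ X u z)]
      · simpa using tailG_nonneg μ X u z
    · apply Eventually.of_forall
      intro z
      apply Tendsto.congr' _ tendsto_const_nhds
      rw [EventuallyEq]
      filter_upwards [eventually_gt_atTop (Nat.ceil (max z 0))] with T hT
      rw [Set.indicator_apply, if_neg]
      simp only [Set.mem_Ioi, not_lt]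
      have : (max z 0) ≤ (Nat.ceil (max z 0) : ℝ) := Nat.le_ceil _
      have h2 : (Nat.ceil (max z 0) : ℝ) < (T:ℝ) := by exact_mod_cast hT
      calc z ≤ max z 0 := le_max_left _ _
        _ ≤ (T:ℝ) := by linarith
  simpa using htend

lemma truncE_tendsto (hXmeas : Measurable X) (hu : Measurable u)
    (hunn : ∀ r, 0 ≤ u r) (huint : Integrable (fun ω => u (X ω)) μ) :
    Tendsto (fun T : ℕ => ∫ ω, max (u (X ω) - T) 0 ∂μ) atTop (nhds 0) := by
  have htend : Tendsto (fun T : ℕ => ∫ ω, max (u (X ω) - T) 0 ∂μ) atTop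
      (nhds (∫ (_ : Ω), (0:ℝ) ∂μ)) := by
    apply tendsto_integral_of_dominated_convergence (fun ω => u (X ω))
    · intro T
      exact (((hu.comp hXmeas).sub_const _).max measurable_const).aestronglyMeasurable
    · exact huint
    · intro T
      apply Eventually.of_forall
      intro ω
      rw [Real.norm_eq_abs, abs_of_nonneg (le_max_right _ _)]
      have : u (X ω) - T ≤ u (X ω) := by
        have : (0:ℝ) ≤ T := by positivity
        linarith
      exact max_le this (hunn _)
    · apply Eventually.of_forall
      intro ω
      apply Tendsto.congr' _ tendsto_const_nhds
      rw [EventuallyEq]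
      filter_upwards [eventually_ge_atTop (Nat.ceil (u (X ω)))] with T hT
      have : u (X ω) ≤ (T:ℝ) := by
        calc u (X ω) ≤ (Nat.ceil (u (X ω)) : ℝ) := Nat.le_ceil _
          _ ≤ (T:ℝ) := by exact_mod_cast hT
      rw [max_eq_right (by linarith)]
  simpa using htend

end Gprops

lemma eventually_le_eps_mul (a : ℕ → ℝ) (ha : ∀ i, 0 ≤ a i) (m : ℝ)
    (h : Tendsto (fun n : ℕ => (∑ i ∈ Finset.range n, a i) / n) atTop (nhds m)) :
    ∀ ε > (0:ℝ), ∀ᶠ n : ℕ in atTop, ∀ i < n, a i ≤ ε * n := by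
  set S : ℕ → ℝ := fun n => ∑ i ∈ Finset.range n, a i with hS
  have h1 : Tendsto (fun n : ℕ => a n / n) atTop (nhds 0) := by
    have t1 : Tendsto (fun n : ℕ => S (n+1) / ((n:ℝ)+1)) atTop (nhds m) := by
      have hc := h.comp (tendsto_add_atTop_nat 1)
      apply hc.congr
      intro n
      simp only [Function.comp]
      push_cast
      rfl
    have t2 : Tendsto (fun n : ℕ => ((n:ℝ)+1) / n) atTop (nhds 1) := by
      have base : Tendsto (fun n : ℕ => 1 + 1 / (n:ℝ)) atTop (nhds 1) := by
        have := tendsto_const_nhds (x := (1:ℝ)) (f := atTop (α := ℕ))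
        have h2 := this.add tendsto_one_div_atTop_nhds_zero_nat
        simpa using h2
      apply base.congr'
      filter_upwards [eventually_ge_atTop 1] with n hn
      have hn0 : (n:ℝ) ≠ 0 := by
        have : (1:ℝ) ≤ (n:ℝ) := by exact_mod_cast hn
        linarith
      field_simp
    have t3 : Tendsto (fun n : ℕ => (S (n+1) / (n+1)) * (((n:ℝ)+1) / n) - S n / n)
        atTop (nhds 0) := by
      have := (t1.mul t2).sub h
      simpa using this
    apply t3.congr'
    filter_upwards [eventually_ge_atTop 1] with n hn
    have hn0 : (n:ℝ) ≠ 0 := by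
      have : (1:ℝ) ≤ (n:ℝ) := by exact_mod_cast hn
      linarith
    have hn1 : ((n:ℝ)+1) ≠ 0 := by positivity
    have hSn : S (n+1) = S n + a n := by
      rw [hS]; simp [Finset.sum_range_succ]
    rw [hSn]
    field_simp
    ring
  intro ε hε
  obtain ⟨N, hN⟩ := eventually_atTop.mp (h1.eventually_lt_const (by linarith : (0:ℝ) < ε/2))
  set N' := max N 1 with hN'
  set C := S N' with hC
  have hCnn : 0 ≤ C := Finset.sum_nonneg fun i _ => ha i
  have hCle : ∀ i < N', a i ≤ C := by
    intro i hi
    exact Finset.single_le_sum (fun j _ => ha j) (Finset.mem_range.mpr hi)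
  have hev : ∀ᶠ n : ℕ in atTop, 2 * C / ε ≤ (n:ℝ) :=
    tendsto_natCast_atTop_atTop.eventually_ge_atTop (2 * C / ε)
  filter_upwards [hev, eventually_ge_atTop N'] with n hn1 hn2
  intro i hi
  rcases lt_or_ge i N' with hiN | hiN
  · have h2 : C ≤ (ε/2) * n := by
      rw [div_le_iff₀ hε] at hn1
      nlinarith
    have h3 : (ε/2) * n ≤ ε * n := by
      have : (0:ℝ) ≤ (n:ℝ) := by positivity
      nlinarith
    linarith [hCle i hiN]
  · have hiN1 : 1 ≤ i := le_trans (le_max_right N 1) hiN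
    have hi0 : (0:ℝ) < (i:ℝ) := by exact_mod_cast hiN1
    have := hN i (le_trans (le_max_left N 1) hiN)
    rw [div_lt_iff₀ hi0] at this
    have hin : (i:ℝ) ≤ (n:ℝ) := by exact_mod_cast le_of_lt hi
    nlinarith


lemma card_filter_cast (n : ℕ) (v : ℕ → ℝ) (z : ℝ) :
    ((((Finset.range n).filter fun j => z < v j).card : ℝ))
      = ∑ i ∈ Finset.range n, if z < v i then (1:ℝ) else 0 := by
  rw [Finset.card_filter]
  push_cast
  apply Finset.sum_congr rfl
  intro i _
  split <;> simp

section Side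

variable {Ω : Type*} [MeasurableSpace Ω] (μ : Measure Ω) [IsProbabilityMeasure μ]
  (X : Ω → ℝ) (Xs : ℕ → Ω → ℝ)

/-- a.e. hypotheses needed by the master lemma, packaged -/
lemma side_ae (hXmeas : Measurable X) (hXsmeas : ∀ i, Measurable (Xs i))
    (hindep : ProbabilityTheory.iIndepFun Xs μ)
    (hident : ∀ i, ProbabilityTheory.IdentDistrib (Xs i) X μ μ)
    (u : ℝ → ℝ) (hu : Measurable u) (hunn : ∀ r, 0 ≤ u r)
    (huint : Integrable (fun ω => u (X ω)) μ) :
    ∀ᵐ ω ∂μ,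
      (∀ q : ℚ, Tendsto (fun n => empF (fun i => u (Xs i ω)) n (q:ℝ)) atTop
        (nhds (tailG μ X u q))) ∧
      (∀ T : ℕ, Tendsto (fun n => (∑ i ∈ Finset.range n, max (u (Xs i ω) - T) 0) / n)
        atTop (nhds (∫ ω', max (u (X ω') - T) 0 ∂μ))) := by
  rw [eventually_and]
  constructor
  · rw [ae_all_iff]
    intro q
    have hfmeas : Measurable (fun r => if (q:ℝ) < u r then (1:ℝ) else 0) := by
      apply Measurable.ite (measurableSet_lt measurable_const hu) measurable_const
        measurable_const
    have hfint : Integrable (fun ω => if (q:ℝ) < u (X ω) then (1:ℝ) else 0) μ := by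
      apply Integrable.mono' (integrable_const (1:ℝ))
        (hfmeas.comp hXmeas).aestronglyMeasurable
      apply Eventually.of_forall
      intro ω
      simp only [Function.comp_apply]
      rw [Real.norm_eq_abs]
      split <;> simp
    have hsl := slln_comp μ X Xs hXsmeas hindep hident _ hfmeas hfint
    filter_upwards [hsl] with ω hω
    have heq : ∀ n : ℕ, (∑ i ∈ Finset.range n, if (q:ℝ) < u (Xs i ω) then (1:ℝ) else 0) / n
        = empF (fun i => u (Xs i ω)) n (q:ℝ) := by
      intro n
      rw [empF, card_filter_cast]
    have hval : (∫ ω', if (q:ℝ) < u (X ω') then (1:ℝ) else 0 ∂μ) = tailG μ X u q := by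
      have hind : (fun ω' => if (q:ℝ) < u (X ω') then (1:ℝ) else 0)
          = Set.indicator {ω' | (q:ℝ) < u (X ω')} (fun _ => (1:ℝ)) := by
        funext ω'
        rw [Set.indicator_apply]
        rfl
      have hA : MeasurableSet {ω' | (q:ℝ) < u (X ω')} :=
        measurableSet_lt measurable_const (hu.comp hXmeas)
      rw [hind, integral_indicator_const (1:ℝ) hA]
      rw [smul_eq_mul, mul_one]
      rfl
    rw [← hval]
    exact hω.congr heq
  · rw [ae_all_iff]
    intro T
    have hfmeas : Measurable (fun r => max (u r - (T:ℝ)) 0) :=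
      (hu.sub_const _).max measurable_const
    have hfint : Integrable (fun ω => max (u (X ω) - (T:ℝ)) 0) μ := by
      apply Integrable.mono' huint (hfmeas.comp hXmeas).aestronglyMeasurable
      apply Eventually.of_forall
      intro ω
      rw [Real.norm_eq_abs, abs_of_nonneg (le_max_right _ _)]
      have hT0 : (0:ℝ) ≤ (T:ℝ) := by positivity
      exact max_le (by linarith [hunn (X ω)]) (hunn (X ω))
    have hsl := slln_comp μ X Xs hXsmeas hindep hident
      (fun r => max (u r - (T:ℝ)) 0) hfmeas hfint
    filter_upwards [hsl] with ω hω
    exact hω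

/-- the P side : monotone utility -/
lemma side_mono (hXmeas : Measurable X) (hXsmeas : ∀ i, Measurable (Xs i))
    (hindep : ProbabilityTheory.iIndepFun Xs μ)
    (hident : ∀ i, ProbabilityTheory.IdentDistrib (Xs i) X μ μ)
    (u : ℝ → ℝ) (hu : Measurable u) (humono : Monotone u) (hunn : ∀ r, 0 ≤ u r)
    (huint : Integrable (fun ω => u (X ω)) μ)
    (w : ℝ → ℝ)
    (hw_range : ∀ x ∈ Set.Icc (0:ℝ) 1, w x ∈ Set.Icc (0:ℝ) 1)
    (hw_mono : MonotoneOn w (Set.Icc (0:ℝ) 1))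
    (hw0 : w 0 = 0)
    (L : ℝ) (hL : 0 < L)
    (hw_lip : ∀ x ∈ Set.Icc (0:ℝ) 1, ∀ y ∈ Set.Icc (0:ℝ) 1, |w x - w y| ≤ L * |x - y|) :
    ∀ᵐ ω ∂μ, Tendsto (fun n : ℕ => ∑ i ∈ Finset.Icc 1 (n - 1),
        u (orderStat n (fun j => Xs j ω) i) * (w (((n : ℝ) - i) / n) - w (((n : ℝ) - i - 1) / n)))
      atTop (nhds (∫ z in Set.Ioi (0:ℝ), w (tailG μ X u z))) := by
  filter_upwards [side_ae μ X Xs hXmeas hXsmeas hindep hident u hu hunn huint] with ω hω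
  obtain ⟨hq, hT⟩ := hω
  set x : ℕ → ℝ := fun j => Xs j ω with hx
  set v : ℕ → ℝ := fun i => u (Xs i ω) with hv
  -- master convergence for the integrals
  have hmaster : Tendsto (fun n => ∫ z in Set.Ioi (0:ℝ), w (empF v n z)) atTop
      (nhds (∫ z in Set.Ioi (0:ℝ), w (tailG μ X u z))) := by
    apply master_tendsto v (tailG μ X u) (tailG_anti μ X u) (tailG_nonneg μ X u)
      (tailG_le_one μ X u) (tailG_integrableOn μ X u hXmeas hu hunn huint)
      (fun T => ∫ ω', max (u (X ω') - T) 0 ∂μ)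
      (truncE_tendsto μ X u hXmeas hu hunn huint)
      (tailG_tail_tendsto μ X u hXmeas hu hunn huint)
      hq hT w hw0 hw_mono (fun a ha => (hw_range a ha).2) hL hw_lip
  -- mean convergence for the max lemma
  have hmean : Tendsto (fun n : ℕ => (∑ i ∈ Finset.range n, v i) / n) atTop
      (nhds (∫ ω', max (u (X ω') - (0:ℕ)) 0 ∂μ)) := by
    apply (hT 0).congr
    intro n
    congr 1
    apply Finset.sum_congr rfl
    intro i _
    rw [hv]
    simp only [Nat.cast_zero, sub_zero]
    rw [max_eq_left (hunn _)]
  have hmax := eventually_le_eps_mul v (fun i => hunn _) _ hmean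
  -- identify the integral with the order-statistics sum, with error control
  have hdiff : Tendsto (fun n : ℕ => (∑ i ∈ Finset.Icc 1 (n - 1),
      u (orderStat n x i) * (w (((n : ℝ) - i) / n) - w (((n : ℝ) - i - 1) / n)))
      - ∫ z in Set.Ioi (0:ℝ), w (empF v n z)) atTop (nhds 0) := by
    rw [NormedAddCommGroup.tendsto_nhds_zero]
    intro ε hε
    have hε' : 0 < ε / (2 * L) := by positivity
    filter_upwards [hmax (ε / (2 * L)) hε', eventually_ge_atTop 1] with n hmaxn hn1
    -- the exact value of the integral
    set b : ℕ → ℝ := fun i => u (orderStat n x i) with hb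
    have hbnn : ∀ i ∈ Finset.Icc 1 n, 0 ≤ b i := fun i _ => hunn _
    have hcnt : ∀ z : ℝ, 0 < z → ∀ k ∈ Finset.Icc 1 n,
        (k ≤ ((Finset.range n).filter fun j => z < v j).card ↔ z < b (n + 1 - k)) := by
      intro z hz k hk
      simp only [Finset.mem_Icc] at hk
      exact count_iff_orderStat_mono n x humono z hk.1 hk.2
    have hint := integral_w_count hn1 v b hbnn hcnt hw0
    have hintF : (∫ z in Set.Ioi (0:ℝ), w (empF v n z))
        = ∑ i ∈ Finset.Icc 1 n, b i * (w (((n:ℝ) - i + 1)/n) - w (((n:ℝ) - i)/n)) := by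
      rw [← hint]
      rfl
    -- reindex the estimator sum
    have hreidx : (∑ i ∈ Finset.Icc 1 (n - 1),
        u (orderStat n x i) * (w (((n : ℝ) - i) / n) - w (((n : ℝ) - i - 1) / n)))
        = ∑ k ∈ Finset.Icc 2 n, b (k-1) * (w (((n:ℝ) - k + 1)/n) - w (((n:ℝ) - k)/n)) := by
      apply Finset.sum_nbij' (fun i => i + 1) (fun k => k - 1)
      · intro i hi; simp only [Finset.mem_Icc] at hi ⊢; omega
      · intro k hk; simp only [Finset.mem_Icc] at hk ⊢; omega
      · intro i hi; omega
      · intro k hk; simp only [Finset.mem_Icc] at hk; omega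
      · intro i hi
        simp only [Finset.mem_Icc] at hi
        have h1 : i + 1 - 1 = i := by omega
        rw [h1]
        have h2 : ((i + 1 : ℕ) : ℝ) = (i : ℝ) + 1 := by push_cast; ring
        rw [h2]
        have e1 : (n:ℝ) - ((i:ℝ)+1) + 1 = (n:ℝ) - i := by ring
        have e2 : (n:ℝ) - ((i:ℝ)+1) = (n:ℝ) - i - 1 := by ring
        rw [e1, e2]
    -- error bound
    have hΔ : ∀ i ∈ Finset.Icc 1 n, 0 ≤ (w (((n:ℝ) - i + 1)/n) - w (((n:ℝ) - i)/n)) ∧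
        (w (((n:ℝ) - i + 1)/n) - w (((n:ℝ) - i)/n)) ≤ L / n := by
      intro i hi
      simp only [Finset.mem_Icc] at hi
      have hn0 : (0:ℝ) < n := by exact_mod_cast hn1
      have hi1 : (1:ℝ) ≤ (i:ℝ) := by exact_mod_cast hi.1
      have hin : (i:ℝ) ≤ (n:ℝ) := by exact_mod_cast hi.2
      have hm1 : ((n:ℝ) - i)/n ∈ Set.Icc (0:ℝ) 1 := by
        constructor
        · apply div_nonneg (by linarith) (by linarith)
        · rw [div_le_one hn0]; linarith
      have hm2 : ((n:ℝ) - i + 1)/n ∈ Set.Icc (0:ℝ) 1 := by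
        constructor
        · apply div_nonneg (by linarith) (by linarith)
        · rw [div_le_one hn0]; linarith
      constructor
      · have := hw_mono hm1 hm2 ((div_le_div_iff_of_pos_right hn0).mpr (by linarith))
        linarith
      · have hlip := hw_lip _ hm2 _ hm1
        have habs : |((n:ℝ) - i + 1)/n - ((n:ℝ) - i)/n| = 1/n := by
          rw [div_sub_div_same]
          have : (n:ℝ) - i + 1 - ((n:ℝ) - i) = 1 := by ring
          rw [this]
          rw [abs_of_nonneg (by positivity)]
        rw [habs] at hlip
        calc w (((n:ℝ) - i + 1)/n) - w (((n:ℝ) - i)/n)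
            ≤ |w (((n:ℝ) - i + 1)/n) - w (((n:ℝ) - i)/n)| := le_abs_self _
          _ ≤ L * (1/n) := hlip
          _ = L / n := by ring
    have hbmono : ∀ i j, 1 ≤ i → i ≤ j → j ≤ n → b i ≤ b j := by
      intro i j h1 h2 h3
      exact humono (orderStat_mono n x h1 h2 h3)
    have hc : ∀ i ∈ Finset.Icc 2 n, b (i-1) ≤ b (i-1) ∧ b (i-1) ≤ b i := by
      intro i hi
      simp only [Finset.mem_Icc] at hi
      exact ⟨le_rfl, hbmono (i-1) i (by omega) (by omega) hi.2⟩
    have herr := sum_shift_err hn1 b (fun i => b (i-1))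
      (fun i => w (((n:ℝ) - i + 1)/n) - w (((n:ℝ) - i)/n)) hbmono (hunn _) hc hΔ
    -- bound b n
    have hbn : b n ≤ (ε / (2 * L)) * n := by
      obtain ⟨j, hj⟩ := orderStat_mem n x hn1 le_rfl
      have hbv : b n = v j := by
        show u (orderStat n x n) = u (Xs j ω)
        rw [← hj]
      rw [hbv]
      exact hmaxn j j.isLt
    rw [Real.norm_eq_abs, hintF, hreidx]
    have hn0 : (0:ℝ) < n := by exact_mod_cast hn1
    have habs2 : |∑ k ∈ Finset.Icc 2 n, b (k-1) * (w (((n:ℝ) - k + 1)/n) - w (((n:ℝ) - k)/n))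
        - ∑ i ∈ Finset.Icc 1 n, b i * (w (((n:ℝ) - i + 1)/n) - w (((n:ℝ) - i)/n))|
        ≤ (L / n) * b n := by
      rw [abs_sub_comm]
      exact herr
    calc |∑ k ∈ Finset.Icc 2 n, b (k-1) * (w (((n:ℝ) - k + 1)/n) - w (((n:ℝ) - k)/n))
        - ∑ i ∈ Finset.Icc 1 n, b i * (w (((n:ℝ) - i + 1)/n) - w (((n:ℝ) - i)/n))|
        ≤ (L / n) * b n := habs2
      _ ≤ (L / n) * ((ε / (2 * L)) * n) := by
          apply mul_le_mul_of_nonneg_left hbn (by positivity)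
      _ = ε / 2 := by field_simp
      _ < ε := by linarith
  have := hdiff.add hmaster
  rw [zero_add] at this
  apply this.congr
  intro n
  ring

/-- the M side : antitone utility -/
lemma side_anti (hXmeas : Measurable X) (hXsmeas : ∀ i, Measurable (Xs i))
    (hindep : ProbabilityTheory.iIndepFun Xs μ)
    (hident : ∀ i, ProbabilityTheory.IdentDistrib (Xs i) X μ μ)
    (u : ℝ → ℝ) (hu : Measurable u) (huanti : Antitone u) (hunn : ∀ r, 0 ≤ u r)
    (huint : Integrable (fun ω => u (X ω)) μ)
    (w : ℝ → ℝ)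
    (hw_range : ∀ x ∈ Set.Icc (0:ℝ) 1, w x ∈ Set.Icc (0:ℝ) 1)
    (hw_mono : MonotoneOn w (Set.Icc (0:ℝ) 1))
    (hw0 : w 0 = 0)
    (L : ℝ) (hL : 0 < L)
    (hw_lip : ∀ x ∈ Set.Icc (0:ℝ) 1, ∀ y ∈ Set.Icc (0:ℝ) 1, |w x - w y| ≤ L * |x - y|) :
    ∀ᵐ ω ∂μ, Tendsto (fun n : ℕ => ∑ i ∈ Finset.Icc 1 (n - 1),
        u (orderStat n (fun j => Xs j ω) i) * (w ((i : ℝ) / n) - w (((i : ℝ) - 1) / n)))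
      atTop (nhds (∫ z in Set.Ioi (0:ℝ), w (tailG μ X u z))) := by
  filter_upwards [side_ae μ X Xs hXmeas hXsmeas hindep hident u hu hunn huint] with ω hω
  obtain ⟨hq, hT⟩ := hω
  set x : ℕ → ℝ := fun j => Xs j ω with hx
  set v : ℕ → ℝ := fun i => u (Xs i ω) with hv
  have hmaster : Tendsto (fun n => ∫ z in Set.Ioi (0:ℝ), w (empF v n z)) atTop
      (nhds (∫ z in Set.Ioi (0:ℝ), w (tailG μ X u z))) := by
    apply master_tendsto v (tailG μ X u) (tailG_anti μ X u) (tailG_nonneg μ X u)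
      (tailG_le_one μ X u) (tailG_integrableOn μ X u hXmeas hu hunn huint)
      (fun T => ∫ ω', max (u (X ω') - T) 0 ∂μ)
      (truncE_tendsto μ X u hXmeas hu hunn huint)
      (tailG_tail_tendsto μ X u hXmeas hu hunn huint)
      hq hT w hw0 hw_mono (fun a ha => (hw_range a ha).2) hL hw_lip
  have hmean : Tendsto (fun n : ℕ => (∑ i ∈ Finset.range n, v i) / n) atTop
      (nhds (∫ ω', max (u (X ω') - (0:ℕ)) 0 ∂μ)) := by
    apply (hT 0).congr
    intro n
    congr 1
    apply Finset.sum_congr rfl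
    intro i _
    rw [hv]
    simp only [Nat.cast_zero, sub_zero]
    rw [max_eq_left (hunn _)]
  have hmax := eventually_le_eps_mul v (fun i => hunn _) _ hmean
  have hdiff : Tendsto (fun n : ℕ => (∑ i ∈ Finset.Icc 1 (n - 1),
      u (orderStat n x i) * (w ((i : ℝ) / n) - w (((i : ℝ) - 1) / n)))
      - ∫ z in Set.Ioi (0:ℝ), w (empF v n z)) atTop (nhds 0) := by
    rw [NormedAddCommGroup.tendsto_nhds_zero]
    intro ε hε
    have hε' : 0 < ε / (2 * L) := by positivity
    filter_upwards [hmax (ε / (2 * L)) hε', eventually_ge_atTop 1] with n hmaxn hn1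
    set b : ℕ → ℝ := fun i => u (orderStat n x (n + 1 - i)) with hb
    have hbnn : ∀ i ∈ Finset.Icc 1 n, 0 ≤ b i := fun i _ => hunn _
    have hcnt : ∀ z : ℝ, 0 < z → ∀ k ∈ Finset.Icc 1 n,
        (k ≤ ((Finset.range n).filter fun j => z < v j).card ↔ z < b (n + 1 - k)) := by
      intro z hz k hk
      simp only [Finset.mem_Icc] at hk
      have hkey := count_iff_orderStat_anti n x huanti z hk.1 hk.2
      have hidx : n + 1 - (n + 1 - k) = k := by omega
      show _ ↔ z < u (orderStat n x (n + 1 - (n + 1 - k)))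
      rw [hidx]
      exact hkey
    have hint := integral_w_count hn1 v b hbnn hcnt hw0
    have hintF : (∫ z in Set.Ioi (0:ℝ), w (empF v n z))
        = ∑ i ∈ Finset.Icc 1 n, b i * (w (((n:ℝ) - i + 1)/n) - w (((n:ℝ) - i)/n)) := by
      rw [← hint]
      rfl
    have hreidx : (∑ i ∈ Finset.Icc 1 (n - 1),
        u (orderStat n x i) * (w ((i : ℝ) / n) - w (((i : ℝ) - 1) / n)))
        = ∑ k ∈ Finset.Icc 2 n, b k * (w (((n:ℝ) - k + 1)/n) - w (((n:ℝ) - k)/n)) := by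
      apply Finset.sum_nbij' (fun i => n + 1 - i) (fun k => n + 1 - k)
      · intro i hi; simp only [Finset.mem_Icc] at hi ⊢; omega
      · intro k hk; simp only [Finset.mem_Icc] at hk ⊢; omega
      · intro i hi; simp only [Finset.mem_Icc] at hi; omega
      · intro k hk; simp only [Finset.mem_Icc] at hk; omega
      · intro i hi
        simp only [Finset.mem_Icc] at hi
        have hidx2 : n + 1 - (n + 1 - i) = i := by omega
        have hbi : b (n + 1 - i) = u (orderStat n x i) := by
          show u (orderStat n x (n + 1 - (n + 1 - i))) = u (orderStat n x i)
          rw [hidx2]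
        rw [hbi]
        have hc1 : ((n + 1 - i : ℕ) : ℝ) = (n:ℝ) + 1 - i := by
          push_cast [Nat.cast_sub (by omega : i ≤ n + 1)]; ring
        rw [hc1]
        have e1 : (n:ℝ) - ((n:ℝ) + 1 - i) + 1 = (i:ℝ) := by ring
        have e2 : (n:ℝ) - ((n:ℝ) + 1 - i) = (i:ℝ) - 1 := by ring
        rw [e1, e2]
    have hΔ : ∀ i ∈ Finset.Icc 1 n, 0 ≤ (w (((n:ℝ) - i + 1)/n) - w (((n:ℝ) - i)/n)) ∧
        (w (((n:ℝ) - i + 1)/n) - w (((n:ℝ) - i)/n)) ≤ L / n := by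
      intro i hi
      simp only [Finset.mem_Icc] at hi
      have hn0 : (0:ℝ) < n := by exact_mod_cast hn1
      have hi1 : (1:ℝ) ≤ (i:ℝ) := by exact_mod_cast hi.1
      have hin : (i:ℝ) ≤ (n:ℝ) := by exact_mod_cast hi.2
      have hm1 : ((n:ℝ) - i)/n ∈ Set.Icc (0:ℝ) 1 := by
        constructor
        · apply div_nonneg (by linarith) (by linarith)
        · rw [div_le_one hn0]; linarith
      have hm2 : ((n:ℝ) - i + 1)/n ∈ Set.Icc (0:ℝ) 1 := by
        constructor
        · apply div_nonneg (by linarith) (by linarith)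
        · rw [div_le_one hn0]; linarith
      constructor
      · have := hw_mono hm1 hm2 ((div_le_div_iff_of_pos_right hn0).mpr (by linarith))
        linarith
      · have hlip := hw_lip _ hm2 _ hm1
        have habs : |((n:ℝ) - i + 1)/n - ((n:ℝ) - i)/n| = 1/n := by
          rw [div_sub_div_same]
          have : (n:ℝ) - i + 1 - ((n:ℝ) - i) = 1 := by ring
          rw [this]
          rw [abs_of_nonneg (by positivity)]
        rw [habs] at hlip
        calc w (((n:ℝ) - i + 1)/n) - w (((n:ℝ) - i)/n)
            ≤ |w (((n:ℝ) - i + 1)/n) - w (((n:ℝ) - i)/n)| := le_abs_self _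
          _ ≤ L * (1/n) := hlip
          _ = L / n := by ring
    have hbmono : ∀ i j, 1 ≤ i → i ≤ j → j ≤ n → b i ≤ b j := by
      intro i j h1 h2 h3
      apply huanti
      exact orderStat_mono n x (by omega) (by omega) (by omega)
    have hc : ∀ i ∈ Finset.Icc 2 n, b (i-1) ≤ b i ∧ b i ≤ b i := by
      intro i hi
      simp only [Finset.mem_Icc] at hi
      exact ⟨hbmono (i-1) i (by omega) (by omega) hi.2, le_rfl⟩
    have herr := sum_shift_err hn1 b (fun i => b i)
      (fun i => w (((n:ℝ) - i + 1)/n) - w (((n:ℝ) - i)/n)) hbmono (hunn _) hc hΔ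
    have hbn : b n ≤ (ε / (2 * L)) * n := by
      obtain ⟨j, hj⟩ := orderStat_mem n x le_rfl hn1
      have hbv : b n = v j := by
        show u (orderStat n x (n + 1 - n)) = u (Xs j ω)
        have h1 : n + 1 - n = 1 := by omega
        rw [h1, ← hj]
      rw [hbv]
      exact hmaxn j j.isLt
    rw [Real.norm_eq_abs, hintF, hreidx]
    have hn0 : (0:ℝ) < n := by exact_mod_cast hn1
    have habs2 : |∑ k ∈ Finset.Icc 2 n, b k * (w (((n:ℝ) - k + 1)/n) - w (((n:ℝ) - k)/n))
        - ∑ i ∈ Finset.Icc 1 n, b i * (w (((n:ℝ) - i + 1)/n) - w (((n:ℝ) - i)/n))|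
        ≤ (L / n) * b n := by
      rw [abs_sub_comm]
      exact herr
    calc |∑ k ∈ Finset.Icc 2 n, b k * (w (((n:ℝ) - k + 1)/n) - w (((n:ℝ) - k)/n))
        - ∑ i ∈ Finset.Icc 1 n, b i * (w (((n:ℝ) - i + 1)/n) - w (((n:ℝ) - i)/n))|
        ≤ (L / n) * b n := habs2
      _ ≤ (L / n) * ((ε / (2 * L)) * n) := by
          apply mul_le_mul_of_nonneg_left hbn (by positivity)
      _ = ε / 2 := by field_simp
      _ < ε := by linarith
  have := hdiff.add hmaster
  rw [zero_add] at this
  apply this.congr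
  intro n
  ring

end Side


/-- The order-statistics based CPT-value estimator
`C̄ₙ = Σ_{i=1}^{n-1} u⁺(X_[i]) (w⁺((n-i)/n) - w⁺((n-i-1)/n))
     - Σ_{i=1}^{n-1} u⁻(X_[i]) (w⁻(i/n) - w⁻((i-1)/n))`. -/
noncomputable def cptEstimator (uP uM wP wM : ℝ → ℝ) (n : ℕ) (x : ℕ → ℝ) : ℝ :=
  (∑ i ∈ Finset.Icc 1 (n - 1),
      uP (orderStat n x i) * (wP (((n : ℝ) - i) / n) - wP (((n : ℝ) - i - 1) / n)))
  - ∑ i ∈ Finset.Icc 1 (n - 1),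
      uM (orderStat n x i) * (wM ((i : ℝ) / n) - wM (((i : ℝ) - 1) / n))

/-- almost sure convergence of the order-statistics CPT-value estimator
for Lipschitz continuous weights, assuming `u⁺(X)` and `u⁻(X)` have finite first
moments. -/
theorem cptEstimator_tendsto_ae_of_lipschitz
    {Ω : Type*} [MeasurableSpace Ω] (μ : Measure Ω) [IsProbabilityMeasure μ]
    (X : Ω → ℝ) (hXmeas : Measurable X)
    (Xs : ℕ → Ω → ℝ) (hXsmeas : ∀ i, Measurable (Xs i))
    (hindep : ProbabilityTheory.iIndepFun Xs μ)
    (hident : ∀ i, ProbabilityTheory.IdentDistrib (Xs i) X μ μ)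
    (uP uM : ℝ → ℝ) (huPcont : Continuous uP) (huMcont : Continuous uM)
    (huPnn : ∀ x, 0 ≤ uP x) (huMnn : ∀ x, 0 ≤ uM x)
    (huPmono : Monotone uP) (huManti : Antitone uM)
    (huPint : Integrable (fun ω => uP (X ω)) μ)
    (huMint : Integrable (fun ω => uM (X ω)) μ)
    (wP wM : ℝ → ℝ)
    (hwP_range : ∀ x ∈ Set.Icc (0:ℝ) 1, wP x ∈ Set.Icc (0:ℝ) 1)
    (hwM_range : ∀ x ∈ Set.Icc (0:ℝ) 1, wM x ∈ Set.Icc (0:ℝ) 1)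
    (hwP_mono : MonotoneOn wP (Set.Icc (0:ℝ) 1))
    (hwM_mono : MonotoneOn wM (Set.Icc (0:ℝ) 1))
    (hwP0 : wP 0 = 0) (hwP1 : wP 1 = 1) (hwM0 : wM 0 = 0) (hwM1 : wM 1 = 1)
    (L : ℝ) (hL : 0 < L)
    (hwP_lip : ∀ x ∈ Set.Icc (0:ℝ) 1, ∀ y ∈ Set.Icc (0:ℝ) 1,
      |wP x - wP y| ≤ L * |x - y|)
    (hwM_lip : ∀ x ∈ Set.Icc (0:ℝ) 1, ∀ y ∈ Set.Icc (0:ℝ) 1,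
      |wM x - wM y| ≤ L * |x - y|) :
    ∀ᵐ ω ∂μ, Tendsto (fun n : ℕ => cptEstimator uP uM wP wM n (fun j => Xs j ω))
      atTop (nhds
        ((∫ z in Set.Ioi (0:ℝ), wP ((μ {ω' | uP (X ω') > z}).toReal))
          - ∫ z in Set.Ioi (0:ℝ), wM ((μ {ω' | uM (X ω') > z}).toReal))) := by
  have hP := side_mono μ X Xs hXmeas hXsmeas hindep hident uP huPcont.measurable huPmono
    huPnn huPint wP hwP_range hwP_mono hwP0 L hL hwP_lip
  have hM := side_anti μ X Xs hXmeas hXsmeas hindep hident uM huMcont.measurable huManti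
    huMnn huMint wM hwM_range hwM_mono hwM0 L hL hwM_lip
  filter_upwards [hP, hM] with ω h1 h2
  exact h1.sub h2
end

section
/- Let f : ℝ^d → ℝ be three times continuously differentiable with all third-order partial derivatives bounded in norm by B on ℝ^d. Let Δ = (Δ¹, …, Δ^d) be a random vector whose coordinates are independent Rademacher random variables (taking values +1 and −1 with probability 1/2 each). Then for every θ ∈ ℝ^d, every δ > 0 and every coordinate i ∈ {1, …, d}, | E[ ( f(θ + δΔ) − f(θ − δΔ) ) / (2δ Δⁱ) ] − ∂f/∂θⁱ (θ) | ≤ C δ², where C is a constant depending only on d and B. In particular, the simultaneous-perturbation estimate of the i-th partial derivative has bias O(δ²). -/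
open MeasureTheory

lemma third_order_bound {E : Type*} [NormedAddCommGroup E] [NormedSpace ℝ E]
    {f : E → ℝ} {B : ℝ} (hf : ContDiff ℝ 3 f)
    (hbd : ∀ x, ‖iteratedFDeriv ℝ 3 f x‖ ≤ B) (θ v : E) :
    |f (θ + v) - f (θ - v) - 2 * fderiv ℝ f θ v| ≤ 2 * B * ‖v‖ ^ 3 := by
  have hB : 0 ≤ B := le_trans (norm_nonneg _) (hbd θ)
  set F := fderiv ℝ f with hFdef
  set G := fderiv ℝ F with hGdef
  have hF : ContDiff ℝ 2 F := hf.fderiv_right (by norm_num)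
  have hG : ContDiff ℝ 1 G := hF.fderiv_right (by norm_num)
  have hFdiff : Differentiable ℝ F := hF.differentiable (by norm_num)
  have hGdiff : Differentiable ℝ G := hG.differentiable (by norm_num)
  have hfdiff : Differentiable ℝ f := hf.differentiable (by norm_num)
  have hGlip : ∀ x y : E, ‖G y - G x‖ ≤ B * ‖y - x‖ := by
    letI : NormedAddCommGroup (E →L[ℝ] E →L[ℝ] ℝ) := inferInstance
    letI : NormedSpace ℝ (E →L[ℝ] E →L[ℝ] ℝ) := inferInstance
    have hGbd : ∀ x, ‖fderiv ℝ G x‖ ≤ B := by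
      intro x
      have h0 : ‖fderiv ℝ G x‖ = ‖iteratedFDeriv ℝ 0 (fderiv ℝ G) x‖ :=
        (norm_iteratedFDeriv_zero).symm
      rw [h0, norm_iteratedFDeriv_fderiv, norm_iteratedFDeriv_fderiv,
        norm_iteratedFDeriv_fderiv]
      exact hbd x
    exact fun x y =>
      convex_univ.norm_image_sub_le_of_norm_fderiv_le
        (fun z _ => hGdiff z) (fun z _ => hGbd z) trivial trivial
  -- key second order estimate
  have key : ∀ w : E, ‖w‖ ≤ ‖v‖ → ‖F (θ + w) - F θ - G θ w‖ ≤ B * ‖v‖ * ‖v‖ := by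
    intro w hw
    have h := (convex_closedBall θ ‖v‖).norm_image_sub_le_of_norm_hasFDerivWithin_le'
      (f := F) (f' := G) (φ := G θ) (C := B * ‖v‖) (x := θ) (y := θ + w)
      (fun x _ => (hFdiff x).hasFDerivAt.hasFDerivWithinAt)
      (fun x hx => by
        calc ‖G x - G θ‖ ≤ B * ‖x - θ‖ := hGlip θ x
          _ ≤ B * ‖v‖ := by
            have : ‖x - θ‖ ≤ ‖v‖ := by
              simpa [dist_eq_norm] using Metric.mem_closedBall.1 hx
            exact mul_le_mul_of_nonneg_left this hB)
      (Metric.mem_closedBall_self (norm_nonneg v))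
      (by simpa [Metric.mem_closedBall, dist_eq_norm, add_sub_cancel_left] using hw)
    have h2 : ‖F (θ + w) - F θ - G θ w‖ ≤ B * ‖v‖ * ‖w‖ := by
      simpa using h
    exact h2.trans (mul_le_mul_of_nonneg_left hw (by positivity))
  -- derivative of φ
  set φ : E → ℝ := fun w => f (θ + w) - f (θ - w) - 2 * F θ w with hφdef
  have hφ' : ∀ w : E, HasFDerivAt φ (F (θ + w) + F (θ - w) - (2:ℝ) • F θ) w := by
    intro w
    have h1 : HasFDerivAt (fun w : E => f (θ + w)) (F (θ + w)) w := by
      have := ((hfdiff (θ + w)).hasFDerivAt).comp w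
        ((hasFDerivAt_id w).const_add θ)
      exact this
    have h2 : HasFDerivAt (fun w : E => f (θ - w)) (-F (θ - w)) w := by
      have hin : HasFDerivAt (fun w : E => θ - w)
          (-(ContinuousLinearMap.id ℝ E)) w := by
        simpa [sub_eq_add_neg] using ((hasFDerivAt_id w).neg.const_add θ)
      have := ((hfdiff (θ - w)).hasFDerivAt).comp w hin
      exact this.congr_fderiv (by ext; simp [hFdef])
    have h3 : HasFDerivAt (fun w : E => 2 * F θ w) ((2:ℝ) • F θ) w := by
      simpa using ((F θ).hasFDerivAt (x := w)).const_mul (2:ℝ)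
    have := (h1.sub h2).sub h3
    exact this.congr_fderiv (by rw [sub_neg_eq_add])
  have hbound : ∀ w ∈ Metric.closedBall (0:E) ‖v‖,
      ‖F (θ + w) + F (θ - w) - (2:ℝ) • F θ‖ ≤ 2 * (B * ‖v‖ * ‖v‖) := by
    intro w hw
    have hwle : ‖w‖ ≤ ‖v‖ := by simpa using Metric.mem_closedBall.1 hw
    have hwle' : ‖-w‖ ≤ ‖v‖ := by simpa using hwle
    have k1 := key w hwle
    have k2 := key (-w) hwle'
    have hsplit : F (θ + w) + F (θ - w) - (2:ℝ) • F θ =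
        (F (θ + w) - F θ - G θ w) + (F (θ + -w) - F θ - G θ (-w)) := by
      rw [map_neg, two_smul, sub_eq_add_neg θ w]
      abel
    rw [hsplit, two_mul]
    calc ‖_ + _‖ ≤ ‖F (θ + w) - F θ - G θ w‖ + ‖F (θ + -w) - F θ - G θ (-w)‖ :=
          norm_add_le _ _
      _ ≤ B * ‖v‖ * ‖v‖ + B * ‖v‖ * ‖v‖ := add_le_add k1 k2
  have hmain := (convex_closedBall (0:E) ‖v‖).norm_image_sub_le_of_norm_hasFDerivWithin_le
    (f := φ) (f' := fun w => F (θ + w) + F (θ - w) - (2:ℝ) • F θ)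
    (C := 2 * (B * ‖v‖ * ‖v‖)) (x := (0:E)) (y := v)
    (fun w _ => (hφ' w).hasFDerivWithinAt) hbound
    (Metric.mem_closedBall_self (norm_nonneg v))
    (by simp [Metric.mem_closedBall])
  have hφ0 : φ 0 = 0 := by simp [hφdef]
  have : ‖φ v‖ ≤ 2 * (B * ‖v‖ * ‖v‖) * ‖v‖ := by
    simpa [hφ0] using hmain
  calc |f (θ + v) - f (θ - v) - 2 * fderiv ℝ f θ v| = ‖φ v‖ := by
        rw [Real.norm_eq_abs]
    _ ≤ 2 * (B * ‖v‖ * ‖v‖) * ‖v‖ := this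
    _ = 2 * B * ‖v‖ ^ 3 := by ring

/-- for a `C³` function `f : ℝ^d → ℝ` with third derivatives bounded
by `B`, the SPSA finite-difference estimator with i.i.d. Rademacher perturbations
has bias at most `C δ²` in each coordinate, where `C` depends only on `d` and `B`. -/
theorem spsa_gradient_estimate_bias (d : ℕ) (B : ℝ) (hB : 0 ≤ B) :
    ∃ C : ℝ, ∀ (Ω : Type) (_ : MeasurableSpace Ω) (μ : Measure Ω),
      IsProbabilityMeasure μ →
      ∀ f : (Fin d → ℝ) → ℝ, ContDiff ℝ 3 f →
      (∀ θ : Fin d → ℝ, ‖iteratedFDeriv ℝ 3 f θ‖ ≤ B) →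
      ∀ Δ : Ω → Fin d → ℝ, (∀ i, Measurable fun ω => Δ ω i) →
      ProbabilityTheory.iIndepFun
        (fun i ω => Δ ω i) μ →
      (∀ i, μ {ω | Δ ω i = 1} = 1 / 2 ∧ μ {ω | Δ ω i = -1} = 1 / 2) →
      ∀ (θ : Fin d → ℝ) (δ : ℝ), 0 < δ → ∀ i : Fin d,
        |(∫ ω, (f (θ + δ • Δ ω) - f (θ - δ • Δ ω)) / (2 * δ * Δ ω i) ∂μ)
            - fderiv ℝ f θ (Pi.single i 1)|
          ≤ C * δ ^ 2 := by
  refine ⟨B, ?_⟩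
  intro Ω mΩ μ hμ f hf hbd Δ hmeas hindep hrad θ δ hδ i
  -- a.e. all coordinates are ±1
  have hS : ∀ᵐ ω ∂μ, ∀ j, Δ ω j = 1 ∨ Δ ω j = -1 := by
    rw [ae_all_iff]
    intro j
    have hAmeas : MeasurableSet {ω | Δ ω j = 1} :=
      (hmeas j) (measurableSet_singleton 1)
    have hBmeas : MeasurableSet {ω | Δ ω j = -1} :=
      (hmeas j) (measurableSet_singleton (-1))
    have hdisj : Disjoint {ω | Δ ω j = 1} {ω | Δ ω j = -1} := by
      rw [Set.disjoint_left]
      rintro ω h1 h2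
      simp only [Set.mem_setOf_eq] at h1 h2
      rw [h1] at h2; norm_num at h2
    have hunion : μ ({ω | Δ ω j = 1} ∪ {ω | Δ ω j = -1}) = 1 := by
      rw [measure_union hdisj hBmeas, (hrad j).1, (hrad j).2]
      rw [ENNReal.div_add_div_same]
      rw [one_add_one_eq_two]
      exact ENNReal.div_self two_ne_zero ENNReal.ofNat_ne_top
    have : μ ({ω | Δ ω j = 1} ∪ {ω | Δ ω j = -1})ᶜ = 0 := by
      rw [measure_compl (hAmeas.union hBmeas) (measure_ne_top μ _), hunion,
        measure_univ, tsub_self]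
    refine measure_mono_null ?_ this
    intro ω hω
    simp only [Set.mem_compl_iff, Set.mem_union, Set.mem_setOf_eq] at *
    tauto
  have hδne : δ ≠ 0 := ne_of_gt hδ
  have hAmeas : ∀ j, MeasurableSet {ω | Δ ω j = 1} :=
    fun j => (hmeas j) (measurableSet_singleton 1)
  have hBmeas : ∀ j, MeasurableSet {ω | Δ ω j = -1} :=
    fun j => (hmeas j) (measurableSet_singleton (-1))
  set Df := fderiv ℝ f θ with hDf
  set L : Ω → ℝ := fun ω => Df (Δ ω) * Δ ω i with hL
  set R : Ω → ℝ := fun ω =>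
    (f (θ + δ • Δ ω) - f (θ - δ • Δ ω) - 2 * Df (δ • Δ ω)) * Δ ω i / (2 * δ) with hR
  -- pointwise identity
  have h_eq : ∀ᵐ ω ∂μ, (f (θ + δ • Δ ω) - f (θ - δ • Δ ω)) / (2 * δ * Δ ω i)
      = L ω + R ω := by
    filter_upwards [hS] with ω hω
    have hDfs : Df (δ • Δ ω) = δ * Df (Δ ω) := by simp
    simp only [hL, hR, hDfs]
    rcases hω i with h | h <;> rw [h] <;> field_simp <;> ring
  -- measurability
  have mΔ : Measurable Δ := measurable_pi_lambda _ hmeas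
  have mP : Measurable fun ω => θ + δ • Δ ω :=
    (mΔ.const_smul δ).const_add θ
  have mM : Measurable fun ω => θ - δ • Δ ω := by
    simpa [sub_eq_add_neg] using ((mΔ.const_smul δ).neg.const_add θ)
  have mfP : Measurable fun ω => f (θ + δ • Δ ω) := hf.continuous.measurable.comp mP
  have mfM : Measurable fun ω => f (θ - δ • Δ ω) := hf.continuous.measurable.comp mM
  have mDfΔ : Measurable fun ω => Df (Δ ω) := Df.continuous.measurable.comp mΔ
  have mDfδ : Measurable fun ω => Df (δ • Δ ω) :=
    Df.continuous.measurable.comp (mΔ.const_smul δ)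
  have mL : Measurable L := mDfΔ.mul (hmeas i)
  have mR : Measurable R :=
    (((mfP.sub mfM).sub ((measurable_const (a := (2:ℝ))).mul mDfδ)).mul (hmeas i)).div_const _
  -- a.e. bounds
  have hnorm : ∀ᵐ ω ∂μ, ‖Δ ω‖ ≤ 1 := by
    filter_upwards [hS] with ω hω
    rw [pi_norm_le_iff_of_nonneg zero_le_one]
    intro j
    rcases hω j with h | h <;> simp [h]
  have habs : ∀ᵐ ω ∂μ, |Δ ω i| = 1 := by
    filter_upwards [hS] with ω hω
    rcases hω i with h | h <;> simp [h]
  have hLb : ∀ᵐ ω ∂μ, ‖L ω‖ ≤ ‖Df‖ := by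
    filter_upwards [hnorm, habs] with ω h1 h2
    simp only [hL, Real.norm_eq_abs, abs_mul, h2, mul_one]
    calc |Df (Δ ω)| ≤ ‖Df‖ * ‖Δ ω‖ := Df.le_opNorm _
      _ ≤ ‖Df‖ * 1 := by gcongr
      _ = ‖Df‖ := mul_one _
  have hLint : Integrable L μ :=
    (integrable_const ‖Df‖).mono' mL.aestronglyMeasurable hLb
  have hRb : ∀ᵐ ω ∂μ, ‖R ω‖ ≤ B * δ ^ 2 := by
    filter_upwards [hnorm, habs] with ω h1 h2
    have key := third_order_bound hf hbd θ (δ • Δ ω)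
    have hv : ‖δ • Δ ω‖ ≤ δ := by
      rw [norm_smul, Real.norm_eq_abs, abs_of_pos hδ]
      calc δ * ‖Δ ω‖ ≤ δ * 1 := by gcongr
        _ = δ := mul_one δ
    have h3 : |f (θ + δ • Δ ω) - f (θ - δ • Δ ω) - 2 * Df (δ • Δ ω)| ≤ 2 * B * δ ^ 3 := by
      refine key.trans ?_
      gcongr
    simp only [hR, Real.norm_eq_abs, abs_div, abs_mul, h2, mul_one]
    rw [abs_two, abs_of_pos hδ, div_le_iff₀ (by positivity)]
    calc |f (θ + δ • Δ ω) - f (θ - δ • Δ ω) - 2 * Df (δ • Δ ω)| ≤ 2 * B * δ ^ 3 := h3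
      _ = B * δ ^ 2 * (2 * δ) := by ring
  have hRint : Integrable R μ :=
    (integrable_const (B * δ ^ 2)).mono' mR.aestronglyMeasurable hRb
  -- split the integral
  have hint : (∫ ω, (f (θ + δ • Δ ω) - f (θ - δ • Δ ω)) / (2 * δ * Δ ω i) ∂μ)
      = (∫ ω, L ω ∂μ) + ∫ ω, R ω ∂μ := by
    rw [integral_congr_ae h_eq, integral_add hLint hRint]
  -- expectation of pairwise products
  have hterm_int : ∀ j, Integrable (fun ω => Δ ω j * Δ ω i) μ := by
    intro j
    refine (integrable_const (1:ℝ)).mono'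
      (((hmeas j).mul (hmeas i)).aestronglyMeasurable) ?_
    filter_upwards [hS] with ω hω
    rw [Real.norm_eq_abs, abs_mul]
    rcases hω j with h | h <;> rcases hω i with h' | h' <;> simp [h, h']
  have hEj : ∀ j, (∫ ω, Δ ω j ∂μ) = 0 := by
    intro j
    have hcongr : (fun ω => Δ ω j) =ᵐ[μ]
        fun ω => Set.indicator {ω | Δ ω j = 1} (fun _ => (1:ℝ)) ω
          + Set.indicator {ω | Δ ω j = -1} (fun _ => (-1:ℝ)) ω := by
      filter_upwards [hS] with ω hω
      rcases hω j with h | h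
      · rw [Set.indicator_of_mem (show ω ∈ {ω | Δ ω j = 1} from h),
          Set.indicator_of_notMem
            (show ω ∉ {ω | Δ ω j = -1} by simp only [Set.mem_setOf_eq, h]; norm_num)]
        rw [h]; norm_num
      · rw [Set.indicator_of_notMem
            (show ω ∉ {ω | Δ ω j = 1} by simp only [Set.mem_setOf_eq, h]; norm_num),
          Set.indicator_of_mem (show ω ∈ {ω | Δ ω j = -1} from h)]
        rw [h]; norm_num
    rw [integral_congr_ae hcongr,
      integral_add ((integrable_const (1:ℝ)).indicator (hAmeas j))
        ((integrable_const (-1:ℝ)).indicator (hBmeas j)),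
      integral_indicator_const _ (hAmeas j), integral_indicator_const _ (hBmeas j),
      measureReal_def, measureReal_def, (hrad j).1, (hrad j).2]
    norm_num [ENNReal.toReal_div]
  have hIij : ∀ j, j ≠ i → (∫ ω, Δ ω j * Δ ω i ∂μ) = 0 := by
    intro j hj
    have hind := ProbabilityTheory.IndepFun.integral_fun_mul_eq_mul_integral (hindep.indepFun hj)
      (hmeas j).aestronglyMeasurable (hmeas i).aestronglyMeasurable
    have : (∫ ω, Δ ω j * Δ ω i ∂μ)
        = (∫ ω, Δ ω j ∂μ) * ∫ ω, Δ ω i ∂μ := hind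
    rw [this, hEj j, zero_mul]
  have hIii : (∫ ω, Δ ω i * Δ ω i ∂μ) = 1 := by
    have hcongr : (fun ω => Δ ω i * Δ ω i) =ᵐ[μ] fun _ => (1:ℝ) := by
      filter_upwards [hS] with ω hω
      rcases hω i with h | h <;> rw [h] <;> norm_num
    rw [integral_congr_ae hcongr, integral_const]
    simp
  -- compute the integral of L
  have hLdecomp : L = fun ω => ∑ j, Df (Pi.single j 1) * (Δ ω j * Δ ω i) := by
    funext ω
    have hx : Δ ω = ∑ j, Δ ω j • (Pi.single j 1 : Fin d → ℝ) := by
      funext k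
      simp [Finset.sum_apply, Pi.single_apply]
    have hsum : Df (Δ ω) = ∑ j, Δ ω j * Df (Pi.single j 1) := by
      conv_lhs => rw [hx]
      rw [map_sum]
      simp [_root_.map_smul, smul_eq_mul]
    simp only [hL, hsum, Finset.sum_mul]
    exact Finset.sum_congr rfl fun j _ => by ring
  have hLval : (∫ ω, L ω ∂μ) = Df (Pi.single i 1) := by
    rw [hLdecomp]
    rw [integral_finset_sum _ fun j _ => (hterm_int j).const_mul _]
    rw [Finset.sum_eq_single i]
    · rw [integral_const_mul, hIii, mul_one]
    · intro j _ hj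
      rw [integral_const_mul, hIij j hj, mul_zero]
    · intro h
      exact absurd (Finset.mem_univ i) h
  -- conclude
  rw [hint, hLval, add_sub_cancel_left]
  have := norm_integral_le_of_norm_le_const (μ := μ) hRb
  simpa [Real.norm_eq_abs, measure_univ] using this
end

section
/- Let f : ℝ^d → ℝ be three times continuously differentiable with all third-order partial derivatives bounded in norm by B on ℝ^d. Let Δ = (Δ¹, …, Δ^d) and Δ̂ = (Δ̂¹, …, Δ̂^d) be random vectors whose 2d coordinates are all mutually independent Rademacher random variables. Then for every θ ∈ ℝ^d, every δ > 0 and every coordinate i ∈ {1, …, d}, | E[ ( f(θ + δ(Δ + Δ̂)) − f(θ − δ(Δ + Δ̂)) ) / (2δ Δⁱ) ] − ∂f/∂θⁱ (θ) | ≤ C δ², where C is a constant depending only on d and B. -/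
open MeasureTheory

open Set


lemma aux_deriv_pow_bound {g g' : ℝ → ℝ} {c : ℝ} (n : ℕ)
    (hg : ∀ t, HasDerivAt g (g' t) t) (h0 : g 0 = 0)
    (hb : ∀ t ∈ Set.Icc (0:ℝ) 1, |g' t| ≤ c * t ^ n) :
    ∀ t ∈ Set.Icc (0:ℝ) 1, |g t| ≤ c / (n + 1) * t ^ (n + 1) := by
  intro t ht
  have hcont : ContinuousOn g (Icc 0 1) :=
    fun x _ => (hg x).continuousAt.continuousWithinAt
  have hB : ∀ x : ℝ, HasDerivAt (fun s => c / (n + 1) * s ^ (n + 1)) (c * x ^ n) x := by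
    intro x
    have h := (hasDerivAt_pow (n + 1) x).const_mul (c / (n + 1))
    refine h.congr_deriv ?_
    have hn : ((n : ℝ) + 1) ≠ 0 := by positivity
    rw [Nat.add_sub_cancel]
    push_cast
    field_simp
  have := image_norm_le_of_norm_deriv_right_le_deriv_boundary hcont
    (fun x _ => (hg x).hasDerivWithinAt)
    (by simp [h0]) hB
    (fun x hx => by
      simpa [Real.norm_eq_abs] using hb x ⟨hx.1, le_of_lt hx.2⟩)
  simpa [Real.norm_eq_abs] using this ht

set_option maxHeartbeats 1000000 in
lemma taylor3_bound {d : ℕ} {B : ℝ} {f : (Fin d → ℝ) → ℝ}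
    (hf : ContDiff ℝ 3 f) (hB3 : ∀ x, ‖iteratedFDeriv ℝ 3 f x‖ ≤ B)
    (θ u : Fin d → ℝ) :
    |f (θ + u) - f (θ - u) - 2 * fderiv ℝ f θ u| ≤ B / 3 * ‖u‖ ^ 3 := by
  set f1 := fderiv ℝ f with hf1def
  set f2 := fderiv ℝ f1 with hf2def
  set f3 := fderiv ℝ f2 with hf3def
  have hdf : Differentiable ℝ f := hf.differentiable (by norm_num)
  have hcf1 : ContDiff ℝ 2 f1 := hf.fderiv_right (by norm_num)
  have hdf1 : Differentiable ℝ f1 := hcf1.differentiable (by norm_num)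
  have hcf2 : ContDiff ℝ 1 f2 := hcf1.fderiv_right (by norm_num)
  have hdf2 : Differentiable ℝ f2 := hcf2.differentiable (by norm_num)
  set D2 := iteratedFDeriv ℝ 2 f with hD2def
  set D3 := fderiv ℝ D2 with hD3def
  have hdD2 : Differentiable ℝ D2 := hf.differentiable_iteratedFDeriv (by norm_num)
  have hf2D : ∀ y, f2 y u u = D2 y (fun _ => u) := by
    intro y
    rw [hD2def, iteratedFDeriv_two_apply]
  -- curves
  have hγp : ∀ t : ℝ, HasDerivAt (fun t : ℝ => θ + t • u) u t := by
    intro t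
    simpa using ((hasDerivAt_id t).smul_const u).const_add θ
  have hγm : ∀ t : ℝ, HasDerivAt (fun t : ℝ => θ - t • u) (-u) t := by
    intro t
    simpa using (hasDerivAt_const t θ).fun_sub ((hasDerivAt_id t).smul_const u)
  set ψ : ℝ → ℝ := fun t => f (θ + t • u) - f (θ - t • u) - 2 * t * f1 θ u with hψdef
  set ψ1 : ℝ → ℝ := fun t => f1 (θ + t • u) u + f1 (θ - t • u) u - 2 * f1 θ u with hψ1def
  set ψ2 : ℝ → ℝ := fun t => f2 (θ + t • u) u u - f2 (θ - t • u) u u with hψ2def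
  set ψ3 : ℝ → ℝ := fun t => D3 (θ + t • u) u (fun _ => u) + D3 (θ - t • u) u (fun _ => u) with hψ3def
  have hψd : ∀ t, HasDerivAt ψ (ψ1 t) t := by
    intro t
    have hA : HasDerivAt (fun t : ℝ => f (θ + t • u)) (f1 (θ + t • u) u) t :=
      (hdf _).hasFDerivAt.comp_hasDerivAt t (hγp t)
    have hBm : HasDerivAt (fun t : ℝ => f (θ - t • u)) (f1 (θ - t • u) (-u)) t :=
      (hdf _).hasFDerivAt.comp_hasDerivAt t (hγm t)
    have hC : HasDerivAt (fun t : ℝ => 2 * t * f1 θ u) (2 * f1 θ u) t := by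
      simpa using ((hasDerivAt_id t).const_mul 2).mul_const (f1 θ u)
    have := (hA.fun_sub hBm).fun_sub hC
    simpa [hψ1def, map_neg] using this
  have hψ1d : ∀ t, HasDerivAt ψ1 (ψ2 t) t := by
    intro t
    have hA : HasDerivAt (fun t : ℝ => f1 (θ + t • u)) (f2 (θ + t • u) u) t :=
      (hdf1 _).hasFDerivAt.comp_hasDerivAt t (hγp t)
    have hBm : HasDerivAt (fun t : ℝ => f1 (θ - t • u)) (f2 (θ - t • u) (-u)) t :=
      (hdf1 _).hasFDerivAt.comp_hasDerivAt t (hγm t)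
    have hA' := hA.clm_apply (hasDerivAt_const t u)
    have hB' := hBm.clm_apply (hasDerivAt_const t u)
    have := (hA'.fun_add hB').fun_sub (hasDerivAt_const t (2 * f1 θ u))
    exact this.congr_deriv (by rw [hψ2def]; simp [map_neg, sub_eq_add_neg])
  have hψ2d : ∀ t, HasDerivAt ψ2 (ψ3 t) t := by
    intro t
    have hA : HasDerivAt (fun t : ℝ => D2 (θ + t • u)) (D3 (θ + t • u) u) t :=
      (hdD2 _).hasFDerivAt.comp_hasDerivAt t (hγp t)
    have hBm : HasDerivAt (fun t : ℝ => D2 (θ - t • u)) (D3 (θ - t • u) (-u)) t :=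
      (hdD2 _).hasFDerivAt.comp_hasDerivAt t (hγm t)
    have hA' := (ContinuousMultilinearMap.apply ℝ (fun _ : Fin 2 => Fin d → ℝ) ℝ
      (fun _ => u)).hasFDerivAt.comp_hasDerivAt t hA
    have hB' := (ContinuousMultilinearMap.apply ℝ (fun _ : Fin 2 => Fin d → ℝ) ℝ
      (fun _ => u)).hasFDerivAt.comp_hasDerivAt t hBm
    have hfun : ψ2 = fun t => D2 (θ + t • u) (fun _ => u) - D2 (θ - t • u) (fun _ => u) := by
      funext s
      simp only [hψ2def, hf2D]
    rw [hfun]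
    refine (hA'.fun_sub hB').congr_deriv ?_
    simp [hψ3def, map_neg, sub_eq_add_neg]
  set c : ℝ := 2 * B * ‖u‖ ^ 3 with hcdef
  have hψ3b : ∀ t : ℝ, |ψ3 t| ≤ c := by
    intro t
    have h1 : ∀ x, |D3 x u (fun _ => u)| ≤ B * ‖u‖ ^ 3 := by
      intro x
      have e1 : ‖D3 x u (fun _ => u)‖ ≤ ‖D3 x u‖ * ∏ _j : Fin 2, ‖u‖ := (D3 x u).le_opNorm _
      have e3 : ‖D3 x u‖ ≤ ‖D3 x‖ * ‖u‖ := (D3 x).le_opNorm u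
      have hb : ‖D3 x‖ ≤ B := by
        rw [hD3def, hD2def, norm_fderiv_iteratedFDeriv]
        exact hB3 x
      rw [Real.norm_eq_abs, Fin.prod_const] at e1
      have hu : (0:ℝ) ≤ ‖u‖ := norm_nonneg u
      calc |D3 x u (fun _ => u)| ≤ ‖D3 x u‖ * ‖u‖ ^ 2 := e1
        _ ≤ (‖D3 x‖ * ‖u‖) * ‖u‖ ^ 2 := mul_le_mul_of_nonneg_right e3 (by positivity)
        _ = ‖D3 x‖ * ‖u‖ ^ 3 := by ring
        _ ≤ B * ‖u‖ ^ 3 := mul_le_mul_of_nonneg_right hb (by positivity)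
    calc |ψ3 t| ≤ |D3 (θ + t • u) u (fun _ => u)| + |D3 (θ - t • u) u (fun _ => u)| :=
          abs_add_le _ _
      _ ≤ B * ‖u‖ ^ 3 + B * ‖u‖ ^ 3 := add_le_add (h1 _) (h1 _)
      _ = c := by rw [hcdef]; ring
  have h2 : ∀ t ∈ Icc (0:ℝ) 1, |ψ2 t| ≤ c * t := by
    have := aux_deriv_pow_bound 0 hψ2d (by simp [hψ2def]) (fun t ht => by simpa using hψ3b t)
    intro t ht
    simpa using this t ht
  have h1 : ∀ t ∈ Icc (0:ℝ) 1, |ψ1 t| ≤ c / 2 * t ^ 2 := by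
    have := aux_deriv_pow_bound 1 hψ1d (by simp [hψ1def]; ring) (fun t ht => by simpa using h2 t ht)
    intro t ht
    simpa [one_add_one_eq_two] using this t ht
  have h0 : ∀ t ∈ Icc (0:ℝ) 1, |ψ t| ≤ (c / 2) / 3 * t ^ 3 := by
    have := aux_deriv_pow_bound 2 hψd (by simp [hψdef]) (fun t ht => h1 t ht)
    intro t ht
    have h4 := this t ht
    norm_num at h4
    exact h4
  have := h0 1 (by constructor <;> norm_num)
  have he : ψ 1 = f (θ + u) - f (θ - u) - 2 * fderiv ℝ f θ u := by
    simp [hψdef, hf1def]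
  rw [he] at this
  calc |f (θ + u) - f (θ - u) - 2 * fderiv ℝ f θ u| ≤ (c / 2) / 3 * 1 ^ 3 := this
    _ = B / 3 * ‖u‖ ^ 3 := by rw [hcdef]; ring

open MeasureTheory

lemma rad_ae {Ω : Type} [MeasurableSpace Ω] {μ : Measure Ω} [IsProbabilityMeasure μ]
    {X : Ω → ℝ} (hm : Measurable X)
    (h1 : μ {ω | X ω = 1} = 1 / 2) (h2 : μ {ω | X ω = -1} = 1 / 2) :
    ∀ᵐ ω ∂μ, X ω = 1 ∨ X ω = -1 := by
  have hA : MeasurableSet {ω | X ω = 1} := hm (measurableSet_singleton 1)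
  have hB : MeasurableSet {ω | X ω = -1} := hm (measurableSet_singleton (-1))
  have hd : Disjoint {ω | X ω = 1} {ω | X ω = -1} := by
    rw [Set.disjoint_left]
    rintro ω (ha : X ω = 1) (hb : X ω = -1)
    rw [ha] at hb; norm_num at hb
  have hu : μ ({ω | X ω = 1} ∪ {ω | X ω = -1}) = 1 := by
    rw [measure_union hd hB, h1, h2]
    norm_num
    exact ENNReal.inv_two_add_inv_two
  have hc : μ ({ω | X ω = 1} ∪ {ω | X ω = -1})ᶜ = 0 := by
    rw [measure_compl (hA.union hB) (measure_ne_top _ _), hu, measure_univ]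
    simp
  rw [ae_iff]
  have he : {ω | ¬(X ω = 1 ∨ X ω = -1)} = ({ω | X ω = 1} ∪ {ω | X ω = -1})ᶜ := by
    ext ω; simp [not_or]
  rw [he]; exact hc

lemma rad_integrable {Ω : Type} [MeasurableSpace Ω] {μ : Measure Ω} [IsProbabilityMeasure μ]
    {X : Ω → ℝ} (hm : Measurable X) (hae : ∀ᵐ ω ∂μ, X ω = 1 ∨ X ω = -1) :
    Integrable X μ := by
  apply Integrable.mono' (integrable_const (1:ℝ)) hm.aestronglyMeasurable
  filter_upwards [hae] with ω hω
  rcases hω with h | h <;> rw [Real.norm_eq_abs, h] <;> norm_num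

lemma rad_integral {Ω : Type} [MeasurableSpace Ω] {μ : Measure Ω} [IsProbabilityMeasure μ]
    {X : Ω → ℝ} (hm : Measurable X)
    (h1 : μ {ω | X ω = 1} = 1 / 2) (h2 : μ {ω | X ω = -1} = 1 / 2) :
    ∫ ω, X ω ∂μ = 0 := by
  have hA : MeasurableSet {ω | X ω = 1} := hm (measurableSet_singleton 1)
  have hB : MeasurableSet {ω | X ω = -1} := hm (measurableSet_singleton (-1))
  have hg : X =ᵐ[μ] fun ω => Set.indicator {ω | X ω = 1} (fun _ => (1:ℝ)) ω
      + Set.indicator {ω | X ω = -1} (fun _ => (-1:ℝ)) ω := by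
    filter_upwards [rad_ae hm h1 h2] with ω hω
    rcases hω with h | h
    · have hmem : ω ∈ {ω | X ω = 1} := h
      have hnot : ω ∉ {ω | X ω = -1} := by
        simp only [Set.mem_setOf_eq, h]; norm_num
      rw [Set.indicator_of_mem hmem, Set.indicator_of_notMem hnot, h]; ring
    · have hmem : ω ∈ {ω | X ω = -1} := h
      have hnot : ω ∉ {ω | X ω = 1} := by
        simp only [Set.mem_setOf_eq, h]; norm_num
      rw [Set.indicator_of_mem hmem, Set.indicator_of_notMem hnot, h]; ring
  rw [integral_congr_ae hg, integral_add ((integrable_const (1:ℝ)).indicator hA)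
    ((integrable_const (-1:ℝ)).indicator hB), integral_indicator_const _ hA,
    integral_indicator_const _ hB, measureReal_def, measureReal_def, h1, h2]
  norm_num

lemma est_err {d : ℕ} {B : ℝ} {f : (Fin d → ℝ) → ℝ}
    (hf : ContDiff ℝ 3 f) (hB3 : ∀ x, ‖iteratedFDeriv ℝ 3 f x‖ ≤ B)
    (θ : Fin d → ℝ) {δ : ℝ} (hδ : 0 < δ) (a b : Fin d → ℝ)
    (ha : ∀ j, a j = 1 ∨ a j = -1) (hb : ∀ j, b j = 1 ∨ b j = -1) (i : Fin d) :
    |(f (θ + δ • (a + b)) - f (θ - δ • (a + b))) / (2 * δ * a i)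
      - fderiv ℝ f θ (a + b) * a i| ≤ 4 * B / 3 * δ ^ 2 := by
  set s : Fin d → ℝ := a + b with hs
  have hsn : ‖s‖ ≤ 2 := by
    rw [pi_norm_le_iff_of_nonneg (by norm_num : (0:ℝ) ≤ 2)]
    intro j
    rw [Real.norm_eq_abs, hs, Pi.add_apply]
    rcases ha j with h|h <;> rcases hb j with h'|h' <;> rw [h, h'] <;> norm_num
  have hun : ‖δ • s‖ ≤ 2 * δ := by
    rw [norm_smul, Real.norm_eq_abs, abs_of_pos hδ]
    calc δ * ‖s‖ ≤ δ * 2 := mul_le_mul_of_nonneg_left hsn hδ.le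
      _ = 2 * δ := by ring
  have hBn : 0 ≤ B := le_trans (norm_nonneg _) (hB3 θ)
  have hT := taylor3_bound hf hB3 θ (δ • s)
  have hfd : fderiv ℝ f θ (δ • s) = δ * fderiv ℝ f θ s := by
    rw [_root_.map_smul, smul_eq_mul]
  rw [hfd] at hT
  have hT2 : |f (θ + δ • s) - f (θ - δ • s) - 2 * (δ * fderiv ℝ f θ s)| ≤ 8 * B / 3 * δ ^ 3 := by
    refine hT.trans ?_
    calc B / 3 * ‖δ • s‖ ^ 3 ≤ B / 3 * (2 * δ) ^ 3 := by
          apply mul_le_mul_of_nonneg_left _ (by positivity)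
          exact pow_le_pow_left₀ (norm_nonneg _) hun 3
      _ = 8 * B / 3 * δ ^ 3 := by ring
  set D := f (θ + δ • s) - f (θ - δ • s) with hD
  set L := fderiv ℝ f θ s with hL
  have h2δ : (0:ℝ) < 2 * δ := by positivity
  rcases ha i with h|h
  · rw [h]
    have he : D / (2 * δ * 1) - L * 1 = (D - 2 * (δ * L)) / (2 * δ) := by
      field_simp
    rw [he, abs_div, abs_of_pos h2δ, div_le_iff₀ h2δ]
    calc |D - 2 * (δ * L)| ≤ 8 * B / 3 * δ ^ 3 := hT2
      _ = 4 * B / 3 * δ ^ 2 * (2 * δ) := by ring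
  · rw [h]
    have he : D / (2 * δ * (-1)) - L * (-1) = -((D - 2 * (δ * L)) / (2 * δ)) := by
      field_simp
      ring
    rw [he, abs_neg, abs_div, abs_of_pos h2δ, div_le_iff₀ h2δ]
    calc |D - 2 * (δ * L)| ≤ 8 * B / 3 * δ ^ 3 := hT2
      _ = 4 * B / 3 * δ ^ 2 * (2 * δ) := by ring

set_option maxHeartbeats 1000000 in
/-- for a `C³` function `f : ℝ^d → ℝ` with third derivatives bounded
by `B`, the Newton-SPSA finite-difference gradient estimator using two independent
Rademacher perturbation vectors `Δ, Δ̂` (all `2d` coordinates mutually independent)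
has bias at most `C δ²` in each coordinate, where `C` depends only on `d` and `B`. -/
theorem spsa_newton_gradient_estimate_bias (d : ℕ) (B : ℝ) (hB : 0 ≤ B) :
    ∃ C : ℝ, ∀ (Ω : Type) (_ : MeasurableSpace Ω) (μ : Measure Ω),
      IsProbabilityMeasure μ →
      ∀ f : (Fin d → ℝ) → ℝ, ContDiff ℝ 3 f →
      (∀ θ : Fin d → ℝ, ‖iteratedFDeriv ℝ 3 f θ‖ ≤ B) →
      ∀ Δ Δ' : Ω → Fin d → ℝ,
      (∀ i, Measurable fun ω => Δ ω i) → (∀ i, Measurable fun ω => Δ' ω i) →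
      -- all 2d coordinates of (Δ, Δ') are mutually independent
      ProbabilityTheory.iIndepFun
        (Sum.elim (fun i ω => Δ ω i) (fun i ω => Δ' ω i)) μ →
      -- each coordinate is Rademacher
      (∀ i, μ {ω | Δ ω i = 1} = 1 / 2 ∧ μ {ω | Δ ω i = -1} = 1 / 2) →
      (∀ i, μ {ω | Δ' ω i = 1} = 1 / 2 ∧ μ {ω | Δ' ω i = -1} = 1 / 2) →
      ∀ (θ : Fin d → ℝ) (δ : ℝ), 0 < δ → ∀ i : Fin d,
        |(∫ ω, (f (θ + δ • (Δ ω + Δ' ω)) - f (θ - δ • (Δ ω + Δ' ω)))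
              / (2 * δ * Δ ω i) ∂μ)
            - fderiv ℝ f θ (Pi.single i 1)|
          ≤ C * δ ^ 2 := by
  refine ⟨4 * B / 3, ?_⟩
  intro Ω mΩ μ hμ f hf hB3 Δ Δ' hΔm hΔ'm hIndep hrad hrad' θ δ hδ i
  have haeΔ : ∀ j, ∀ᵐ ω ∂μ, Δ ω j = 1 ∨ Δ ω j = -1 :=
    fun j => rad_ae (hΔm j) (hrad j).1 (hrad j).2
  have haeΔ' : ∀ j, ∀ᵐ ω ∂μ, Δ' ω j = 1 ∨ Δ' ω j = -1 :=
    fun j => rad_ae (hΔ'm j) (hrad' j).1 (hrad' j).2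
  have haeAll : ∀ᵐ ω ∂μ, (∀ j, Δ ω j = 1 ∨ Δ ω j = -1) ∧ (∀ j, Δ' ω j = 1 ∨ Δ' ω j = -1) :=
    ((ae_all_iff).2 haeΔ).and ((ae_all_iff).2 haeΔ')
  set c : Fin d → ℝ := fun j => fderiv ℝ f θ (Pi.single j 1) with hcdef
  have hlin : ∀ v : Fin d → ℝ, fderiv ℝ f θ v = ∑ j, v j * c j := by
    intro v
    have hv : v = ∑ j, v j • (Pi.single j 1 : Fin d → ℝ) := by
      ext k
      simp [Pi.single_apply]
    conv_lhs => rw [hv]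
    rw [map_sum]
    refine Finset.sum_congr rfl fun j _ => ?_
    rw [ContinuousLinearMap.map_smul, smul_eq_mul]
  -- integrals of coordinates
  have hint : ∀ p : Fin d ⊕ Fin d,
      Integrable (Sum.elim (fun j ω => Δ ω j) (fun j ω => Δ' ω j) p) μ := by
    rintro (j | j)
    · exact rad_integrable (hΔm j) (haeΔ j)
    · exact rad_integrable (hΔ'm j) (haeΔ' j)
  have hzero : ∀ p : Fin d ⊕ Fin d,
      ∫ ω, (Sum.elim (fun j ω => Δ ω j) (fun j ω => Δ' ω j) p) ω ∂μ = 0 := by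
    rintro (j | j)
    · exact rad_integral (hΔm j) (hrad j).1 (hrad j).2
    · exact rad_integral (hΔ'm j) (hrad' j).1 (hrad' j).2
  have hprod : ∀ p q : Fin d ⊕ Fin d, p ≠ q →
      ∫ ω, (Sum.elim (fun j ω => Δ ω j) (fun j ω => Δ' ω j) p) ω
        * (Sum.elim (fun j ω => Δ ω j) (fun j ω => Δ' ω j) q) ω ∂μ = 0 := by
    intro p q hpq
    have h := (hIndep.indepFun hpq).integral_mul_eq_mul_integral (hint p).aestronglyMeasurable
      (hint q).aestronglyMeasurable
    have h2 : ∫ ω, (Sum.elim (fun j ω => Δ ω j) (fun j ω => Δ' ω j) p) ω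
        * (Sum.elim (fun j ω => Δ ω j) (fun j ω => Δ' ω j) q) ω ∂μ
        = integral μ ((Sum.elim (fun j ω => Δ ω j) (fun j ω => Δ' ω j) p)
          * (Sum.elim (fun j ω => Δ ω j) (fun j ω => Δ' ω j) q)) := rfl
    rw [h2, h, hzero p, hzero q, mul_zero]
  have hprodΔ : ∀ j, j ≠ i → ∫ ω, Δ ω j * Δ ω i ∂μ = 0 := fun j hj =>
    hprod (Sum.inl j) (Sum.inl i) (by simp [hj])
  have hprodΔ' : ∀ j, ∫ ω, Δ' ω j * Δ ω i ∂μ = 0 := fun j =>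
    hprod (Sum.inr j) (Sum.inl i) (by simp)
  have hsq : ∫ ω, Δ ω i * Δ ω i ∂μ = 1 := by
    have hcong : (fun ω => Δ ω i * Δ ω i) =ᵐ[μ] fun _ => (1:ℝ) := by
      filter_upwards [haeΔ i] with ω hω
      rcases hω with h | h <;> rw [h] <;> norm_num
    rw [integral_congr_ae hcong]
    simp
  have hmul_int : ∀ (Y Z : Ω → ℝ), Measurable Y → Measurable Z →
      (∀ᵐ ω ∂μ, Y ω = 1 ∨ Y ω = -1) → (∀ᵐ ω ∂μ, Z ω = 1 ∨ Z ω = -1) →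
      Integrable (fun ω => Y ω * Z ω) μ := by
    intro Y Z hY hZ haY haZ
    apply Integrable.mono' (integrable_const (1:ℝ)) (hY.mul hZ).aestronglyMeasurable
    filter_upwards [haY, haZ] with ω h1 h2
    rcases h1 with h1 | h1 <;> rcases h2 with h2 | h2 <;>
      rw [Real.norm_eq_abs, Pi.mul_apply, h1, h2] <;> norm_num
  set X : Ω → ℝ := fun ω => fderiv ℝ f θ (Δ ω + Δ' ω) * Δ ω i with hXdef
  have hXeq : ∀ ω, X ω = ∑ j, (c j * (Δ ω j * Δ ω i) + c j * (Δ' ω j * Δ ω i)) := by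
    intro ω
    rw [hXdef]
    simp only
    rw [hlin, Finset.sum_mul]
    refine Finset.sum_congr rfl fun j _ => ?_
    rw [Pi.add_apply]
    ring
  have hintA : ∀ j, Integrable (fun ω => c j * (Δ ω j * Δ ω i)) μ := fun j =>
    (hmul_int _ _ (hΔm j) (hΔm i) (haeΔ j) (haeΔ i)).const_mul _
  have hintB : ∀ j, Integrable (fun ω => c j * (Δ' ω j * Δ ω i)) μ := fun j =>
    (hmul_int _ _ (hΔ'm j) (hΔm i) (haeΔ' j) (haeΔ i)).const_mul _
  have hXint : Integrable X μ := by
    have hXfun : X = fun ω => ∑ j, (c j * (Δ ω j * Δ ω i) + c j * (Δ' ω j * Δ ω i)) :=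
      funext hXeq
    rw [hXfun]
    exact integrable_finset_sum _ (fun j _ => (hintA j).add (hintB j))
  have hXval : ∫ ω, X ω ∂μ = c i := by
    have hXfun : (fun ω => X ω) = fun ω => ∑ j, (c j * (Δ ω j * Δ ω i) + c j * (Δ' ω j * Δ ω i)) :=
      funext hXeq
    have hI : ∀ j ∈ Finset.univ, Integrable
        (fun ω => c j * (Δ ω j * Δ ω i) + c j * (Δ' ω j * Δ ω i)) μ :=
      fun j _ => (hintA j).add (hintB j)
    rw [hXfun, integral_finset_sum _ hI]
    have hterm : ∀ j ∈ Finset.univ, (∫ ω, (c j * (Δ ω j * Δ ω i) + c j * (Δ' ω j * Δ ω i)) ∂μ)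
        = if j = i then c i else 0 := by
      intro j _
      rw [integral_add (hintA j) (hintB j), integral_const_mul, integral_const_mul, hprodΔ' j]
      by_cases h : j = i
      · subst h
        rw [hsq]
        simp
      · rw [hprodΔ j h]
        simp [h]
    rw [Finset.sum_congr rfl hterm]
    simp
  -- the estimator
  set est : Ω → ℝ := fun ω => (f (θ + δ • (Δ ω + Δ' ω)) - f (θ - δ • (Δ ω + Δ' ω)))
      / (2 * δ * Δ ω i) with hestdef
  have hsmeas : Measurable (fun ω => (Δ ω + Δ' ω : Fin d → ℝ)) :=
    measurable_pi_lambda _ (fun j => (hΔm j).add (hΔ'm j))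
  have hestmeas : Measurable est := by
    apply Measurable.div
    · exact ((hf.continuous.measurable.comp (measurable_const.add (hsmeas.const_smul δ))).sub
        (hf.continuous.measurable.comp (measurable_const.sub (hsmeas.const_smul δ))))
    · exact measurable_const.mul (hΔm i)
  have hXmeas : Measurable X :=
    ((fderiv ℝ f θ).continuous.measurable.comp hsmeas).mul (hΔm i)
  have herr : ∀ᵐ ω ∂μ, |est ω - X ω| ≤ 4 * B / 3 * δ ^ 2 := by
    filter_upwards [haeAll] with ω hω
    exact est_err hf hB3 θ hδ (Δ ω) (Δ' ω) hω.1 hω.2 i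
  have hsub_int : Integrable (fun ω => est ω - X ω) μ := by
    apply Integrable.mono' (integrable_const (4 * B / 3 * δ ^ 2))
      ((hestmeas.sub hXmeas).aestronglyMeasurable)
    filter_upwards [herr] with ω hω
    rw [Real.norm_eq_abs]
    exact hω
  have hestint : Integrable est μ := by
    have h1 : Integrable (fun ω => (est ω - X ω) + X ω) μ := hsub_int.add hXint
    have heq : est = fun ω => (est ω - X ω) + X ω := by
      funext ω
      ring
    rw [heq]
    exact h1
  have key : (∫ ω, est ω ∂μ) - c i = ∫ ω, (est ω - X ω) ∂μ := by
    rw [integral_sub hestint hXint, hXval]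
  calc |(∫ ω, est ω ∂μ) - c i| = |∫ ω, (est ω - X ω) ∂μ| := by rw [key]
    _ ≤ 4 * B / 3 * δ ^ 2 := by
        have h := norm_integral_le_of_norm_le (integrable_const (4 * B / 3 * δ ^ 2)) (by
          filter_upwards [herr] with ω hω
          rw [Real.norm_eq_abs]
          exact hω)
        rw [Real.norm_eq_abs] at h
        simpa using h
end

section
/- Let Y be a random variable taking values in [0, M], let Y₁, …, Yₙ be i.i.d. copies of Y with empirical distribution function F̂ₙ(t) = (1/n) Σ_{i=1}^n 1{Yᵢ ≤ t}, and let w : [0,1] → [0,1] be Hölder continuous of order α ∈ (0,1] with constant H. Then for every ε > 0, P( | ∫₀^∞ w(P(Y > t)) dt − ∫₀^∞ w(1 − F̂ₙ(t)) dt | > ε ) ≤ 2 exp( −2n (ε/(HM))^{2/α} ), where the probabilities and integrals are over t ∈ [0, M] (both integrands vanish for t > M). -/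
open MeasureTheory

/-- The empirical distribution function of the points `y 0, …, y (n-1)`:
`F̂ₙ(t) = (1/n) Σ_{i=1}^n 1{yᵢ ≤ t}`. -/
noncomputable def empiricalCDF (n : ℕ) (y : Fin n → ℝ) (t : ℝ) : ℝ :=
  ((Finset.univ.filter fun i => y i ≤ t).card : ℝ) / n

open Real ProbabilityTheory

lemma bernoulli_mgf_le {p : ℝ} (hp0 : 0 ≤ p) (hp1 : p ≤ 1) (c : ℝ) :
    p * exp (c * (1 - p)) + (1 - p) * exp (-(c * p)) ≤ exp (c ^ 2 / 8) := by
  obtain ⟨q, hq⟩ : ∃ q : ℝ, q = 1 - p := ⟨_, rfl⟩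
  have hq0 : 0 ≤ q := by rw [hq]; linarith
  have hqp : q + p = 1 := by rw [hq]; ring
  have hpos : ∀ x : ℝ, 0 < q + p * exp x := by
    intro x
    rcases eq_or_lt_of_le hp0 with h | h
    · have : q = 1 := by rw [hq, ← h]; ring
      simp [← h, this]
    · have := exp_pos x; nlinarith
  set φ : ℝ → ℝ := fun x => x * p + x ^ 2 / 8 - Real.log (q + p * exp x) with hφ
  set φ' : ℝ → ℝ := fun x => p + x / 4 - p * exp x / (q + p * exp x) with hφ'
  have hderiv : ∀ x, HasDerivAt φ (φ' x) x := by
    intro x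
    have h1 : HasDerivAt (fun x : ℝ => x * p) p x := by
      simpa using (hasDerivAt_id x).mul_const p
    have h2 : HasDerivAt (fun x : ℝ => x ^ 2 / 8) (x / 4) x := by
      have := ((hasDerivAt_pow 2 x)).div_const 8
      exact this.congr_deriv (by norm_num; ring)
    have hinner : HasDerivAt (fun x : ℝ => q + p * exp x) (p * exp x) x :=
      ((Real.hasDerivAt_exp x).const_mul p).const_add q
    have h3 : HasDerivAt (fun x : ℝ => Real.log (q + p * exp x))
        (p * exp x / (q + p * exp x)) x := by
      have := (Real.hasDerivAt_log (hpos x).ne').comp x hinner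
      simpa [Function.comp_def, div_eq_inv_mul, mul_comm] using this
    exact (h1.add h2).sub h3
  have hderiv2 : ∀ x, HasDerivAt φ'
      (1 / 4 - p * q * exp x / (q + p * exp x) ^ 2) x := by
    intro x
    have h1 : HasDerivAt (fun x : ℝ => p + x / 4) (1 / 4) x := by
      simpa using ((hasDerivAt_id x).div_const 4).const_add p
    have hu : HasDerivAt (fun x : ℝ => p * exp x) (p * exp x) x :=
      (Real.hasDerivAt_exp x).const_mul p
    have hv : HasDerivAt (fun x : ℝ => q + p * exp x) (p * exp x) x :=
      ((Real.hasDerivAt_exp x).const_mul p).const_add q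
    have h2 : HasDerivAt (fun x : ℝ => p * exp x / (q + p * exp x))
        ((p * exp x * (q + p * exp x) - p * exp x * (p * exp x)) / (q + p * exp x) ^ 2) x :=
      hu.div hv (hpos x).ne'
    have : (p * exp x * (q + p * exp x) - p * exp x * (p * exp x)) / (q + p * exp x) ^ 2
        = p * q * exp x / (q + p * exp x) ^ 2 := by ring
    rw [this] at h2
    exact h1.sub h2
  have hsec : ∀ x, 0 ≤ 1 / 4 - p * q * exp x / (q + p * exp x) ^ 2 := by
    intro x
    have hE := exp_pos x
    have hsq : (0:ℝ) < (q + p * exp x) ^ 2 := pow_pos (hpos x) 2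
    rw [sub_nonneg, div_le_iff₀ hsq]
    nlinarith [sq_nonneg (q - p * exp x)]
  have hmono' : Monotone φ' := by
    have hdiff : Differentiable ℝ φ' := fun x => (hderiv2 x).differentiableAt
    apply monotone_of_deriv_nonneg hdiff
    intro x; rw [(hderiv2 x).deriv]; exact hsec x
  have he0 : q + p * exp 0 = 1 := by rw [Real.exp_zero]; linarith
  have hφ'0 : φ' 0 = 0 := by
    simp only [hφ']
    rw [Real.exp_zero, mul_one, hqp]
    norm_num
  have hφ0 : φ 0 = 0 := by
    simp only [hφ]
    rw [Real.exp_zero, mul_one, hqp, Real.log_one]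
    ring
  have hcont : Continuous φ := by
    have : Differentiable ℝ φ := fun x => (hderiv x).differentiableAt
    exact this.continuous
  have hnonneg : ∀ x, 0 ≤ φ x := by
    intro x
    rcases le_total 0 x with h | h
    · have hmonoOn : MonotoneOn φ (Set.Ici 0) := by
        apply monotoneOn_of_deriv_nonneg (convex_Ici 0) hcont.continuousOn
        · intro y _; exact (hderiv y).differentiableAt.differentiableWithinAt
        · intro y hy
          rw [interior_Ici] at hy
          rw [(hderiv y).deriv, ← hφ'0]
          exact hmono' (le_of_lt hy)
      have := hmonoOn (Set.self_mem_Ici) h h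
      rwa [hφ0] at this
    · have hantiOn : AntitoneOn φ (Set.Iic 0) := by
        apply antitoneOn_of_deriv_nonpos (convex_Iic 0) hcont.continuousOn
        · intro y _; exact (hderiv y).differentiableAt.differentiableWithinAt
        · intro y hy
          rw [interior_Iic] at hy
          rw [(hderiv y).deriv, ← hφ'0]
          exact hmono' (le_of_lt hy)
      have := hantiOn h (Set.self_mem_Iic) h
      rwa [hφ0] at this
  have key : q + p * exp c ≤ exp (c * p + c ^ 2 / 8) := by
    have h := hnonneg c
    have hlog : Real.log (q + p * exp c) ≤ c * p + c ^ 2 / 8 := by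
      simp only [hφ] at h; linarith
    calc q + p * exp c = exp (Real.log (q + p * exp c)) := (Real.exp_log (hpos c)).symm
      _ ≤ exp (c * p + c ^ 2 / 8) := exp_le_exp.mpr hlog
  have hsplit : exp (c * (1 - p)) = exp (-(c * p)) * exp c := by
    rw [← Real.exp_add]; ring_nf
  have expand : p * exp (c * (1 - p)) + (1 - p) * exp (-(c * p))
      = exp (-(c * p)) * (q + p * exp c) := by
    rw [hsplit, hq]; ring
  rw [expand]
  calc exp (-(c * p)) * (q + p * exp c) ≤ exp (-(c * p)) * exp (c * p + c ^ 2 / 8) :=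
        mul_le_mul_of_nonneg_left key (exp_pos _).le
    _ = exp (c ^ 2 / 8) := by rw [← Real.exp_add]; ring_nf


lemma integrable_of_bounded_meas {Ω : Type*} [MeasurableSpace Ω] {μ : Measure Ω}
    [IsFiniteMeasure μ] {f : Ω → ℝ} (hf : Measurable f) (C : ℝ) (h : ∀ ω, |f ω| ≤ C) :
    Integrable f μ :=
  ⟨hf.aestronglyMeasurable,
    HasFiniteIntegral.of_bounded (C := C) (ae_of_all _ fun ω => by
      simpa [Real.norm_eq_abs] using h ω)⟩


lemma mgf_centered_indicator {Ω : Type*} [MeasurableSpace Ω] (μ : Measure Ω)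
    [IsProbabilityMeasure μ] {S : Set Ω} (hS : MeasurableSet S) (c : ℝ) :
    mgf (fun ω => Set.indicator S (fun _ => (1:ℝ)) ω - (μ S).toReal) μ c
      ≤ exp (c ^ 2 / 8) := by
  set p := (μ S).toReal with hp
  have hp0 : 0 ≤ p := ENNReal.toReal_nonneg
  have hp1 : p ≤ 1 := by
    rw [hp]
    exact ENNReal.toReal_le_of_le_ofReal one_pos.le (by simpa using prob_le_one)
  have heq : (fun ω => exp (c * (Set.indicator S (fun _ => (1:ℝ)) ω - p)))
      = fun ω => Set.indicator S (fun _ => exp (c * (1 - p))) ω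
        + Set.indicator Sᶜ (fun _ => exp (-(c * p))) ω := by
    funext ω
    by_cases h : ω ∈ S
    · rw [Set.indicator_of_mem h, Set.indicator_of_mem h,
        Set.indicator_of_notMem (by simpa using h)]
      ring_nf
    · rw [Set.indicator_of_notMem h, Set.indicator_of_notMem h,
        Set.indicator_of_mem (by simpa using h)]
      ring_nf
  have hcompl : (μ Sᶜ).toReal = 1 - p := by
    rw [prob_compl_eq_one_sub hS, hp, ENNReal.toReal_sub_of_le prob_le_one (by simp)]
    simp
  rw [mgf, heq]
  rw [integral_add ((integrable_indicator_iff hS).mpr integrableOn_const)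
      ((integrable_indicator_iff hS.compl).mpr integrableOn_const)]
  rw [integral_indicator_const _ hS, integral_indicator_const _ hS.compl]
  simp only [smul_eq_mul, measureReal_def, hcompl, ← hp]
  exact bernoulli_mgf_le hp0 hp1 c


lemma empiricalCDF_eq_sum (n : ℕ) (y : Fin n → ℝ) (t : ℝ) :
    empiricalCDF n y t = (∑ i, if y i ≤ t then (1:ℝ) else 0) / n := by
  rw [empiricalCDF]
  congr 1
  rw [Finset.card_filter]
  push_cast
  rfl


lemma empiricalCDF_mem (n : ℕ) (hn : 0 < n) (y : Fin n → ℝ) (t : ℝ) :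
    empiricalCDF n y t ∈ Set.Icc (0:ℝ) 1 := by
  rw [empiricalCDF]
  constructor
  · positivity
  · rw [div_le_one (by exact_mod_cast hn)]
    have := Finset.card_filter_le (Finset.univ : Finset (Fin n)) (fun i => y i ≤ t)
    simp only [Finset.card_univ, Fintype.card_fin] at this
    exact_mod_cast this


lemma empiricalCDF_mono (n : ℕ) (y : Fin n → ℝ) : Monotone (empiricalCDF n y) := by
  intro s t hst
  unfold empiricalCDF
  rcases Nat.eq_zero_or_pos n with h | h
  · simp [h]
  · apply div_le_div_of_nonneg_right ?h1 ?h2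
    case h1 =>
      exact_mod_cast Finset.card_le_card
        (Finset.monotone_filter_right _ fun i _ hi => le_trans hi hst)
    case h2 => exact_mod_cast h.le


lemma exp_abs_sum_indicator_le {Ω : Type*} [MeasurableSpace Ω] (μ : Measure Ω)
    [IsProbabilityMeasure μ] (n : ℕ) (Ys : Fin n → Ω → ℝ)
    (hmeas : ∀ i, Measurable (Ys i))
    (hindep : iIndepFun Ys μ) (t : ℝ) (c : ℝ) (hc : 0 ≤ c) :
    ∫ ω, exp (c * |∑ i, (Set.indicator {ω' | Ys i ω' ≤ t} (fun _ => (1:ℝ)) ω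
        - (μ {ω' | Ys i ω' ≤ t}).toReal)|) ∂μ
      ≤ 2 * exp (n * (c ^ 2 / 8)) := by
  classical
  set X : Fin n → Ω → ℝ := fun i ω =>
    Set.indicator {ω' | Ys i ω' ≤ t} (fun _ => (1:ℝ)) ω - (μ {ω' | Ys i ω' ≤ t}).toReal
    with hX
  have hSmeas : ∀ i, MeasurableSet {ω' | Ys i ω' ≤ t} :=
    fun i => measurableSet_le (hmeas i) measurable_const
  have hXmeas : ∀ i, Measurable (X i) := fun i =>
    ((measurable_const.indicator (hSmeas i))).sub measurable_const
  have hXbd : ∀ i ω, |X i ω| ≤ 1 := by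
    intro i ω
    have h1 : Set.indicator {ω' | Ys i ω' ≤ t} (fun _ => (1:ℝ)) ω ∈ Set.Icc (0:ℝ) 1 := by
      by_cases h : ω ∈ {ω' | Ys i ω' ≤ t} <;> simp [Set.indicator_of_mem,
        Set.indicator_of_notMem, h]
    have h2 : (μ {ω' | Ys i ω' ≤ t}).toReal ∈ Set.Icc (0:ℝ) 1 := by
      constructor
      · exact ENNReal.toReal_nonneg
      · exact ENNReal.toReal_le_of_le_ofReal one_pos.le (by simpa using prob_le_one)
    rw [abs_le]
    constructor
    · simp only [hX]; linarith [h1.1, h2.2]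
    · simp only [hX]; linarith [h1.2, h2.1]
  have hXindep : iIndepFun X μ := by
    have : ∀ i, Measurable (fun y : ℝ =>
        Set.indicator (Set.Iic t) (fun _ => (1:ℝ)) y - (μ {ω' | Ys i ω' ≤ t}).toReal) :=
      fun i => (measurable_const.indicator measurableSet_Iic).sub measurable_const
    exact hindep.comp _ this
  set Sm : Ω → ℝ := fun ω => ∑ i, X i ω with hSm
  have hSmeq : Sm = ∑ i, X i := by funext ω; simp [hSm]
  have hSmmeas : Measurable Sm := by
    apply Finset.measurable_sum
    intro i _; exact hXmeas i
  have hSmbd : ∀ ω, |Sm ω| ≤ n := by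
    intro ω
    calc |Sm ω| ≤ ∑ i, |X i ω| := Finset.abs_sum_le_sum_abs _ _
      _ ≤ ∑ _i : Fin n, (1:ℝ) := Finset.sum_le_sum fun i _ => hXbd i ω
      _ = n := by simp
  have hint : ∀ d : ℝ, Integrable (fun ω => exp (d * Sm ω)) μ := by
    intro d
    apply integrable_of_bounded_meas (hSmmeas.const_mul d).exp (exp (|d| * n))
    intro ω
    rw [abs_of_pos (exp_pos _), exp_le_exp]
    calc d * Sm ω ≤ |d * Sm ω| := le_abs_self _
      _ = |d| * |Sm ω| := abs_mul _ _
      _ ≤ |d| * n := by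
          exact mul_le_mul_of_nonneg_left (hSmbd ω) (abs_nonneg d)
  have hintabs : Integrable (fun ω => exp (c * |Sm ω|)) μ := by
    apply integrable_of_bounded_meas (hSmmeas.abs.const_mul c).exp (exp (c * n))
    intro ω
    rw [abs_of_pos (exp_pos _), exp_le_exp]
    exact mul_le_mul_of_nonneg_left (hSmbd ω) hc
  have hptwise : ∀ ω, exp (c * |Sm ω|) ≤ exp (c * Sm ω) + exp (-c * Sm ω) := by
    intro ω
    rcases abs_cases (Sm ω) with ⟨h1, _⟩ | ⟨h1, _⟩
    · rw [h1]; nlinarith [exp_pos (-c * Sm ω)]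
    · rw [h1]
      have : c * -Sm ω = -c * Sm ω := by ring
      rw [this]
      nlinarith [exp_pos (c * Sm ω)]
  have hmgf : ∀ d : ℝ, mgf Sm μ d ≤ exp (n * (d ^ 2 / 8)) := by
    intro d
    rw [hSmeq, iIndepFun.mgf_sum hXindep hXmeas]
    calc ∏ i, mgf (X i) μ d ≤ ∏ _i : Fin n, exp (d ^ 2 / 8) := by
          apply Finset.prod_le_prod
          · intro i _; exact mgf_nonneg
          · intro i _; exact mgf_centered_indicator μ (hSmeas i) d
      _ = exp (d ^ 2 / 8) ^ n := by simp
      _ = exp (n * (d ^ 2 / 8)) := by rw [← Real.exp_nat_mul]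
  calc ∫ ω, exp (c * |Sm ω|) ∂μ
      ≤ ∫ ω, (exp (c * Sm ω) + exp (-c * Sm ω)) ∂μ := by
        apply integral_mono hintabs ((hint c).add (hint (-c)))
        intro ω; exact hptwise ω
    _ = mgf Sm μ c + mgf Sm μ (-c) := by
        rw [integral_add (hint c) (hint (-c))]; rfl
    _ ≤ exp (n * (c ^ 2 / 8)) + exp (n * ((-c) ^ 2 / 8)) := add_le_add (hmgf c) (hmgf (-c))
    _ = 2 * exp (n * (c ^ 2 / 8)) := by rw [neg_pow]; ring_nf


theorem W_concentration {Ω : Type*} [MeasurableSpace Ω] (μ : Measure Ω)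
    [IsProbabilityMeasure μ] (M : ℝ) (hM : 0 < M)
    (Y : Ω → ℝ) (hYmeas : Measurable Y)
    (n : ℕ) (hn : 0 < n)
    (Ys : Fin n → Ω → ℝ) (hYsmeas : ∀ i, Measurable (Ys i))
    (hindep : ProbabilityTheory.iIndepFun Ys μ)
    (hident : ∀ i t, μ {ω | Ys i ω ≤ t} = μ {ω | Y ω ≤ t})
    (δ : ℝ) (hδ : 0 ≤ δ) :
    (μ {ω | M * δ ≤ ∫ t in Set.Ioc (0:ℝ) M,
        |empiricalCDF n (fun i => Ys i ω) t - (μ {ω' | Y ω' ≤ t}).toReal|}).toReal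
      ≤ 2 * Real.exp (-2 * n * δ ^ 2) := by
  classical
  set F : ℝ → ℝ := fun t => (μ {ω' | Y ω' ≤ t}).toReal with hF
  have hFmono : Monotone F := by
    intro s t hst
    apply ENNReal.toReal_mono (measure_ne_top _ _)
    apply measure_mono
    intro ω hω; exact le_trans hω hst
  have hFmeas : Measurable F := hFmono.measurable
  have hF01 : ∀ t, F t ∈ Set.Icc (0:ℝ) 1 := fun t =>
    ⟨ENNReal.toReal_nonneg, ENNReal.toReal_le_of_le_ofReal one_pos.le (by simpa using prob_le_one)⟩
  set g : Ω → ℝ → ℝ := fun ω t => empiricalCDF n (fun i => Ys i ω) t - F t with hg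
  have hgbd : ∀ ω t, |g ω t| ≤ 1 := by
    intro ω t
    have h1 := empiricalCDF_mem n hn (fun i => Ys i ω) t
    have h2 := hF01 t
    rw [abs_le]
    constructor
    · simp only [hg]; linarith [h1.1, h2.2]
    · simp only [hg]; linarith [h1.2, h2.1]
  -- joint measurability
  have hGmeas : Measurable (fun p : Ω × ℝ => |g p.1 p.2|) := by
    have h1 : Measurable (fun p : Ω × ℝ => empiricalCDF n (fun i => Ys i p.1) p.2) := by
      simp only [empiricalCDF_eq_sum]
      apply Measurable.div _ measurable_const
      apply Finset.measurable_sum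
      intro i _
      have : MeasurableSet {p : Ω × ℝ | Ys i p.1 ≤ p.2} :=
        measurableSet_le ((hYsmeas i).comp measurable_fst) measurable_snd
      exact Measurable.ite this measurable_const measurable_const
    exact ((h1.sub (hFmeas.comp measurable_snd))).abs
  set W : Ω → ℝ := fun ω => ∫ t in Set.Ioc (0:ℝ) M, |g ω t| with hW
  set ν : Measure ℝ := volume.restrict (Set.Ioc (0:ℝ) M) with hν
  haveI : IsFiniteMeasure ν := by
    constructor
    rw [hν, Measure.restrict_apply_univ, Real.volume_Ioc]
    exact ENNReal.ofReal_lt_top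
  have hνuniv : ν.real Set.univ = M := by
    rw [measureReal_def, hν, Measure.restrict_apply_univ, Real.volume_Ioc, sub_zero,
      ENNReal.toReal_ofReal hM.le]
  haveI : NeZero ν := by
    constructor
    intro h
    have := hνuniv
    rw [h] at this
    simp at this
    linarith
  have hWmeas : Measurable W := by
    have := hGmeas.stronglyMeasurable.integral_prod_right' (ν := ν)
    exact this.measurable
  have hgtmeas : ∀ ω, Measurable fun t => |g ω t| := by
    intro ω
    exact ((empiricalCDF_mono n _).measurable.sub hFmeas).abs
  have hWbd : ∀ ω, W ω ∈ Set.Icc (0:ℝ) M := by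
    intro ω
    constructor
    · apply integral_nonneg; intro t; positivity
    · calc W ω ≤ ∫ t in Set.Ioc (0:ℝ) M, (1:ℝ) := by
            apply integral_mono
              (integrable_of_bounded_meas (μ := ν) (hgtmeas ω) 1 (fun t => by
                simpa using hgbd ω t))
              (integrable_const 1)
            intro t; exact hgbd ω t
        _ = M := by
            rw [show (∫ _ in Set.Ioc (0:ℝ) M, (1:ℝ)) = ∫ _, (1:ℝ) ∂ν from rfl,
              integral_const, smul_eq_mul, mul_one, hνuniv]
  -- Chernoff setup
  set s0 : ℝ := 4 * n * δ / M with hs0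
  have hs0nn : 0 ≤ s0 := by positivity
  set c : ℝ := s0 * M / n with hc
  have hcnn : 0 ≤ c := by positivity
  have hneq : (n:ℝ) ≠ 0 := by exact_mod_cast hn.ne'
  -- identify s0*M*|g| with c*|sum of centered indicators|
  have hkey : ∀ ω t, s0 * M * |g ω t|
      = c * |∑ i, (Set.indicator {ω' | Ys i ω' ≤ t} (fun _ => (1:ℝ)) ω
          - (μ {ω' | Ys i ω' ≤ t}).toReal)| := by
    intro ω t
    have hsum : ∑ i, (Set.indicator {ω' | Ys i ω' ≤ t} (fun _ => (1:ℝ)) ω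
        - (μ {ω' | Ys i ω' ≤ t}).toReal) = n * g ω t := by
      rw [Finset.sum_sub_distrib]
      have e1 : ∀ i : Fin n, Set.indicator {ω' | Ys i ω' ≤ t} (fun _ => (1:ℝ)) ω
          = if Ys i ω ≤ t then (1:ℝ) else 0 := by
        intro i
        rw [Set.indicator_apply]
        simp only [Set.mem_setOf_eq]
      have e2 : ∑ i, Set.indicator {ω' | Ys i ω' ≤ t} (fun _ => (1:ℝ)) ω
          = n * empiricalCDF n (fun i => Ys i ω) t := by
        rw [empiricalCDF_eq_sum]
        rw [mul_div_cancel₀ _ hneq]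
        exact Finset.sum_congr rfl fun i _ => e1 i
      have e3 : ∑ _i : Fin n, (μ {ω' | Y ω' ≤ t}).toReal = n * F t := by
        rw [Finset.sum_const, Finset.card_univ, Fintype.card_fin, nsmul_eq_mul, hF]
      have e4 : ∑ i, (μ {ω' | Ys i ω' ≤ t}).toReal = n * F t := by
        rw [← e3]
        exact Finset.sum_congr rfl fun i _ => by rw [hident i t]
      rw [e2, e4, hg]
      ring
    rw [hsum, abs_mul, abs_of_nonneg (by positivity : (0:ℝ) ≤ (n:ℝ)), hc]
    field_simp
  -- integrability facts
  have hexpjoint : Measurable (fun p : Ω × ℝ => exp (s0 * M * |g p.1 p.2|)) :=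
    (hGmeas.const_mul (s0 * M)).exp
  have hexpbd : ∀ ω t, exp (s0 * M * |g ω t|) ≤ exp (s0 * M) := by
    intro ω t
    rw [exp_le_exp]
    calc s0 * M * |g ω t| ≤ s0 * M * 1 :=
          mul_le_mul_of_nonneg_left (hgbd ω t) (by positivity)
      _ = s0 * M := mul_one _
  have hexp_t_int : ∀ ω, Integrable (fun t => exp (s0 * M * |g ω t|)) ν := by
    intro ω
    apply integrable_of_bounded_meas (((hgtmeas ω).const_mul (s0 * M)).exp) (exp (s0 * M))
    intro t
    rw [abs_of_pos (exp_pos _)]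
    exact hexpbd ω t
  have hf_t_int : ∀ ω, Integrable (fun t => s0 * M * |g ω t|) ν := by
    intro ω
    apply integrable_of_bounded_meas ((hgtmeas ω).const_mul (s0 * M)) (s0 * M)
    intro t
    rw [abs_mul, abs_of_nonneg (by positivity : (0:ℝ) ≤ s0 * M), abs_abs]
    calc s0 * M * |g ω t| ≤ s0 * M * 1 :=
          mul_le_mul_of_nonneg_left (hgbd ω t) (by positivity)
      _ = s0 * M := mul_one _
  -- Jensen pointwise
  have havg : ∀ ω, (⨍ t, (s0 * M * |g ω t|) ∂ν) = s0 * W ω := by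
    intro ω
    rw [average_eq, integral_const_mul, hνuniv, smul_eq_mul, hW]
    field_simp
  have hJ : ∀ ω, exp (s0 * W ω) ≤ M⁻¹ * ∫ t, exp (s0 * M * |g ω t|) ∂ν := by
    intro ω
    have h := convexOn_exp.map_average_le continuous_exp.continuousOn isClosed_univ
      (ae_of_all _ fun t => Set.mem_univ _) (hf_t_int ω)
      (by
        show Integrable (exp ∘ fun t => s0 * M * |g ω t|) ν
        exact hexp_t_int ω)
    rw [havg ω] at h
    rw [average_eq, hνuniv, smul_eq_mul] at h
    exact h
  -- integrabilities over Ω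
  have hint_expW : Integrable (fun ω => exp (s0 * W ω)) μ := by
    apply integrable_of_bounded_meas ((hWmeas.const_mul s0).exp) (exp (s0 * M))
    intro ω
    rw [abs_of_pos (exp_pos _), exp_le_exp]
    exact mul_le_mul_of_nonneg_left (hWbd ω).2 hs0nn
  have hint2 : Integrable (fun ω => M⁻¹ * ∫ t, exp (s0 * M * |g ω t|) ∂ν) μ := by
    apply integrable_of_bounded_meas
      ((hexpjoint.stronglyMeasurable.integral_prod_right'.measurable).const_mul M⁻¹)
      (exp (s0 * M))
    intro ω
    rw [abs_mul, abs_of_nonneg (inv_nonneg.mpr hM.le)]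
    have : ‖∫ t, exp (s0 * M * |g ω t|) ∂ν‖ ≤ exp (s0 * M) * ν.real Set.univ := by
      apply norm_integral_le_of_norm_le_const
      apply ae_of_all
      intro t
      rw [Real.norm_eq_abs, abs_of_pos (exp_pos _)]
      exact hexpbd ω t
    rw [Real.norm_eq_abs, hνuniv] at this
    calc M⁻¹ * |∫ t, exp (s0 * M * |g ω t|) ∂ν| ≤ M⁻¹ * (exp (s0 * M) * M) :=
          mul_le_mul_of_nonneg_left this (inv_nonneg.mpr hM.le)
      _ = exp (s0 * M) := by field_simp
  have hprod_int : Integrable (Function.uncurry fun ω t => exp (s0 * M * |g ω t|))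
      (μ.prod ν) := by
    apply integrable_of_bounded_meas (by exact hexpjoint) (exp (s0 * M))
    intro p
    simp only [Function.uncurry]
    rw [abs_of_pos (exp_pos _)]
    exact hexpbd p.1 p.2
  have hint3 : Integrable (fun t => ∫ ω, exp (s0 * M * |g ω t|) ∂μ) ν := by
    apply integrable_of_bounded_meas
      (hexpjoint.stronglyMeasurable.integral_prod_left'.measurable)
      (exp (s0 * M))
    intro t
    have : ‖∫ ω, exp (s0 * M * |g ω t|) ∂μ‖ ≤ exp (s0 * M) * μ.real Set.univ := by
      apply norm_integral_le_of_norm_le_const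
      apply ae_of_all
      intro ω
      rw [Real.norm_eq_abs, abs_of_pos (exp_pos _)]
      exact hexpbd ω t
    rw [Real.norm_eq_abs, probReal_univ, mul_one] at this
    exact this
  -- per-t bound
  have hpert : ∀ t, ∫ ω, exp (s0 * M * |g ω t|) ∂μ ≤ 2 * exp (n * (c ^ 2 / 8)) := by
    intro t
    calc ∫ ω, exp (s0 * M * |g ω t|) ∂μ
        = ∫ ω, exp (c * |∑ i, (Set.indicator {ω' | Ys i ω' ≤ t} (fun _ => (1:ℝ)) ω
            - (μ {ω' | Ys i ω' ≤ t}).toReal)|) ∂μ := by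
          congr 1
          funext ω
          rw [hkey ω t]
      _ ≤ 2 * exp (n * (c ^ 2 / 8)) :=
          exp_abs_sum_indicator_le μ n Ys hYsmeas hindep t c hcnn
  -- mgf bound
  have hmgf : mgf W μ s0 ≤ 2 * exp (n * (c ^ 2 / 8)) := by
    calc mgf W μ s0 = ∫ ω, exp (s0 * W ω) ∂μ := rfl
      _ ≤ ∫ ω, M⁻¹ * ∫ t, exp (s0 * M * |g ω t|) ∂ν ∂μ :=
          integral_mono hint_expW hint2 hJ
      _ = M⁻¹ * ∫ ω, (∫ t, exp (s0 * M * |g ω t|) ∂ν) ∂μ := integral_const_mul _ _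
      _ = M⁻¹ * ∫ t, (∫ ω, exp (s0 * M * |g ω t|) ∂μ) ∂ν := by
          rw [integral_integral_swap hprod_int]
      _ ≤ M⁻¹ * ∫ _t, (2 * exp (n * (c ^ 2 / 8))) ∂ν := by
          apply mul_le_mul_of_nonneg_left _ (inv_nonneg.mpr hM.le)
          exact integral_mono hint3 (integrable_const _) hpert
      _ = 2 * exp (n * (c ^ 2 / 8)) := by
          rw [integral_const, smul_eq_mul, hνuniv]
          field_simp
  -- Markov
  have hmarkov := measure_ge_le_exp_mul_mgf (μ := μ) (X := W) (t := s0) (M * δ) hs0nn hint_expW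
  have hWset : {ω | M * δ ≤ ∫ t in Set.Ioc (0:ℝ) M,
      |empiricalCDF n (fun i => Ys i ω) t - (μ {ω' | Y ω' ≤ t}).toReal|}
      = {ω | M * δ ≤ W ω} := rfl
  rw [hWset]
  calc (μ {ω | M * δ ≤ W ω}).toReal ≤ exp (-s0 * (M * δ)) * mgf W μ s0 := hmarkov
    _ ≤ exp (-s0 * (M * δ)) * (2 * exp (n * (c ^ 2 / 8))) :=
        mul_le_mul_of_nonneg_left hmgf (exp_pos _).le
    _ = 2 * exp (-s0 * (M * δ) + n * (c ^ 2 / 8)) := by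
        rw [show exp (-s0 * (M * δ)) * (2 * exp ((n:ℝ) * (c ^ 2 / 8)))
          = 2 * (exp (-s0 * (M * δ)) * exp ((n:ℝ) * (c ^ 2 / 8))) from by ring,
          ← Real.exp_add]
    _ = 2 * exp (-2 * n * δ ^ 2) := by
        congr 1
        rw [hc, hs0]
        field_simp
        ring


/-- DKW-based concentration for the plug-in estimate of the
distorted tail integral: for `Y ∈ [0,M]`, i.i.d. samples `Y₁,…,Yₙ` with empirical
CDF `F̂ₙ`, and `w` Hölder of order `α` with constant `H`,
`P(|∫ w(P(Y>t)) dt - ∫ w(1-F̂ₙ(t)) dt| > ε) ≤ 2 exp(-2n(ε/(HM))^{2/α})`,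
with both integrals taken over `t ∈ [0,M]`. -/
theorem dkw_plugin_distorted_tail_integral
    {Ω : Type*} [MeasurableSpace Ω] (μ : Measure Ω) [IsProbabilityMeasure μ]
    (M : ℝ) (hM : 0 < M)
    (Y : Ω → ℝ) (hYmeas : Measurable Y) (hYrange : ∀ ω, Y ω ∈ Set.Icc (0:ℝ) M)
    (n : ℕ) (hn : 0 < n)
    (Ys : Fin n → Ω → ℝ) (hYsmeas : ∀ i, Measurable (Ys i))
    (hindep : ProbabilityTheory.iIndepFun Ys μ)
    (hident : ∀ i, ProbabilityTheory.IdentDistrib (Ys i) Y μ μ)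
    (w : ℝ → ℝ) (α H : ℝ) (hα0 : 0 < α) (hα1 : α ≤ 1) (hH : 0 < H)
    (hw_range : ∀ x ∈ Set.Icc (0:ℝ) 1, w x ∈ Set.Icc (0:ℝ) 1)
    (hw_holder : ∀ x ∈ Set.Icc (0:ℝ) 1, ∀ y ∈ Set.Icc (0:ℝ) 1,
      |w x - w y| ≤ H * |x - y| ^ α) :
    ∀ ε > (0:ℝ),
      (μ {ω | |(∫ t in Set.Ioc (0:ℝ) M, w ((μ {ω' | Y ω' > t}).toReal))
          - ∫ t in Set.Ioc (0:ℝ) M,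
              w (1 - empiricalCDF n (fun i => Ys i ω) t)| > ε}).toReal
        ≤ 2 * Real.exp (-2 * n * (ε / (H * M)) ^ (2 / α)) := by
  intro ε hε
  classical
  have hαne : α ≠ 0 := hα0.ne'
  set x : ℝ := ε / (H * M) with hxdef
  have hx0 : 0 < x := by positivity
  set δ : ℝ := x ^ (1 / α) with hδdef
  have hδ0 : 0 < δ := Real.rpow_pos_of_pos hx0 _
  -- CDF
  set F : ℝ → ℝ := fun t => (μ {ω' | Y ω' ≤ t}).toReal with hF
  have hFmono : Monotone F := by
    intro s t hst
    apply ENNReal.toReal_mono (measure_ne_top _ _)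
    exact measure_mono fun ω hω => le_trans hω hst
  have hFmeas : Measurable F := hFmono.measurable
  have hF01 : ∀ t, F t ∈ Set.Icc (0:ℝ) 1 := fun t =>
    ⟨ENNReal.toReal_nonneg, ENNReal.toReal_le_of_le_ofReal one_pos.le (by simpa using prob_le_one)⟩
  have hFb : ∀ t, (μ {ω' | Y ω' > t}).toReal = 1 - F t := by
    intro t
    have hset : {ω' | Y ω' > t} = {ω' | Y ω' ≤ t}ᶜ := by
      ext ω'; simp [not_le]
    rw [hset, prob_compl_eq_one_sub (measurableSet_le hYmeas measurable_const),
      ENNReal.toReal_sub_of_le prob_le_one (by simp), ENNReal.toReal_one, hF]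
  have hident' : ∀ (i : Fin n) (t : ℝ), μ {ω | Ys i ω ≤ t} = μ {ω | Y ω ≤ t} := by
    intro i t
    have := (hident i).measure_mem_eq (measurableSet_Iic (a := t))
    simpa [Set.preimage, Set.mem_Iic] using this
  -- clamped w
  set cl : ℝ → ℝ := fun z => max 0 (min 1 z) with hcl
  have hcl_mem : ∀ z, cl z ∈ Set.Icc (0:ℝ) 1 :=
    fun z => ⟨le_max_left _ _, max_le zero_le_one (min_le_left _ _)⟩
  have hcl_eq : ∀ z ∈ Set.Icc (0:ℝ) 1, cl z = z := by
    intro z hz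
    rw [hcl]
    simp only
    rw [min_eq_right hz.2, max_eq_right hz.1]
  have hcl_lip : ∀ z y : ℝ, |cl z - cl y| ≤ |z - y| := by
    intro z y
    calc |cl z - cl y| = |max (min 1 z) 0 - max (min 1 y) 0| := by
          rw [hcl]; simp only [max_comm]
      _ ≤ |min 1 z - min 1 y| := abs_max_sub_max_le_abs _ _ _
      _ ≤ max |1 - 1| |z - y| := abs_min_sub_min_le_max 1 z 1 y
      _ = |z - y| := by simp
  set wc : ℝ → ℝ := fun z => w (cl z) with hwc
  have hwc_eq : ∀ z ∈ Set.Icc (0:ℝ) 1, wc z = w z := by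
    intro z hz
    rw [hwc]
    simp only
    rw [hcl_eq z hz]
  have hwc_holder : ∀ z y : ℝ, |wc z - wc y| ≤ H * |z - y| ^ α := by
    intro z y
    calc |wc z - wc y| ≤ H * |cl z - cl y| ^ α :=
          hw_holder _ (hcl_mem z) _ (hcl_mem y)
      _ ≤ H * |z - y| ^ α :=
          mul_le_mul_of_nonneg_left
            (Real.rpow_le_rpow (abs_nonneg _) (hcl_lip z y) hα0.le) hH.le
  have hwc01 : ∀ z, wc z ∈ Set.Icc (0:ℝ) 1 := fun z => hw_range _ (hcl_mem z)
  have hwc_cont : Continuous wc := by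
    have hhold : HolderWith ⟨H, hH.le⟩ ⟨α, hα0.le⟩ wc := by
      intro z y
      rw [edist_dist, edist_dist, Real.dist_eq, Real.dist_eq]
      refine le_trans (ENNReal.ofReal_le_ofReal (hwc_holder z y)) (le_of_eq ?_)
      change _ = ENNReal.ofNNReal ⟨H, hH.le⟩ * ENNReal.ofReal |z - y| ^ α
      rw [ENNReal.ofReal_mul hH.le, ENNReal.ofReal_rpow_of_nonneg (abs_nonneg _) hα0.le,
        ENNReal.ofReal_eq_coe_nnreal hH.le]
      rfl
    exact hhold.continuous (by exact_mod_cast hα0)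
  -- measure space on the time axis
  set ν : Measure ℝ := volume.restrict (Set.Ioc (0:ℝ) M) with hν
  haveI hνfin : IsFiniteMeasure ν := by
    constructor
    rw [hν, Measure.restrict_apply_univ, Real.volume_Ioc]
    exact ENNReal.ofReal_lt_top
  have hνuniv : ν.real Set.univ = M := by
    rw [measureReal_def, hν, Measure.restrict_apply_univ, Real.volume_Ioc, sub_zero,
      ENNReal.toReal_ofReal hM.le]
  haveI : NeZero ν := by
    constructor
    intro h
    have h2 := hνuniv
    rw [h] at h2
    simp at h2
    linarith
  -- empirical pieces
  set Fe : Ω → ℝ → ℝ := fun ω t => empiricalCDF n (fun i => Ys i ω) t with hFe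
  have hFe01 : ∀ ω t, Fe ω t ∈ Set.Icc (0:ℝ) 1 := fun ω t => empiricalCDF_mem n hn _ t
  have hFemeas_t : ∀ ω, Measurable (Fe ω) := fun ω => (empiricalCDF_mono n _).measurable
  set g : Ω → ℝ → ℝ := fun ω t => Fe ω t - F t with hg
  have hgbd : ∀ ω t, |g ω t| ≤ 1 := by
    intro ω t
    have h1 := hFe01 ω t
    have h2 := hF01 t
    rw [abs_le]
    constructor
    · simp only [hg]; linarith [h1.1, h2.2]
    · simp only [hg]; linarith [h1.2, h2.1]
  have hgtmeas : ∀ ω, Measurable fun t => |g ω t| :=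
    fun ω => ((hFemeas_t ω).sub hFmeas).abs
  set W : Ω → ℝ := fun ω => ∫ t in Set.Ioc (0:ℝ) M, |g ω t| with hW
  have hWnn : ∀ ω, 0 ≤ W ω := by
    intro ω
    apply integral_nonneg
    intro t; positivity
  -- integrands
  have hint1 : Integrable (fun t => wc (1 - F t)) ν := by
    apply integrable_of_bounded_meas
      ((hwc_cont.measurable.comp (measurable_const.sub hFmeas) :
        Measurable fun t => wc (1 - F t))) 1
    intro t
    show |wc (1 - F t)| ≤ 1
    rw [abs_le]
    exact ⟨by linarith [(hwc01 (1 - F t)).1], (hwc01 (1 - F t)).2⟩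
  have hint2 : ∀ ω, Integrable (fun t => wc (1 - Fe ω t)) ν := by
    intro ω
    apply integrable_of_bounded_meas
      ((hwc_cont.measurable.comp (measurable_const.sub (hFemeas_t ω)) :
        Measurable fun t => wc (1 - Fe ω t))) 1
    intro t
    show |wc (1 - Fe ω t)| ≤ 1
    rw [abs_le]
    exact ⟨by linarith [(hwc01 (1 - Fe ω t)).1], (hwc01 (1 - Fe ω t)).2⟩
  have hint3 : ∀ ω, Integrable (fun t => |g ω t|) ν := by
    intro ω
    apply integrable_of_bounded_meas (hgtmeas ω) 1
    intro t
    rw [abs_abs]; exact hgbd ω t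
  have hrpow_cont : Continuous fun z : ℝ => z ^ α :=
    continuous_iff_continuousAt.mpr fun z => Real.continuousAt_rpow_const z α (Or.inr hα0.le)
  have hint4 : ∀ ω, Integrable (fun t => |g ω t| ^ α) ν := by
    intro ω
    apply integrable_of_bounded_meas
      ((hrpow_cont.measurable.comp (hgtmeas ω) : Measurable fun t => |g ω t| ^ α)) 1
    intro t
    show |(|g ω t| ^ α)| ≤ 1
    rw [abs_of_nonneg (Real.rpow_nonneg (abs_nonneg _) _)]
    exact Real.rpow_le_one (abs_nonneg _) (hgbd ω t) hα0.le
  -- rewrite the two integrals via wc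
  have hAeq : (∫ t in Set.Ioc (0:ℝ) M, w ((μ {ω' | Y ω' > t}).toReal))
      = ∫ t in Set.Ioc (0:ℝ) M, wc (1 - F t) := by
    apply integral_congr_ae
    apply ae_of_all
    intro t
    show w ((μ {ω' | Y ω' > t}).toReal) = wc (1 - F t)
    rw [hFb t, hwc_eq _ ⟨by linarith [(hF01 t).2], by linarith [(hF01 t).1]⟩]
  have hBeq : ∀ ω, (∫ t in Set.Ioc (0:ℝ) M, w (1 - empiricalCDF n (fun i => Ys i ω) t))
      = ∫ t in Set.Ioc (0:ℝ) M, wc (1 - Fe ω t) := by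
    intro ω
    apply integral_congr_ae
    apply ae_of_all
    intro t
    show w (1 - empiricalCDF n (fun i => Ys i ω) t) = wc (1 - Fe ω t)
    rw [hwc_eq _ ⟨by linarith [(hFe01 ω t).2], by linarith [(hFe01 ω t).1]⟩]
  -- deterministic bound
  have hdet : ∀ ω, |(∫ t in Set.Ioc (0:ℝ) M, w ((μ {ω' | Y ω' > t}).toReal))
      - ∫ t in Set.Ioc (0:ℝ) M, w (1 - empiricalCDF n (fun i => Ys i ω) t)|
      ≤ H * (M ^ ((1:ℝ) - α) * W ω ^ α) := by
    intro ω
    rw [hAeq, hBeq ω]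
    have hptw : ∀ t, |wc (1 - F t) - wc (1 - Fe ω t)| ≤ H * |g ω t| ^ α := by
      intro t
      have := hwc_holder (1 - F t) (1 - Fe ω t)
      have harg : |(1 - F t) - (1 - Fe ω t)| = |g ω t| := by
        rw [show (1 - F t) - (1 - Fe ω t) = Fe ω t - F t from by ring]
      rwa [harg] at this
    have step1 : |(∫ t, wc (1 - F t) ∂ν) - ∫ t, wc (1 - Fe ω t) ∂ν|
        ≤ ∫ t, |wc (1 - F t) - wc (1 - Fe ω t)| ∂ν := by
      rw [← integral_sub hint1 (hint2 ω)]
      simpa [Real.norm_eq_abs] using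
        norm_integral_le_integral_norm (fun t => wc (1 - F t) - wc (1 - Fe ω t)) (μ := ν)
    have step2 : ∫ t, |wc (1 - F t) - wc (1 - Fe ω t)| ∂ν ≤ ∫ t, H * |g ω t| ^ α ∂ν := by
      apply integral_mono _ ((hint4 ω).const_mul H) hptw
      apply integrable_of_bounded_meas
        (((hwc_cont.measurable.comp (measurable_const.sub hFmeas) :
            Measurable fun t => wc (1 - F t)).sub
          (hwc_cont.measurable.comp (measurable_const.sub (hFemeas_t ω)) :
            Measurable fun t => wc (1 - Fe ω t))).abs) 2
      intro t
      show |(|wc (1 - F t) - wc (1 - Fe ω t)|)| ≤ 2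
      rw [abs_abs]
      have h1 := hwc01 (1 - F t); have h2 := hwc01 (1 - Fe ω t)
      rw [abs_le]
      constructor <;> [linarith [h1.1, h2.2]; linarith [h1.2, h2.1]]
    have step3 : ∫ t, H * |g ω t| ^ α ∂ν ≤ H * (M ^ ((1:ℝ) - α) * W ω ^ α) := by
      rw [integral_const_mul]
      apply mul_le_mul_of_nonneg_left _ hH.le
      -- Jensen for concave rpow
      have hconc := Real.concaveOn_rpow hα0.le hα1
      have hcontOn : ContinuousOn (fun z : ℝ => z ^ α) (Set.Ici 0) := by
        intro z _
        exact (Real.continuousAt_rpow_const z α (Or.inr hα0.le)).continuousWithinAt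
      have hjensen := hconc.le_map_average hcontOn isClosed_Ici
        (ae_of_all _ fun t => Set.mem_Ici.mpr (abs_nonneg (g ω t))) (hint3 ω)
        (by
          show Integrable ((fun z : ℝ => z ^ α) ∘ fun t => |g ω t|) ν
          exact hint4 ω)
      -- hjensen : ⨍ |g|^α ≤ (⨍ |g|)^α
      have havg1 : (⨍ t, |g ω t| ∂ν) = M⁻¹ * W ω := by
        rw [average_eq, hνuniv, smul_eq_mul, hW]
      have havg2 : (∫ t, |g ω t| ^ α ∂ν) = M * ⨍ t, |g ω t| ^ α ∂ν := by
        rw [average_eq, hνuniv, smul_eq_mul, ← mul_assoc, mul_inv_cancel₀ hM.ne', one_mul]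
      rw [havg2]
      calc M * ⨍ t, |g ω t| ^ α ∂ν ≤ M * (⨍ t, |g ω t| ∂ν) ^ α :=
            mul_le_mul_of_nonneg_left hjensen hM.le
        _ = M * (M⁻¹ * W ω) ^ α := by rw [havg1]
        _ = M ^ ((1:ℝ) - α) * W ω ^ α := by
            have hsub : M ^ ((1:ℝ) - α) = M / M ^ α := by
              rw [Real.rpow_sub hM, Real.rpow_one]
            rw [Real.mul_rpow (inv_nonneg.mpr hM.le) (hWnn ω), Real.inv_rpow hM.le, hsub,
              div_mul_eq_mul_div, eq_div_iff (Real.rpow_pos_of_pos hM α).ne']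
            field_simp
    calc |(∫ t, wc (1 - F t) ∂ν) - ∫ t, wc (1 - Fe ω t) ∂ν|
        ≤ ∫ t, |wc (1 - F t) - wc (1 - Fe ω t)| ∂ν := step1
      _ ≤ ∫ t, H * |g ω t| ^ α ∂ν := step2
      _ ≤ H * (M ^ ((1:ℝ) - α) * W ω ^ α) := step3
  -- event inclusion
  have hsub : {ω | |(∫ t in Set.Ioc (0:ℝ) M, w ((μ {ω' | Y ω' > t}).toReal))
      - ∫ t in Set.Ioc (0:ℝ) M, w (1 - empiricalCDF n (fun i => Ys i ω) t)| > ε}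
      ⊆ {ω | M * δ ≤ ∫ t in Set.Ioc (0:ℝ) M,
          |empiricalCDF n (fun i => Ys i ω) t - (μ {ω' | Y ω' ≤ t}).toReal|} := by
    intro ω hω
    simp only [Set.mem_setOf_eq] at hω ⊢
    have h1 : ε < H * (M ^ ((1:ℝ) - α) * W ω ^ α) := lt_of_lt_of_le hω (hdet ω)
    have hMα : (0:ℝ) < M ^ α := Real.rpow_pos_of_pos hM α
    have h2 : x * M ^ α ≤ W ω ^ α := by
      have hc : (0:ℝ) < H * M ^ ((1:ℝ) - α) :=
        mul_pos hH (Real.rpow_pos_of_pos hM _)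
      have hprodM : M ^ α * M ^ ((1:ℝ) - α) = M := by
        rw [← Real.rpow_add hM]
        norm_num
      have hεeq : x * M ^ α * (H * M ^ ((1:ℝ) - α)) = ε := by
        calc x * M ^ α * (H * M ^ ((1:ℝ) - α))
            = (ε / (H * M)) * H * (M ^ α * M ^ ((1:ℝ) - α)) := by rw [hxdef]; ring
          _ = (ε / (H * M)) * H * M := by rw [hprodM]
          _ = ε := by field_simp
      have h3 : x * M ^ α * (H * M ^ ((1:ℝ) - α)) < W ω ^ α * (H * M ^ ((1:ℝ) - α)) := by
        calc x * M ^ α * (H * M ^ ((1:ℝ) - α)) = ε := hεeq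
          _ < H * (M ^ ((1:ℝ) - α) * W ω ^ α) := h1
          _ = W ω ^ α * (H * M ^ ((1:ℝ) - α)) := by ring
      exact (lt_of_mul_lt_mul_right h3 hc.le).le
    have h4 : M * δ ≤ W ω := by
      have h5 : (x * M ^ α) ^ (1/α) ≤ (W ω ^ α) ^ (1/α) :=
        Real.rpow_le_rpow (by positivity) h2 (by positivity)
      have h6 : (W ω ^ α) ^ (1/α) = W ω := by
        rw [← Real.rpow_mul (hWnn ω), mul_one_div, div_self hαne, Real.rpow_one]
      have h7 : (x * M ^ α) ^ (1/α) = δ * M := by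
        rw [Real.mul_rpow hx0.le hMα.le, ← Real.rpow_mul hM.le, mul_one_div,
          div_self hαne, Real.rpow_one, hδdef]
      rw [h6, h7] at h5
      linarith
    exact h4
  -- conclude
  have hδ2 : δ ^ 2 = x ^ (2 / α) := by
    rw [hδdef, ← Real.rpow_natCast (x ^ (1/α)) 2, ← Real.rpow_mul hx0.le]
    norm_num
    rw [show (α⁻¹ * 2 : ℝ) = 2 / α from by ring]
  calc (μ {ω | |(∫ t in Set.Ioc (0:ℝ) M, w ((μ {ω' | Y ω' > t}).toReal))
          - ∫ t in Set.Ioc (0:ℝ) M,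
              w (1 - empiricalCDF n (fun i => Ys i ω) t)| > ε}).toReal
      ≤ (μ {ω | M * δ ≤ ∫ t in Set.Ioc (0:ℝ) M,
          |empiricalCDF n (fun i => Ys i ω) t - (μ {ω' | Y ω' ≤ t}).toReal|}).toReal :=
        ENNReal.toReal_mono (measure_ne_top _ _) (measure_mono hsub)
    _ ≤ 2 * Real.exp (-2 * n * δ ^ 2) :=
        W_concentration μ M hM Y hYmeas n hn Ys hYsmeas hindep hident' δ hδ0.le
    _ = 2 * Real.exp (-2 * n * (ε / (H * M)) ^ (2 / α)) := by rw [hδ2, hxdef]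
end
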